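/- arXiv:1201.3474 — 2 statements merged into one kernel-verified Lean document; each statement's English description precedes it below -/
import Mathlib

section
/- Superharmonic function characterization: for (b,0) connected, Q^{(D)} is recurrent if and only if every superharmonic function of finite energy is constant, i.e. every u with Q̃(u) < ∞ and L̃u ≥ 0 pointwise is constant. -/
open scoped ENNReal NNReal BigOperators
open MeasureTheory Filter

/-- A weighted graph `(b,c)` over a vertex set `V`. -/
structure WeightedGraph (V : Type*) where
  b : V → V → ℝ
  c : V → ℝ
  b_nonneg : ∀ x y, 0 ≤ b x y
  b_diag : ∀ x, b x x = 0
  b_symm : ∀ x y, b x y = b y x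
  b_summable : ∀ x, Summable fun y => b x y
  c_nonneg : ∀ x, 0 ≤ c x

/-- Membership in `ℓ²(V,m)`. -/
def MemL2 {V : Type*} (m : V → ℝ) (u : V → ℝ) : Prop :=
  Summable fun x => u x ^ 2 * m x

/-- The inner product of `ℓ²(V,m)`. -/
noncomputable def l2inner {V : Type*} (m : V → ℝ) (u v : V → ℝ) : ℝ :=
  ∑' x, u x * v x * m x

namespace WeightedGraph

variable {V : Type*} (G : WeightedGraph V)

/-- The energy functional `Q̃` with values in `[0,∞]`. -/
noncomputable def energy (u : V → ℝ) : ℝ≥0∞ :=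
  (1 / 2) * ∑' p : V × V, ENNReal.ofReal (G.b p.1 p.2 * (u p.1 - u p.2) ^ 2)
    + ∑' x, ENNReal.ofReal (G.c x * u x ^ 2)

/-- The functions of finite energy (`D̃`). -/
def FiniteEnergy (u : V → ℝ) : Prop := G.energy u < ⊤

/-- The real-valued bilinear energy form (meaningful on functions of finite energy). -/
noncomputable def energyBilin (u v : V → ℝ) : ℝ :=
  (1 / 2) * ∑' p : V × V, G.b p.1 p.2 * (u p.1 - u p.2) * (v p.1 - v p.2)
    + ∑' x, G.c x * u x * v x

/-- The generalized vertex degree. -/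
noncomputable def deg (x : V) : ℝ := (∑' y, G.b x y) + G.c x

/-- The formal Laplacian `L̃` associated with `(b,c)` and the measure `m`. -/
noncomputable def formalL (m : V → ℝ) (u : V → ℝ) (x : V) : ℝ :=
  ((∑' y, G.b x y * (u x - u y)) + G.c x * u x) / m x

/-- Connectedness of the weighted graph: any two vertices are joined by a path of edges. -/
def Connected : Prop :=
  ∀ x y : V, ∃ (n : ℕ) (p : ℕ → V), p 0 = x ∧ p n = y ∧ ∀ i < n, 0 < G.b (p i) (p (i + 1))

/-- The squared distance of the Yamasaki space with base point `o`. -/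
noncomputable def ydistSq (o : V) (u v : V → ℝ) : ℝ :=
  (G.energy (fun x => u x - v x)).toReal + (u o - v o) ^ 2

/-- The domain of the regular Dirichlet form `Q^(D)`: the closure of the finitely
supported functions in `D̃ ∩ ℓ²(V,m)` with respect to the form norm. -/
def regDom (m : V → ℝ) : Set (V → ℝ) :=
  {u | G.FiniteEnergy u ∧ MemL2 m u ∧
    ∃ f : ℕ → V → ℝ, (∀ n, (Function.support (f n)).Finite) ∧
      Filter.Tendsto
        (fun n => (G.energy (fun x => u x - f n x)).toReal + ∑' x, (u x - f n x) ^ 2 * m x)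
        Filter.atTop (nhds 0)}

/-- Transience of a Dirichlet form given by its domain: existence of a strictly positive
reference function `g ∈ ℓ¹(V,m) ∩ ℓ^∞(V)` with `⟨|u|,g⟩ ≤ Q(u)^{1/2}` on the domain. -/
def FormTransient (m : V → ℝ) (dom : Set (V → ℝ)) : Prop :=
  ∃ g : V → ℝ, (∀ x, 0 < g x) ∧ (Summable fun x => g x * m x) ∧ (∃ C, ∀ x, g x ≤ C) ∧
    ∀ u ∈ dom, ∑' x, |u x| * g x * m x ≤ Real.sqrt (G.energyBilin u u)

end WeightedGraph

/-- The data of a Dirichlet form `Q` associated with a weighted graph `(b,c)` on `ℓ²(V,m)`,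
together with its semigroup `T t = e^{-tL}` and resolvent `R α = (L+α)^{-1}`, with the
standard properties: `Q` is a restriction of `Q̃` with `D(Q^(D)) ⊆ D(Q) ⊆ D(Q^(N))`,
the semigroup is symmetric, Markovian, positivity preserving, the resolvent is characterized
by the form, and the resolvent is the Laplace transform of the semigroup. -/
structure FormSetup {V : Type*} (G : WeightedGraph V) (m : V → ℝ) where
  dom : Set (V → ℝ)
  dom_fe : ∀ u ∈ dom, G.FiniteEnergy u
  dom_l2 : ∀ u ∈ dom, MemL2 m u
  reg_sub : G.regDom m ⊆ dom
  T : ℝ → (V → ℝ) → V → ℝ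
  R : ℝ → (V → ℝ) → V → ℝ
  T_linear : ∀ t, IsLinearMap ℝ (T t)
  R_linear : ∀ α, IsLinearMap ℝ (R α)
  T_semigroup : ∀ s t : ℝ, 0 < s → 0 < t → ∀ f, T (s + t) f = T s (T t f)
  T_l2 : ∀ t : ℝ, 0 < t → ∀ f, MemL2 m f → MemL2 m (T t f)
  T_symm : ∀ t : ℝ, 0 < t → ∀ f g, MemL2 m f → MemL2 m g →
    l2inner m (T t f) g = l2inner m f (T t g)
  T_contraction : ∀ t : ℝ, 0 < t → ∀ f, MemL2 m f →
    ∑' x, T t f x ^ 2 * m x ≤ ∑' x, f x ^ 2 * m x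
  T_pos : ∀ t : ℝ, 0 < t → ∀ f, (∀ x, 0 ≤ f x) → ∀ x, 0 ≤ T t f x
  T_markov : ∀ t : ℝ, 0 < t → ∀ f, (∀ x, 0 ≤ f x ∧ f x ≤ 1) →
    ∀ x, 0 ≤ T t f x ∧ T t f x ≤ 1
  T_cont : ∀ f, MemL2 m f → ∀ x, ContinuousOn (fun t => T t f x) (Set.Ioi (0 : ℝ))
  R_mem : ∀ α : ℝ, 0 < α → ∀ f, MemL2 m f → R α f ∈ dom
  R_pos : ∀ α : ℝ, 0 < α → ∀ f, (∀ x, 0 ≤ f x) → ∀ x, 0 ≤ R α f x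
  R_char : ∀ α : ℝ, 0 < α → ∀ f, MemL2 m f → ∀ v ∈ dom,
    G.energyBilin (R α f) v + α * l2inner m (R α f) v = l2inner m f v
  R_laplace : ∀ α : ℝ, 0 < α → ∀ f, MemL2 m f → (∀ x, 0 ≤ f x) → ∀ y,
    ENNReal.ofReal (R α f y) =
      ∫⁻ t in Set.Ioi (0 : ℝ), ENNReal.ofReal (Real.exp (-α * t) * T t f y)

namespace FormSetup

variable {V : Type*} {G : WeightedGraph V} {m : V → ℝ}

open scoped Classical in
/-- The Green function `G(x,y) = ∫₀^∞ (e^{-tL} δ_x)(y) dt`, with values in `[0,∞]`. -/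
noncomputable def green (S : FormSetup G m) (x y : V) : ℝ≥0∞ :=
  ∫⁻ t in Set.Ioi (0 : ℝ), ENNReal.ofReal (S.T t (fun z => if z = x then 1 else 0) y)

/-- The extended Dirichlet space `D(Q)_e`: functions which are pointwise limits of
`Q`-Cauchy sequences from `D(Q)`. -/
def extDom (S : FormSetup G m) : Set (V → ℝ) :=
  {u | ∃ f : ℕ → V → ℝ, (∀ n, f n ∈ S.dom) ∧
    (∀ ε > (0 : ℝ), ∃ N, ∀ p ≥ N, ∀ q ≥ N,
      G.energyBilin (fun x => f p x - f q x) (fun x => f p x - f q x) < ε) ∧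
    ∀ x, Filter.Tendsto (fun n => f n x) Filter.atTop (nhds (u x))}

/-- Stochastic completeness: the resolvent `(L+1)^{-1}`, extended to `ℓ^∞(V)` by monotone
limits, maps the constant function `1` to `1`. -/
def StochComplete (S : FormSetup G m) : Prop :=
  ∀ f : ℕ → V → ℝ, (∀ n, MemL2 m (f n)) →
    (∀ n x, 0 ≤ f n x ∧ f n x ≤ f (n + 1) x ∧ f n x ≤ 1) →
    (∀ x, Filter.Tendsto (fun n => f n x) Filter.atTop (nhds 1)) →
    ∀ x, Filter.Tendsto (fun n => S.R 1 (f n) x) Filter.atTop (nhds 1)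

end FormSetup


namespace RSH

/-- Cauchy-Schwarz: summability of the cross term. -/
lemma cs_summable {ι : Type*} {w f g : ι → ℝ} (hw : ∀ i, 0 ≤ w i)
    (hf : Summable fun i => w i * f i ^ 2) (hg : Summable fun i => w i * g i ^ 2) :
    Summable fun i => w i * f i * g i := by
  have hb : Summable (fun i => (1/2) * (w i * f i ^ 2) + (1/2) * (w i * g i ^ 2)) :=
    (hf.mul_left _).add (hg.mul_left _)
  have hle : ∀ i, |w i * f i * g i| ≤ (1/2) * (w i * f i ^ 2) + (1/2) * (w i * g i ^ 2) := by
    intro i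
    have h1 : |w i * f i * g i| = w i * (|f i| * |g i|) := by
      rw [abs_mul, abs_mul, abs_of_nonneg (hw i)]; ring
    have h2 : |f i| * |g i| ≤ (1/2) * (f i ^ 2 + g i ^ 2) := by
      nlinarith [sq_nonneg (|f i| - |g i|), sq_abs (f i), sq_abs (g i)]
    have h3 : w i * (|f i| * |g i|) ≤ w i * ((1/2) * (f i ^ 2 + g i ^ 2)) :=
      mul_le_mul_of_nonneg_left h2 (hw i)
    rw [h1]; nlinarith [h3]
  exact Summable.of_abs (Summable.of_nonneg_of_le (fun i => abs_nonneg _) hle hb)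

/-- Cauchy-Schwarz inequality for weighted sums. -/
lemma cs_sq_le {ι : Type*} {w f g : ι → ℝ} (hw : ∀ i, 0 ≤ w i)
    (hf : Summable fun i => w i * f i ^ 2) (hg : Summable fun i => w i * g i ^ 2) :
    (∑' i, w i * f i * g i) ^ 2 ≤ (∑' i, w i * f i ^ 2) * (∑' i, w i * g i ^ 2) := by
  set A := ∑' i, w i * f i ^ 2 with hA
  set B := ∑' i, w i * f i * g i with hB
  set C := ∑' i, w i * g i ^ 2 with hC
  have key : ∀ t : ℝ, 0 ≤ C * (t * t) + (2 * B) * t + A := by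
    intro t
    have hsum : ∀ i, w i * (f i + t * g i) ^ 2
        = (w i * g i ^ 2) * (t * t) + (2 * (w i * f i * g i)) * t + w i * f i ^ 2 := by
      intro i; ring
    have hS : Summable fun i => w i * (f i + t * g i) ^ 2 := by
      simp_rw [hsum]
      exact ((hg.mul_right _).add (((cs_summable hw hf hg).mul_left 2).mul_right t)).add hf
    have h0 : 0 ≤ ∑' i, w i * (f i + t * g i) ^ 2 :=
      tsum_nonneg fun i => mul_nonneg (hw i) (sq_nonneg _)
    calc (0:ℝ) ≤ ∑' i, w i * (f i + t * g i) ^ 2 := h0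
    _ = C * (t * t) + (2 * B) * t + A := by
        simp_rw [hsum]
        rw [Summable.tsum_add (((hg.mul_right _).add (((cs_summable hw hf hg).mul_left 2).mul_right t)))
          hf, Summable.tsum_add (hg.mul_right _) (((cs_summable hw hf hg).mul_left 2).mul_right t),
          tsum_mul_right, tsum_mul_right, tsum_mul_left]
  have hd := discrim_le_zero key
  rw [discrim] at hd
  nlinarith [hd]

end RSH

namespace RSH
open WeightedGraph

variable {V : Type*} (G : WeightedGraph V)

/-- The pair-energy density. -/
def epair (u v : V → ℝ) : V × V → ℝ :=
  fun p => G.b p.1 p.2 * (u p.1 - u p.2) * (v p.1 - v p.2)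

lemma epair_nonneg_self (u : V → ℝ) (p : V × V) : 0 ≤ epair G u u p := by
  unfold epair
  nlinarith [G.b_nonneg p.1 p.2, sq_nonneg (u p.1 - u p.2)]

variable {G}

lemma epair_self_eq (u : V → ℝ) (p : V × V) :
    epair G u u p = G.b p.1 p.2 * (u p.1 - u p.2) ^ 2 := by
  unfold epair; ring

/-- With `c = 0`, the second part of the energy vanishes. -/
lemma energy_eq (hc : ∀ x, G.c x = 0) (u : V → ℝ) :
    G.energy u = (1/2 : ℝ≥0∞) * ∑' p : V × V, ENNReal.ofReal (epair G u u p) := by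
  unfold WeightedGraph.energy
  have h2 : (∑' x : V, ENNReal.ofReal (G.c x * u x ^ 2)) = 0 := by
    simp [hc]
  rw [h2, add_zero]
  congr 1
  exact tsum_congr fun p => by rw [epair_self_eq]

lemma finiteEnergy_iff (hc : ∀ x, G.c x = 0) {u : V → ℝ} :
    G.FiniteEnergy u ↔ Summable (epair G u u) := by
  unfold WeightedGraph.FiniteEnergy
  rw [energy_eq hc]
  constructor
  · intro h
    have h' : (∑' p : V × V, ENNReal.ofReal (epair G u u p)) ≠ ⊤ := by
      intro htop
      rw [htop] at h
      simp at h
    have : Summable fun p : V × V => (epair G u u p).toNNReal := by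
      rw [← ENNReal.tsum_coe_ne_top_iff_summable]
      exact h' 
    have h2 := NNReal.summable_coe.2 this
    refine h2.congr fun p => ?_
    simp [Real.coe_toNNReal _ (epair_nonneg_self G u p)]
  · intro h
    rw [← ENNReal.ofReal_tsum_of_nonneg (epair_nonneg_self G u) h]
    exact ENNReal.mul_lt_top (by norm_num) ENNReal.ofReal_lt_top

lemma energy_eq_ofReal (hc : ∀ x, G.c x = 0) {u : V → ℝ} (h : Summable (epair G u u)) :
    G.energy u = ENNReal.ofReal ((1/2) * ∑' p : V × V, epair G u u p) := by
  rw [energy_eq hc, ← ENNReal.ofReal_tsum_of_nonneg (epair_nonneg_self G u) h,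
    ENNReal.ofReal_mul (by norm_num)]
  congr 1
  rw [ENNReal.ofReal_div_of_pos] <;> norm_num

/-- Cross pair-energy is summable for two finite-energy functions. -/
lemma epair_summable (hu : Summable (epair G u u)) (hv : Summable (epair G v v)) :
    Summable (epair G u v) := by
  have := cs_summable (w := fun p : V × V => G.b p.1 p.2)
    (f := fun p : V × V => u p.1 - u p.2) (g := fun p : V × V => v p.1 - v p.2)
    (fun p => G.b_nonneg _ _) ?_ ?_
  · exact this
  · exact hu.congr fun p => (epair_self_eq u p)
  · exact hv.congr fun p => (epair_self_eq v p)

lemma energyBilin_eq (hc : ∀ x, G.c x = 0) (u v : V → ℝ) :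
    G.energyBilin u v = (1/2) * ∑' p : V × V, epair G u v p := by
  unfold WeightedGraph.energyBilin
  have h2 : (∑' x : V, G.c x * u x * v x) = 0 := by simp [hc]
  rw [h2, add_zero]
  rfl

lemma energyBilin_self_nonneg (hc : ∀ x, G.c x = 0) (u : V → ℝ) :
    0 ≤ G.energyBilin u u := by
  rw [energyBilin_eq hc]
  have : 0 ≤ ∑' p : V × V, epair G u u p := tsum_nonneg (epair_nonneg_self G u)
  linarith

lemma energyBilin_cs (hc : ∀ x, G.c x = 0) (hu : Summable (epair G u u))
    (hv : Summable (epair G v v)) :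
    (G.energyBilin u v) ^ 2 ≤ G.energyBilin u u * G.energyBilin v v := by
  rw [energyBilin_eq hc, energyBilin_eq hc, energyBilin_eq hc]
  have h := cs_sq_le (w := fun p : V × V => G.b p.1 p.2)
    (f := fun p : V × V => u p.1 - u p.2) (g := fun p : V × V => v p.1 - v p.2)
    (fun p => G.b_nonneg _ _)
    (hu.congr fun p => (epair_self_eq u p)) (hv.congr fun p => (epair_self_eq v p))
  have e1 : (∑' p : V × V, G.b p.1 p.2 * (u p.1 - u p.2) * (v p.1 - v p.2))
      = ∑' p : V × V, epair G u v p := rfl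
  have e2 : (∑' p : V × V, G.b p.1 p.2 * (u p.1 - u p.2) ^ 2) = ∑' p : V × V, epair G u u p :=
    tsum_congr fun p => (epair_self_eq u p).symm
  have e3 : (∑' p : V × V, G.b p.1 p.2 * (v p.1 - v p.2) ^ 2) = ∑' p : V × V, epair G v v p :=
    tsum_congr fun p => (epair_self_eq v p).symm
  rw [e1, e2, e3] at h
  nlinarith [h]

end RSH

namespace RSH
open WeightedGraph
open scoped Classical

variable {V : Type*} {G : WeightedGraph V}

/-- The Dirac function at `x`. -/
noncomputable def dirac (x : V) : V → ℝ := fun z => if z = x then 1 else 0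

lemma dirac_apply_self (x : V) : dirac x x = 1 := by simp [dirac]

lemma dirac_nonneg (x z : V) : 0 ≤ dirac x z := by unfold dirac; positivity

lemma dirac_ne_zero (x : V) : dirac x ≠ 0 := by
  intro h
  have := congrFun h x
  simp [dirac] at this

lemma dirac_support (x : V) : Function.support (dirac x) ⊆ {x} := by
  intro z hz
  by_contra h
  simp only [Set.mem_singleton_iff] at h
  exact hz (by simp [dirac, h])

lemma dirac_memL2 (m : V → ℝ) (x : V) : MemL2 m (dirac x) := by
  apply summable_of_ne_finset_zero (s := {x})
  intro z hz
  simp only [Finset.mem_singleton] at hz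
  simp [dirac, hz]

lemma summable_fixed_snd (G : WeightedGraph V) (y : V) : Summable fun x => G.b x y :=
  (G.b_summable y).congr fun x => (G.b_symm y x)

/-- Row summability of the squared differences. -/
lemma row_sq_summable (hu : Summable (epair G u u)) (z : V) :
    Summable fun y => G.b z y * (u z - u y) ^ 2 :=
  (hu.prod_factor z).congr fun y => epair_self_eq u (z, y)

lemma row_abs_summable (hu : Summable (epair G u u)) (z : V) :
    Summable fun y => G.b z y * |u z - u y| := by
  have h := cs_summable (w := fun y => G.b z y) (f := fun y => |u z - u y|)
    (g := fun _ => (1:ℝ)) (fun y => G.b_nonneg z y)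
    ((row_sq_summable hu z).congr fun y => by rw [sq_abs])
    (by simpa using G.b_summable z)
  exact (h.congr fun y => by ring).congr fun y => rfl

lemma row_summable (hu : Summable (epair G u u)) (z : V) :
    Summable fun y => G.b z y * (u z - u y) := by
  have h' : Summable fun y => |G.b z y * (u z - u y)| :=
    (row_abs_summable hu z).congr fun y => by
      rw [abs_mul, abs_of_nonneg (G.b_nonneg z y)]
  exact h'.of_abs

/-- The (numerator of the) formal Laplacian. -/
noncomputable def lap (G : WeightedGraph V) (u : V → ℝ) (z : V) : ℝ :=
  ∑' y, G.b z y * (u z - u y)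

lemma lap_eq_formalL (hc : ∀ x, G.c x = 0) (m : V → ℝ) (hm : ∀ x, 0 < m x)
    (u : V → ℝ) (z : V) : lap G u z = m z * G.formalL m u z := by
  unfold lap WeightedGraph.formalL
  rw [hc z, zero_mul, add_zero, mul_div_cancel₀ _ (ne_of_gt (hm z))]

/-- Finite support functions have summable pair energy. -/
lemma epair_self_summable_fs {v : V → ℝ} (hv : (Function.support v).Finite) :
    Summable (epair G v v) := by
  have hA : Summable fun p : V × V => G.b p.1 p.2 * v p.1 ^ 2 := by
    rw [summable_prod_of_nonneg
      (Pi.le_def.2 fun p => mul_nonneg (G.b_nonneg _ _) (sq_nonneg _))]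
    constructor
    · intro x
      exact ((G.b_summable x).mul_left (v x ^ 2)).congr fun y => by ring
    · apply summable_of_ne_finset_zero (s := hv.toFinset)
      intro x hx
      have hvx : v x = 0 := by
        by_contra h
        exact hx (hv.mem_toFinset.2 h)
      simp [hvx]
  have hB : Summable fun p : V × V => G.b p.1 p.2 * v p.2 ^ 2 := by
    rw [summable_prod_of_nonneg
      (Pi.le_def.2 fun p => mul_nonneg (G.b_nonneg _ _) (sq_nonneg _))]
    constructor
    · intro x
      apply summable_of_ne_finset_zero (s := hv.toFinset)
      intro y hy
      have hvy : v y = 0 := by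
        by_contra h
        exact hy (hv.mem_toFinset.2 h)
      simp [hvy]
    · have hrow : ∀ x, (∑' y, G.b x y * v y ^ 2) = ∑ y ∈ hv.toFinset, G.b x y * v y ^ 2 := by
        intro x
        apply tsum_eq_sum
        intro y hy
        have hvy : v y = 0 := by
          by_contra h
          exact hy (hv.mem_toFinset.2 h)
        simp [hvy]
      apply Summable.congr (f := fun x => ∑ y ∈ hv.toFinset, G.b x y * v y ^ 2)
      · apply summable_sum
        intro y _
        exact ((summable_fixed_snd G y).mul_right (v y ^ 2)).congr fun x => by ring
      · intro x; exact (hrow x).symm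
  have hbd : ∀ p : V × V, epair G v v p
      ≤ 2 * (G.b p.1 p.2 * v p.1 ^ 2) + 2 * (G.b p.1 p.2 * v p.2 ^ 2) := by
    intro p
    rw [epair_self_eq]
    nlinarith [G.b_nonneg p.1 p.2, sq_nonneg (v p.1 + v p.2), sq_nonneg (v p.1 - v p.2)]
  exact Summable.of_nonneg_of_le (epair_nonneg_self G v) hbd
    ((hA.mul_left 2).add (hB.mul_left 2))

lemma finiteEnergy_fs (hc : ∀ x, G.c x = 0) {v : V → ℝ}
    (hv : (Function.support v).Finite) : G.FiniteEnergy v :=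
  (finiteEnergy_iff hc).2 (epair_self_summable_fs hv)

end RSH

namespace RSH
open WeightedGraph
open scoped Classical

variable {V : Type*} {G : WeightedGraph V}

lemma dirac_support_finite (x : V) : (Function.support (dirac x : V → ℝ)).Finite :=
  (Set.finite_singleton x).subset (dirac_support x)

lemma epair_dirac_summable (hu : Summable (epair G u u)) (z : V) :
    Summable (epair G u (dirac z)) :=
  epair_summable hu (epair_self_summable_fs (dirac_support_finite z))

/-- The key splitting: pairing against a Dirac function gives the Laplacian. -/
lemma tsum_epair_dirac (hu : Summable (epair G u u)) (z : V) :
    ∑' p : V × V, epair G u (dirac z) p = 2 * lap G u z := by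
  set F := epair G u (dirac z) with hF_def
  have hF : Summable F := epair_dirac_summable hu z
  set F₁ : V × V → ℝ := fun p => if p.1 = z then F p else 0 with hF₁_def
  set F₂ : V × V → ℝ := fun p => if p.1 = z then 0 else F p with hF₂_def
  have hsplit : ∀ p, F p = F₁ p + F₂ p := by
    intro p
    by_cases h : p.1 = z <;> simp [hF₁_def, hF₂_def, h]
  have hF₁ : Summable F₁ := by
    have := hF.indicator {p : V × V | p.1 = z}
    refine this.congr fun p => ?_
    rw [Set.indicator_apply]
    by_cases h : p.1 = z <;> simp [hF₁_def, h, Set.mem_setOf_eq]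
  have hF₂ : Summable F₂ := by
    refine (hF.sub hF₁).congr fun p => ?_
    by_cases h : p.1 = z <;> simp [hF₁_def, hF₂_def, h]
  have htsum : ∑' p, F p = (∑' p, F₁ p) + ∑' p, F₂ p := by
    rw [← Summable.tsum_add hF₁ hF₂]
    exact tsum_congr hsplit
  have h1 : ∑' p, F₁ p = lap G u z := by
    rw [Summable.tsum_prod' hF₁ (fun a => by
      by_cases h : a = z
      · subst h
        exact (hF.prod_factor a).congr fun b => by simp [hF₁_def]
      · exact summable_zero.congr fun b => by simp [hF₁_def, h])]
    rw [tsum_eq_single z (fun a ha =>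
      (tsum_congr (fun b => show F₁ (a, b) = 0 by simp [hF₁_def, ha])).trans tsum_zero)]
    unfold lap
    apply tsum_congr
    intro y
    by_cases hy : y = z
    · subst hy
      simp [hF₁_def, hF_def, epair, G.b_diag]
    · simp only [hF₁_def, if_pos rfl, hF_def, epair, dirac, if_neg hy,
        eq_self_iff_true, if_true]
      ring
  have h2 : ∑' p, F₂ p = lap G u z := by
    have hswap : ∑' p : V × V, F₂ p = ∑' p : V × V, F₂ ((Equiv.prodComm V V) p) :=
      ((Equiv.prodComm V V).tsum_eq F₂).symm
    rw [hswap]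
    have hF₂' : Summable fun p : V × V => F₂ ((Equiv.prodComm V V) p) :=
      ((Equiv.prodComm V V).summable_iff).2 hF₂
    rw [Summable.tsum_prod' hF₂' (fun a => by
      by_cases h : a = z
      · subst h
        exact (hF₂'.prod_factor a).congr fun b => rfl
      · exact summable_zero.congr fun b => by
          simp only [Equiv.prodComm_apply, Prod.swap_prod_mk, hF₂_def, hF_def, epair, dirac]
          by_cases hb : b = z
          · simp [hb]
          · simp [hb, h])]
    rw [tsum_eq_single z (fun a ha =>
      (tsum_congr (fun b => show F₂ ((Equiv.prodComm V V) (a, b)) = 0 by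
        simp only [Equiv.prodComm_apply, Prod.swap_prod_mk, hF₂_def, hF_def, epair, dirac]
        by_cases hb : b = z
        · simp [hb]
        · simp [hb, ha])).trans tsum_zero)]
    unfold lap
    apply tsum_congr
    intro y
    by_cases hy : y = z
    · subst hy
      simp [hF₂_def, hF_def, epair, G.b_diag]
    · simp only [Equiv.prodComm_apply, Prod.swap_prod_mk, hF₂_def, hF_def, epair, dirac,
        if_neg hy, eq_self_iff_true, if_true]
      rw [G.b_symm y z]
      ring
  rw [htsum, h1, h2]
  ring

lemma energyBilin_dirac (hc : ∀ x, G.c x = 0) (hu : Summable (epair G u u)) (z : V) :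
    G.energyBilin u (dirac z) = lap G u z := by
  rw [energyBilin_eq hc, tsum_epair_dirac hu z]
  ring

end RSH

namespace RSH
open WeightedGraph
open scoped Classical

variable {V : Type*} {G : WeightedGraph V}

lemma epair_comm (u v : V → ℝ) (p : V × V) : epair G u v p = epair G v u p := by
  unfold epair; ring

lemma epair_add_right (u v w : V → ℝ) (p : V × V) :
    epair G u (fun x => v x + w x) p = epair G u v p + epair G u w p := by
  unfold epair; ring

lemma epair_sub_right (u v w : V → ℝ) (p : V × V) :
    epair G u (fun x => v x - w x) p = epair G u v p - epair G u w p := by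
  unfold epair; ring

lemma epair_smul_right (u v : V → ℝ) (r : ℝ) (p : V × V) :
    epair G u (fun x => r * v x) p = r * epair G u v p := by
  unfold epair; ring

lemma epair_self_add_summable {u v : V → ℝ} (hu : Summable (epair G u u))
    (hv : Summable (epair G v v)) : Summable (epair G (fun x => u x + v x) (fun x => u x + v x)) := by
  have h : ∀ p, epair G (fun x => u x + v x) (fun x => u x + v x) p
      = epair G u u p + 2 * epair G u v p + epair G v v p := by
    intro p; unfold epair; ring
  exact (((hu.add ((epair_summable hu hv).mul_left 2)).add hv).congr fun p => (h p).symm)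

lemma epair_self_sub_summable {u v : V → ℝ} (hu : Summable (epair G u u))
    (hv : Summable (epair G v v)) : Summable (epair G (fun x => u x - v x) (fun x => u x - v x)) := by
  have h : ∀ p, epair G (fun x => u x - v x) (fun x => u x - v x) p
      = epair G u u p - 2 * epair G u v p + epair G v v p := by
    intro p; unfold epair; ring
  exact (((hu.sub ((epair_summable hu hv).mul_left 2)).add hv).congr fun p => (h p).symm)

lemma epair_self_smul_summable {u : V → ℝ} (hu : Summable (epair G u u)) (r : ℝ) :
    Summable (epair G (fun x => r * u x) (fun x => r * u x)) := by
  have h : ∀ p, epair G (fun x => r * u x) (fun x => r * u x) p = (r * r) * epair G u u p := by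
    intro p; unfold epair; ring
  exact (hu.mul_left (r * r)).congr fun p => (h p).symm

/-- Contractions decrease the pair energy termwise. -/
lemma epair_contraction {u : V → ℝ} {C : ℝ → ℝ} (hC : ∀ a b, |C a - C b| ≤ |a - b|)
    (p : V × V) : epair G (fun x => C (u x)) (fun x => C (u x)) p ≤ epair G u u p := by
  rw [epair_self_eq, epair_self_eq]
  apply mul_le_mul_of_nonneg_left _ (G.b_nonneg _ _)
  calc (C (u p.1) - C (u p.2)) ^ 2 = |C (u p.1) - C (u p.2)| ^ 2 := (sq_abs _).symm
  _ ≤ |u p.1 - u p.2| ^ 2 := by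
      apply pow_le_pow_left₀ (abs_nonneg _) (hC _ _)
  _ = (u p.1 - u p.2) ^ 2 := sq_abs _

lemma epair_contraction_summable {u : V → ℝ} (hu : Summable (epair G u u))
    {C : ℝ → ℝ} (hC : ∀ a b, |C a - C b| ≤ |a - b|) :
    Summable (epair G (fun x => C (u x)) (fun x => C (u x))) :=
  Summable.of_nonneg_of_le (epair_nonneg_self G _) (epair_contraction hC) hu

lemma tsum_epair_contraction_le {u : V → ℝ} (hu : Summable (epair G u u))
    {C : ℝ → ℝ} (hC : ∀ a b, |C a - C b| ≤ |a - b|) :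
    ∑' p, epair G (fun x => C (u x)) (fun x => C (u x)) p ≤ ∑' p, epair G u u p :=
  Summable.tsum_le_tsum (epair_contraction hC) (epair_contraction_summable hu hC) hu

lemma energyBilin_add_right (hc : ∀ x, G.c x = 0) {u v w : V → ℝ}
    (hu : Summable (epair G u u)) (hv : Summable (epair G v v))
    (hw : Summable (epair G w w)) :
    G.energyBilin u (fun x => v x + w x)
      = G.energyBilin u v + G.energyBilin u w := by
  rw [energyBilin_eq hc, energyBilin_eq hc, energyBilin_eq hc]
  rw [tsum_congr (epair_add_right u v w), Summable.tsum_add (epair_summable hu hv) (epair_summable hu hw)]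
  ring

lemma energyBilin_smul_right (hc : ∀ x, G.c x = 0) {u v : V → ℝ} (r : ℝ) :
    G.energyBilin u (fun x => r * v x) = r * G.energyBilin u v := by
  rw [energyBilin_eq hc, energyBilin_eq hc]
  rw [tsum_congr (epair_smul_right u v r), tsum_mul_left]
  ring

lemma support_finsetsum_subset (s : Finset V) (co : V → ℝ) :
    (Function.support fun x => ∑ z ∈ s, co z * dirac z x) ⊆ ↑s := by
  intro x hx
  by_contra hxs
  apply hx
  apply Finset.sum_eq_zero
  intro z hz
  have : x ≠ z := by
    rintro rfl
    exact hxs hz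
  simp [dirac, this]

/-- Green's formula for finitely supported test functions. -/
lemma green_formula (hc : ∀ x, G.c x = 0) {u : V → ℝ} (hu : Summable (epair G u u))
    {v : V → ℝ} (hv : (Function.support v).Finite) :
    G.energyBilin u v = ∑ z ∈ hv.toFinset, v z * lap G u z := by
  have key : ∀ s : Finset V, ∀ co : V → ℝ,
      G.energyBilin u (fun x => ∑ z ∈ s, co z * dirac z x) = ∑ z ∈ s, co z * lap G u z := by
    intro s
    induction s using Finset.induction_on with
    | empty => intro co; simp [energyBilin_eq hc, epair]
    | @insert a s ha ih =>
      intro co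
      have hfs : Summable (epair G (fun x => ∑ z ∈ s, co z * dirac z x)
          (fun x => ∑ z ∈ s, co z * dirac z x)) :=
        epair_self_summable_fs ((s.finite_toSet).subset (support_finsetsum_subset s co))
      have hda : Summable (epair G (fun x => co a * dirac a x) (fun x => co a * dirac a x)) :=
        epair_self_summable_fs ((Set.finite_singleton a).subset (by
          intro x hx
          apply dirac_support a
          intro h0
          apply hx
          simp [h0]))
      have hrw : (fun x => ∑ z ∈ insert a s, co z * dirac z x)
          = fun x => (co a * dirac a x) + ∑ z ∈ s, co z * dirac z x := by
        funext x
        rw [Finset.sum_insert ha]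
      rw [hrw, energyBilin_add_right hc hu hda hfs, Finset.sum_insert ha, ih co]
      congr 1
      have : (fun x => co a * dirac a x) = fun x => co a * dirac a x := rfl
      rw [energyBilin_smul_right hc, energyBilin_dirac hc hu]
  have hveq : v = fun x => ∑ z ∈ hv.toFinset, v z * dirac z x := by
    funext x
    by_cases hx : v x = 0
    · rw [hx]
      symm
      apply Finset.sum_eq_zero
      intro z hz
      by_cases hxz : x = z
      · subst hxz
        rw [hv.mem_toFinset] at hz
        exact absurd hx hz
      · have hd : dirac z x = 0 := by
          unfold dirac
          rw [if_neg hxz]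
        rw [hd, mul_zero]
    · rw [Finset.sum_eq_single x]
      · simp [dirac]
      · intro z _ hzx
        have hd : dirac z x = 0 := by
          unfold dirac
          rw [if_neg (fun h => hzx h.symm)]
        rw [hd, mul_zero]
      · intro hxin
        exact absurd (hv.mem_toFinset.2 hx) hxin
  nth_rewrite 1 [hveq]
  exact key _ v

lemma l2inner_dirac_right (m : V → ℝ) (f : V → ℝ) (x : V) :
    l2inner m f (dirac x) = f x * m x := by
  unfold l2inner
  rw [tsum_eq_single x (fun z hz => by simp [dirac, hz])]
  simp [dirac]

lemma l2inner_dirac_left (m : V → ℝ) (f : V → ℝ) (x : V) :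
    l2inner m (dirac x) f = f x * m x := by
  unfold l2inner
  rw [tsum_eq_single x (fun z hz => by simp [dirac, hz])]
  simp [dirac]

lemma l2inner_self_nonneg (m : V → ℝ) (hm : ∀ x, 0 ≤ m x) (f : V → ℝ) :
    0 ≤ l2inner m f f :=
  tsum_nonneg fun x => mul_nonneg (mul_self_nonneg _) (hm x)

/-- Cauchy-Schwarz in sqrt form. -/
lemma energyBilin_le_sqrt (hc : ∀ x, G.c x = 0) {u v : V → ℝ}
    (hu : Summable (epair G u u)) (hv : Summable (epair G v v)) :
    G.energyBilin u v ≤ Real.sqrt (G.energyBilin u u) * Real.sqrt (G.energyBilin v v) := by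
  have h := energyBilin_cs hc hu hv
  have h1 : G.energyBilin u v ≤ |G.energyBilin u v| := le_abs_self _
  have h2 : |G.energyBilin u v| = Real.sqrt ((G.energyBilin u v) ^ 2) :=
    (Real.sqrt_sq_eq_abs _).symm
  rw [h2] at h1
  refine h1.trans ?_
  calc Real.sqrt ((G.energyBilin u v) ^ 2) ≤ Real.sqrt (G.energyBilin u u * G.energyBilin v v) :=
    Real.sqrt_le_sqrt h
  _ = Real.sqrt (G.energyBilin u u) * Real.sqrt (G.energyBilin v v) :=
    Real.sqrt_mul (energyBilin_self_nonneg hc u) _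

/-- Triangle inequality for the square root of the energy. -/
lemma sqrt_energyBilin_triangle (hc : ∀ x, G.c x = 0) {u v : V → ℝ}
    (hu : Summable (epair G u u)) (hv : Summable (epair G v v)) :
    Real.sqrt (G.energyBilin (fun x => u x + v x) (fun x => u x + v x))
      ≤ Real.sqrt (G.energyBilin u u) + Real.sqrt (G.energyBilin v v) := by
  have hexp : G.energyBilin (fun x => u x + v x) (fun x => u x + v x)
      = G.energyBilin u u + 2 * G.energyBilin u v + G.energyBilin v v := by
    rw [energyBilin_eq hc, energyBilin_eq hc, energyBilin_eq hc, energyBilin_eq hc]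
    have h : ∀ p, epair G (fun x => u x + v x) (fun x => u x + v x) p
        = epair G u u p + 2 * epair G u v p + epair G v v p := by
      intro p; unfold epair; ring
    rw [tsum_congr h, Summable.tsum_add (hu.add ((epair_summable hu hv).mul_left 2)) hv,
      Summable.tsum_add hu ((epair_summable hu hv).mul_left 2), tsum_mul_left]
    ring
  have hcs := energyBilin_le_sqrt hc hu hv
  have hs1 : 0 ≤ Real.sqrt (G.energyBilin u u) := Real.sqrt_nonneg _
  have hs2 : 0 ≤ Real.sqrt (G.energyBilin v v) := Real.sqrt_nonneg _
  have hq1 : Real.sqrt (G.energyBilin u u) ^ 2 = G.energyBilin u u :=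
    Real.sq_sqrt (energyBilin_self_nonneg hc u)
  have hq2 : Real.sqrt (G.energyBilin v v) ^ 2 = G.energyBilin v v :=
    Real.sq_sqrt (energyBilin_self_nonneg hc v)
  have hle : G.energyBilin (fun x => u x + v x) (fun x => u x + v x)
      ≤ (Real.sqrt (G.energyBilin u u) + Real.sqrt (G.energyBilin v v)) ^ 2 := by
    rw [hexp]
    nlinarith [hcs, hq1, hq2]
  calc Real.sqrt (G.energyBilin (fun x => u x + v x) (fun x => u x + v x))
      ≤ Real.sqrt ((Real.sqrt (G.energyBilin u u) + Real.sqrt (G.energyBilin v v)) ^ 2) :=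
        Real.sqrt_le_sqrt hle
  _ = Real.sqrt (G.energyBilin u u) + Real.sqrt (G.energyBilin v v) :=
        Real.sqrt_sq (by positivity)

end RSH

namespace RSH
open WeightedGraph
open scoped Classical

variable {V : Type*} {G : WeightedGraph V}

lemma energy_zero : G.energy (fun _ => (0:ℝ)) = 0 := by
  unfold WeightedGraph.energy
  simp

lemma memL2_fs {m : V → ℝ} {v : V → ℝ} (hv : (Function.support v).Finite) : MemL2 m v := by
  apply summable_of_ne_finset_zero (s := hv.toFinset)
  intro x hx
  have : v x = 0 := by
    by_contra h
    exact hx (hv.mem_toFinset.2 h)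
  simp [this]

lemma fs_mem_regDom (hc : ∀ x, G.c x = 0) (m : V → ℝ) {v : V → ℝ}
    (hv : (Function.support v).Finite) : v ∈ G.regDom m := by
  refine ⟨finiteEnergy_fs hc hv, memL2_fs hv, fun _ => v, fun _ => hv, ?_⟩
  have : ∀ n : ℕ, (G.energy (fun x => v x - v x)).toReal + ∑' x, (v x - v x) ^ 2 * m x = 0 := by
    intro n
    have h1 : (fun x => v x - v x) = fun _ => (0:ℝ) := by funext x; ring
    rw [h1, energy_zero]
    simp
  rw [show (fun n : ℕ => (G.energy (fun x => v x - v x)).toReal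
    + ∑' x, (v x - v x) ^ 2 * m x) = fun _ => (0:ℝ) from funext this]
  exact tendsto_const_nhds

lemma dirac_mem_regDom (hc : ∀ x, G.c x = 0) (m : V → ℝ) (x : V) :
    dirac x ∈ G.regDom m :=
  fs_mem_regDom hc m (dirac_support_finite x)

lemma energy_smul (u : V → ℝ) (r : ℝ) :
    G.energy (fun x => r * u x) = ENNReal.ofReal (r * r) * G.energy u := by
  unfold WeightedGraph.energy
  have h1 : ∀ p : V × V, ENNReal.ofReal (G.b p.1 p.2 * (r * u p.1 - r * u p.2) ^ 2)
      = ENNReal.ofReal (r * r) * ENNReal.ofReal (G.b p.1 p.2 * (u p.1 - u p.2) ^ 2) := by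
    intro p
    rw [← ENNReal.ofReal_mul (mul_self_nonneg r)]
    congr 1
    ring
  have h2 : ∀ x, ENNReal.ofReal (G.c x * (r * u x) ^ 2)
      = ENNReal.ofReal (r * r) * ENNReal.ofReal (G.c x * u x ^ 2) := by
    intro x
    rw [← ENNReal.ofReal_mul (mul_self_nonneg r)]
    congr 1
    ring
  rw [tsum_congr h1, tsum_congr h2, ENNReal.tsum_mul_left, ENNReal.tsum_mul_left]
  ring

lemma regDom_smul {m : V → ℝ} {u : V → ℝ} (hu : u ∈ G.regDom m) (r : ℝ) :
    (fun x => r * u x) ∈ G.regDom m := by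
  obtain ⟨hfe, hl2, f, hfs, hconv⟩ := hu
  refine ⟨?_, ?_, fun n x => r * f n x, ?_, ?_⟩
  · unfold WeightedGraph.FiniteEnergy at hfe ⊢
    rw [energy_smul]
    exact ENNReal.mul_lt_top ENNReal.ofReal_lt_top hfe
  · unfold MemL2 at hl2 ⊢
    apply Summable.congr (hl2.mul_left (r ^ 2))
    intro x; ring
  · intro n
    apply ((hfs n).subset)
    intro x hx
    simp only [Function.mem_support] at hx ⊢
    intro h
    exact hx (by rw [h, mul_zero])
  · have hkey : ∀ n, (G.energy (fun x => r * u x - r * f n x)).toReal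
        + ∑' x, (r * u x - r * f n x) ^ 2 * m x
        = (r * r) * ((G.energy (fun x => u x - f n x)).toReal
          + ∑' x, (u x - f n x) ^ 2 * m x) := by
      intro n
      have h1 : (fun x => r * u x - r * f n x) = fun x => r * (u x - f n x) := by
        funext x; ring
      rw [h1, energy_smul, ENNReal.toReal_mul, ENNReal.toReal_ofReal (mul_self_nonneg r)]
      have h2 : ∀ x, (r * u x - r * f n x) ^ 2 * m x = (r * r) * ((u x - f n x) ^ 2 * m x) := by
        intro x; ring
      rw [tsum_congr h2, tsum_mul_left]
      ring
    rw [show (fun n => (G.energy (fun x => r * u x - r * f n x)).toReal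
        + ∑' x, (r * u x - r * f n x) ^ 2 * m x)
      = fun n => (r * r) * ((G.energy (fun x => u x - f n x)).toReal
        + ∑' x, (u x - f n x) ^ 2 * m x) from funext hkey]
    have := hconv.const_mul (r * r)
    simpa using this

end RSH

namespace RSH
open WeightedGraph MeasureTheory Filter
open scoped Classical ENNReal

variable {V : Type*} {G : WeightedGraph V} {m : V → ℝ}

lemma green_eq (S : FormSetup G m) (x y : V) :
    S.green x y = ∫⁻ t in Set.Ioi (0:ℝ), ENNReal.ofReal (S.T t (dirac x) y) := rfl

lemma aemeas_T (S : FormSetup G m) {f : V → ℝ} (hf : MemL2 m f) (y : V) :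
    AEMeasurable (fun t => ENNReal.ofReal (S.T t f y))
      (volume.restrict (Set.Ioi (0:ℝ))) :=
  (ENNReal.continuous_ofReal.comp_continuousOn (S.T_cont f hf y)).aemeasurable
    measurableSet_Ioi

lemma aemeas_T_exp (S : FormSetup G m) {f : V → ℝ} (hf : MemL2 m f) (y : V) (α : ℝ) :
    AEMeasurable (fun t => ENNReal.ofReal (Real.exp (-α * t) * S.T t f y))
      (volume.restrict (Set.Ioi (0:ℝ))) := by
  apply (ENNReal.continuous_ofReal.comp_continuousOn _).aemeasurable measurableSet_Ioi
  exact ((Real.continuous_exp.comp (continuous_const.mul continuous_id)).continuousOn).mul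
    (S.T_cont f hf y)

/-- Shift of a lower integral on a half-line. -/
lemma lintegral_Ioi_shift (f : ℝ → ℝ≥0∞) :
    ∫⁻ t in Set.Ioi (1:ℝ), f t = ∫⁻ s in Set.Ioi (0:ℝ), f (s + 1) := by
  have hmp := measurePreserving_add_right (volume : Measure ℝ) (1:ℝ)
  have he : MeasurableEmbedding (fun x : ℝ => x + 1) :=
    (Homeomorph.addRight (1:ℝ)).measurableEmbedding
  have hpre : (fun x : ℝ => x + 1) ⁻¹' (Set.Ioi 1) = Set.Ioi 0 := by
    ext s
    simp [Set.mem_Ioi]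
  calc ∫⁻ t in Set.Ioi (1:ℝ), f t
      = ∫⁻ t in Set.Ioi (1:ℝ), f t ∂(Measure.map (fun x : ℝ => x + 1) volume) := by
        rw [hmp.map_eq]
  _ = ∫⁻ t, f t ∂(Measure.map (fun x : ℝ => x + 1) (volume.restrict (Set.Ioi 0))) := by
        rw [Measure.restrict_map he.measurable measurableSet_Ioi, hpre]
  _ = ∫⁻ s in Set.Ioi (0:ℝ), f (s + 1) := he.lintegral_map f

/-- The semigroup Harnack-type inequality. -/
lemma harnack_T (S : FormSetup G m) {s : ℝ} (hs : 0 < s) (x w y : V) :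
    S.T s (dirac x) w * S.T 1 (dirac w) y ≤ S.T (1 + s) (dirac x) y := by
  set c := S.T s (dirac x) w with hc_def
  have hg : ∀ z, 0 ≤ S.T s (dirac x) z - c * dirac w z := by
    intro z
    by_cases hz : z = w
    · subst hz
      simp [dirac, hc_def]
    · have h1 : dirac w z = 0 := by
        unfold dirac
        rw [if_neg hz]
      rw [h1, mul_zero, sub_zero]
      exact S.T_pos s hs (dirac x) (dirac_nonneg x) z
  have hT := S.T_pos 1 one_pos _ hg y
  have hlin : S.T 1 (fun z => S.T s (dirac x) z - c * dirac w z) y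
      = S.T 1 (S.T s (dirac x)) y - c * S.T 1 (dirac w) y := by
    have h1 : (fun z => S.T s (dirac x) z - c * dirac w z)
        = (S.T s (dirac x)) + (-c) • (dirac w) := by
      funext z
      simp only [Pi.add_apply, Pi.smul_apply, smul_eq_mul]
      ring
    rw [h1, (S.T_linear 1).map_add, (S.T_linear 1).map_smul]
    simp only [Pi.add_apply, Pi.smul_apply, smul_eq_mul]
    ring
  rw [hlin] at hT
  have hsg : S.T (1 + s) (dirac x) = S.T 1 (S.T s (dirac x)) :=
    S.T_semigroup 1 s one_pos hs (dirac x)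
  rw [hsg]
  linarith [hT]

end RSH

namespace RSH
open WeightedGraph MeasureTheory Filter
open scoped Classical ENNReal

variable {V : Type*} {G : WeightedGraph V} {m : V → ℝ}

lemma T_dirac_nonneg (S : FormSetup G m) {t : ℝ} (ht : 0 < t) (x y : V) :
    0 ≤ S.T t (dirac x) y :=
  S.T_pos t ht (dirac x) (dirac_nonneg x) y

/-- Harnack inequality for the Green function. -/
lemma green_harnack (S : FormSetup G m) (x w y : V) :
    ENNReal.ofReal (S.T 1 (dirac w) y) * S.green x w ≤ S.green x y := by
  rw [green_eq, green_eq]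
  have step1 : ∫⁻ t in Set.Ioi (1:ℝ), ENNReal.ofReal (S.T t (dirac x) y)
      ≤ ∫⁻ t in Set.Ioi (0:ℝ), ENNReal.ofReal (S.T t (dirac x) y) :=
    lintegral_mono_set (Set.Ioi_subset_Ioi (by norm_num))
  refine le_trans ?_ step1
  rw [lintegral_Ioi_shift]
  have step2 : ∫⁻ s in Set.Ioi (0:ℝ),
        ENNReal.ofReal (S.T 1 (dirac w) y) * ENNReal.ofReal (S.T s (dirac x) w)
      ≤ ∫⁻ s in Set.Ioi (0:ℝ), ENNReal.ofReal (S.T (s + 1) (dirac x) y) := by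
    apply lintegral_mono_ae
    rw [ae_restrict_iff' measurableSet_Ioi]
    apply ae_of_all
    intro s hs
    rw [← ENNReal.ofReal_mul (S.T_pos 1 one_pos _ (dirac_nonneg w) y)]
    apply ENNReal.ofReal_le_ofReal
    rw [add_comm s 1]
    calc S.T 1 (dirac w) y * S.T s (dirac x) w
        = S.T s (dirac x) w * S.T 1 (dirac w) y := by ring
    _ ≤ S.T (1 + s) (dirac x) y := harnack_T S hs x w y
  refine le_trans ?_ step2
  rw [lintegral_const_mul' _ _ ENNReal.ofReal_ne_top]

/-- Harnack inequality for the resolvent. -/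
lemma R_harnack (S : FormSetup G m) {α : ℝ} (hα : 0 < α) (x w y : V) :
    ENNReal.ofReal (Real.exp (-α) * S.T 1 (dirac w) y)
        * ENNReal.ofReal (S.R α (dirac x) w)
      ≤ ENNReal.ofReal (S.R α (dirac x) y) := by
  rw [S.R_laplace α hα _ (dirac_memL2 m x) (dirac_nonneg x) y,
    S.R_laplace α hα _ (dirac_memL2 m x) (dirac_nonneg x) w]
  have step1 : ∫⁻ t in Set.Ioi (1:ℝ),
        ENNReal.ofReal (Real.exp (-α * t) * S.T t (dirac x) y)
      ≤ ∫⁻ t in Set.Ioi (0:ℝ), ENNReal.ofReal (Real.exp (-α * t) * S.T t (dirac x) y) :=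
    lintegral_mono_set (Set.Ioi_subset_Ioi (by norm_num))
  refine le_trans ?_ step1
  rw [lintegral_Ioi_shift]
  have step2 : ∫⁻ s in Set.Ioi (0:ℝ),
        ENNReal.ofReal (Real.exp (-α) * S.T 1 (dirac w) y)
          * ENNReal.ofReal (Real.exp (-α * s) * S.T s (dirac x) w)
      ≤ ∫⁻ s in Set.Ioi (0:ℝ),
          ENNReal.ofReal (Real.exp (-α * (s + 1)) * S.T (s + 1) (dirac x) y) := by
    apply lintegral_mono_ae
    rw [ae_restrict_iff' measurableSet_Ioi]
    apply ae_of_all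
    intro s hs
    rw [← ENNReal.ofReal_mul
      (mul_nonneg (Real.exp_pos _).le (S.T_pos 1 one_pos _ (dirac_nonneg w) y))]
    apply ENNReal.ofReal_le_ofReal
    have hexp : Real.exp (-α) * Real.exp (-α * s) = Real.exp (-α * (s + 1)) := by
      rw [← Real.exp_add]
      congr 1
      ring
    have hT : S.T s (dirac x) w * S.T 1 (dirac w) y ≤ S.T (s + 1) (dirac x) y := by
      rw [add_comm s 1]
      exact harnack_T S hs x w y
    calc Real.exp (-α) * S.T 1 (dirac w) y * (Real.exp (-α * s) * S.T s (dirac x) w)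
        = (Real.exp (-α) * Real.exp (-α * s)) * (S.T s (dirac x) w * S.T 1 (dirac w) y) := by
          ring
    _ = Real.exp (-α * (s + 1)) * (S.T s (dirac x) w * S.T 1 (dirac w) y) := by rw [hexp]
    _ ≤ Real.exp (-α * (s + 1)) * S.T (s + 1) (dirac x) y := by
        apply mul_le_mul_of_nonneg_left hT (Real.exp_pos _).le
  refine le_trans ?_ step2
  rw [lintegral_const_mul' _ _ ENNReal.ofReal_ne_top]

end RSH

namespace RSH
open WeightedGraph MeasureTheory Filter
open scoped Classical ENNReal

variable {V : Type*} {G : WeightedGraph V} {m : V → ℝ}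

lemma alpha_pos (n : ℕ) : (0:ℝ) < 1 / (n + 1) := by positivity

lemma alpha_anti {n k : ℕ} (hnk : n ≤ k) : (1:ℝ) / (k + 1) ≤ 1 / (n + 1) := by
  apply one_div_le_one_div_of_le (by positivity)
  have : (n:ℝ) ≤ k := Nat.cast_le.2 hnk
  linarith

lemma gR_mono (S : FormSetup G m) (x y : V) :
    Monotone fun n : ℕ => ENNReal.ofReal (S.R (1 / (n + 1)) (dirac x) y) := by
  intro n k hnk
  dsimp only
  rw [S.R_laplace _ (alpha_pos n) _ (dirac_memL2 m x) (dirac_nonneg x) y,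
    S.R_laplace _ (alpha_pos k) _ (dirac_memL2 m x) (dirac_nonneg x) y]
  apply lintegral_mono_ae
  rw [ae_restrict_iff' measurableSet_Ioi]
  apply ae_of_all
  intro t ht
  apply ENNReal.ofReal_le_ofReal
  apply mul_le_mul_of_nonneg_right _ (S.T_pos t ht _ (dirac_nonneg x) y)
  apply Real.exp_le_exp.2
  have h1 : (1:ℝ) / (k + 1) ≤ 1 / (n + 1) := alpha_anti hnk
  have ht' : (0:ℝ) < t := ht
  nlinarith

lemma iSup_exp_ofReal {t c : ℝ} (ht : 0 < t) (hc : 0 ≤ c) :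
    (⨆ n : ℕ, ENNReal.ofReal (Real.exp (-(1 / (n + 1)) * t) * c)) = ENNReal.ofReal c := by
  apply le_antisymm
  · apply iSup_le
    intro n
    apply ENNReal.ofReal_le_ofReal
    have hexp1 : Real.exp (-(1 / ((n:ℝ) + 1)) * t) ≤ 1 := by
      have h0 : -(1 / ((n:ℝ) + 1)) * t ≤ 0 := by
        have := alpha_pos n
        nlinarith
      calc Real.exp (-(1 / ((n:ℝ) + 1)) * t) ≤ Real.exp 0 := Real.exp_le_exp.2 h0
      _ = 1 := Real.exp_zero
    calc Real.exp (-(1 / ((n:ℝ) + 1)) * t) * c ≤ 1 * c :=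
          mul_le_mul_of_nonneg_right hexp1 hc
    _ = c := one_mul c
  · have htend : Tendsto (fun n : ℕ => ENNReal.ofReal (Real.exp (-(1 / (n + 1)) * t) * c))
        atTop (nhds (ENNReal.ofReal c)) := by
      have h1 : Tendsto (fun n : ℕ => (1:ℝ) / (n + 1)) atTop (nhds 0) :=
        tendsto_one_div_add_atTop_nhds_zero_nat
      have h2 : Tendsto (fun n : ℕ => Real.exp (-(1 / (n + 1)) * t) * c) atTop
          (nhds (Real.exp (-0 * t) * c)) := by
        apply Tendsto.mul_const
        apply (Real.continuous_exp.tendsto _).comp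
        exact (h1.neg).mul_const t
      rw [show Real.exp (-0 * t) * c = c by simp] at h2
      exact (ENNReal.continuous_ofReal.tendsto _).comp h2
    apply le_of_tendsto htend
    apply Eventually.of_forall
    intro n
    apply le_iSup (fun n : ℕ => ENNReal.ofReal (Real.exp (-(1 / ((n:ℝ) + 1)) * t) * c)) n

lemma iSup_gR (S : FormSetup G m) (x y : V) :
    (⨆ n : ℕ, ENNReal.ofReal (S.R (1 / (n + 1)) (dirac x) y)) = S.green x y := by
  have hrw : ∀ n : ℕ, ENNReal.ofReal (S.R (1 / (n + 1)) (dirac x) y)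
      = ∫⁻ t in Set.Ioi (0:ℝ),
          ENNReal.ofReal (Real.exp (-(1 / (n + 1)) * t) * S.T t (dirac x) y) := fun n =>
    S.R_laplace _ (alpha_pos n) _ (dirac_memL2 m x) (dirac_nonneg x) y
  rw [show (fun n : ℕ => ENNReal.ofReal (S.R (1 / (n + 1)) (dirac x) y))
    = fun n : ℕ => ∫⁻ t in Set.Ioi (0:ℝ),
        ENNReal.ofReal (Real.exp (-(1 / ((n:ℝ) + 1)) * t) * S.T t (dirac x) y) from funext hrw]
  rw [← lintegral_iSup' (fun n => aemeas_T_exp S (dirac_memL2 m x) y _) ?_]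
  · rw [green_eq]
    apply lintegral_congr_ae
    filter_upwards [self_mem_ae_restrict measurableSet_Ioi] with t ht
    exact iSup_exp_ofReal ht (S.T_pos t ht _ (dirac_nonneg x) y)
  · filter_upwards [self_mem_ae_restrict measurableSet_Ioi] with t ht
    intro n k hnk
    apply ENNReal.ofReal_le_ofReal
    apply mul_le_mul_of_nonneg_right _ (S.T_pos t ht _ (dirac_nonneg x) y)
    apply Real.exp_le_exp.2
    have h1 : (1:ℝ) / (k + 1) ≤ 1 / (n + 1) := alpha_anti hnk
    have ht' : (0:ℝ) < t := ht
    nlinarith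

lemma gR_nonneg (S : FormSetup G m) (x y : V) (n : ℕ) :
    0 ≤ S.R (1 / (n + 1)) (dirac x) y :=
  S.R_pos _ (alpha_pos n) _ (dirac_nonneg x) y

lemma gR_le_greenToReal (S : FormSetup G m) {x y : V} (hne : S.green x y ≠ ⊤) (n : ℕ) :
    S.R (1 / (n + 1)) (dirac x) y ≤ (S.green x y).toReal := by
  have h1 : ENNReal.ofReal (S.R (1 / (n + 1)) (dirac x) y) ≤ S.green x y := by
    rw [← iSup_gR S x y]
    exact le_iSup (fun n : ℕ => ENNReal.ofReal (S.R (1 / ((n:ℝ) + 1)) (dirac x) y)) n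
  have h2 := ENNReal.toReal_mono hne h1
  rwa [ENNReal.toReal_ofReal (gR_nonneg S x y n)] at h2

lemma gR_tendsto (S : FormSetup G m) {x y : V} (hne : S.green x y ≠ ⊤) :
    Tendsto (fun n : ℕ => S.R (1 / (n + 1)) (dirac x) y) atTop
      (nhds (S.green x y).toReal) := by
  have h1 : Tendsto (fun n : ℕ => ENNReal.ofReal (S.R (1 / (n + 1)) (dirac x) y)) atTop
      (nhds (S.green x y)) := by
    have h0 : Tendsto (fun n : ℕ => ENNReal.ofReal (S.R (1 / (n + 1)) (dirac x) y)) atTop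
        (nhds (⨆ n : ℕ, ENNReal.ofReal (S.R (1 / (n + 1)) (dirac x) y))) :=
      tendsto_atTop_iSup (gR_mono S x y)
    rwa [iSup_gR S x y] at h0
  have h2 := (ENNReal.tendsto_toReal hne).comp h1
  refine h2.congr fun n => ?_
  simp only [Function.comp_apply]
  exact ENNReal.toReal_ofReal (gR_nonneg S x y n)

lemma gR_tendsto_atTop (S : FormSetup G m) {x y : V} (htop : S.green x y = ⊤) :
    Tendsto (fun n : ℕ => S.R (1 / (n + 1)) (dirac x) y) atTop atTop := by
  rw [tendsto_atTop]
  intro M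
  have hsup : (⨆ n : ℕ, ENNReal.ofReal (S.R (1 / (n + 1)) (dirac x) y)) = ⊤ := by
    rw [iSup_gR S x y, htop]
  have hM : ENNReal.ofReal M < ⨆ n : ℕ, ENNReal.ofReal (S.R (1 / (n + 1)) (dirac x) y) := by
    rw [hsup]
    exact ENNReal.ofReal_lt_top
  obtain ⟨n₀, hn₀⟩ := lt_iSup_iff.1 hM
  rw [eventually_atTop]
  refine ⟨n₀, fun n hn => ?_⟩
  have h1 : ENNReal.ofReal M ≤ ENNReal.ofReal (S.R (1 / (n + 1)) (dirac x) y) :=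
    hn₀.le.trans (gR_mono S x y hn)
  exact (ENNReal.ofReal_le_ofReal_iff (gR_nonneg S x y n)).1 h1

end RSH

namespace RSH
open WeightedGraph MeasureTheory Filter
open scoped Classical ENNReal

variable {V : Type*} {G : WeightedGraph V} {m : V → ℝ}

lemma direction_mpr (G : WeightedGraph V) (m : V → ℝ) (hm : ∀ x, 0 < m x)
    (hc : ∀ x, G.c x = 0) (S : FormSetup G m) (hdom : S.dom = G.regDom m)
    (hpi : ∀ t : ℝ, 0 < t → ∀ f : V → ℝ, MemL2 m f → (∀ x, 0 ≤ f x) → f ≠ 0 →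
      ∀ y, 0 < S.T t f y)
    (hsup : ∀ u : V → ℝ, G.FiniteEnergy u → (∀ x, 0 ≤ G.formalL m u x) →
      ∀ x y, u x = u y) :
    ∀ x y, S.green x y = ⊤ := by
  by_contra hcon
  push_neg at hcon
  obtain ⟨x₀, y₀, hne₀⟩ := hcon
  -- finiteness propagates to all second arguments
  have hfin : ∀ y, S.green x₀ y ≠ ⊤ := by
    intro y htop
    apply hne₀
    have hpos : 0 < S.T 1 (dirac y) y₀ :=
      hpi 1 one_pos (dirac y) (dirac_memL2 m y) (dirac_nonneg y) (dirac_ne_zero y) y₀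
    have h := green_harnack S x₀ y y₀
    rw [htop] at h
    rw [ENNReal.mul_top (by
      simp only [ne_eq, ENNReal.ofReal_eq_zero, not_le]
      exact hpos)] at h
    exact top_le_iff.1 h
  set Gf : V → ℝ := fun y => (S.green x₀ y).toReal with hGf_def
  have hGf_nonneg : ∀ y, 0 ≤ Gf y := fun y => ENNReal.toReal_nonneg
  set g : ℕ → V → ℝ := fun n => S.R (1 / (n + 1)) (dirac x₀) with hg_def
  have hg_nonneg : ∀ n y, 0 ≤ g n y := fun n y => gR_nonneg S x₀ y n
  have hg_le : ∀ n y, g n y ≤ Gf y := fun n y => gR_le_greenToReal S (hfin y) n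
  have hg_tend : ∀ y, Tendsto (fun n => g n y) atTop (nhds (Gf y)) :=
    fun y => gR_tendsto S (hfin y)
  have hg_dom : ∀ n, g n ∈ S.dom :=
    fun n => S.R_mem _ (alpha_pos n) _ (dirac_memL2 m x₀)
  have sg : ∀ n, Summable (epair G (g n) (g n)) :=
    fun n => (finiteEnergy_iff hc).1 (S.dom_fe _ (hg_dom n))
  -- energy bound
  set K : ℝ := Gf x₀ * m x₀ with hK_def
  have h_energy_bd : ∀ n, G.energyBilin (g n) (g n) ≤ K := by
    intro n
    have hchar := S.R_char _ (alpha_pos n) _ (dirac_memL2 m x₀) (g n) (hg_dom n)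
    rw [l2inner_dirac_left] at hchar
    have hl2 : 0 ≤ l2inner m (g n) (g n) := l2inner_self_nonneg m (fun x => (hm x).le) _
    have hα := alpha_pos n
    have hb : g n x₀ * m x₀ ≤ K := by
      apply mul_le_mul_of_nonneg_right (hg_le n x₀) (hm x₀).le
    nlinarith
  have h_tsum_bd : ∀ n, ∑' p, epair G (g n) (g n) p ≤ 2 * K := by
    intro n
    have := h_energy_bd n
    rw [energyBilin_eq hc] at this
    linarith
  -- finite energy of the Green function
  have SGf : Summable (epair G Gf Gf) := by
    apply summable_of_sum_le (epair_nonneg_self G Gf)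
    intro F
    have hlim : Tendsto (fun n => ∑ p ∈ F, epair G (g n) (g n) p) atTop
        (nhds (∑ p ∈ F, epair G Gf Gf p)) := by
      apply tendsto_finset_sum
      intro p _
      unfold epair
      exact (((hg_tend p.1).sub (hg_tend p.2)).const_mul _).mul
        ((hg_tend p.1).sub (hg_tend p.2))
    apply le_of_tendsto hlim
    apply Eventually.of_forall
    intro n
    calc ∑ p ∈ F, epair G (g n) (g n) p ≤ ∑' p, epair G (g n) (g n) p :=
      Summable.sum_le_tsum F (fun p _ => epair_nonneg_self G (g n) p) (sg n)
    _ ≤ 2 * K := h_tsum_bd n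
  -- resolvent identity at every point
  have hres : ∀ n z, lap G (g n) z + (1 / (n + 1)) * (g n z * m z) = dirac x₀ z * m z := by
    intro n z
    have hzdom : dirac z ∈ S.dom := by
      rw [hdom]
      exact dirac_mem_regDom hc m z
    have hchar := S.R_char _ (alpha_pos n) _ (dirac_memL2 m x₀) (dirac z) hzdom
    rw [l2inner_dirac_right, l2inner_dirac_right] at hchar
    rw [← energyBilin_dirac hc (sg n) z]
    exact hchar
  -- pass to the limit in the Laplacian
  have hlap : ∀ z, lap G Gf z = dirac x₀ z * m z := by
    intro z
    have hrow : Summable fun y => G.b z y * |Gf z - Gf y| := row_abs_summable SGf z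
    have hbound_sum : Summable fun y => G.b z y * (Gf z + Gf y) := by
      have h1 : Summable fun y => 2 * (G.b z y * Gf z) + G.b z y * |Gf z - Gf y| :=
        (((G.b_summable z).mul_right (Gf z)).mul_left 2).add hrow
      apply Summable.of_nonneg_of_le _ _ h1
      · intro y
        exact mul_nonneg (G.b_nonneg z y) (by positivity)
      · intro y
        have habs : Gf y ≤ Gf z + |Gf z - Gf y| := by
          cases abs_cases (Gf z - Gf y) with
          | inl h => nlinarith [h.1, hGf_nonneg y, hGf_nonneg z]
          | inr h => nlinarith [h.1]
        nlinarith [G.b_nonneg z y, habs, hGf_nonneg z]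
    have hlap_tend : Tendsto (fun n => lap G (g n) z) atTop (nhds (lap G Gf z)) := by
      unfold lap
      apply tendsto_tsum_of_dominated_convergence hbound_sum
      · intro y
        exact ((hg_tend z).sub (hg_tend y)).const_mul _
      · apply Eventually.of_forall
        intro n y
        rw [Real.norm_eq_abs, abs_mul, abs_of_nonneg (G.b_nonneg z y)]
        apply mul_le_mul_of_nonneg_left _ (G.b_nonneg z y)
        calc |g n z - g n y| ≤ |g n z| + |g n y| := abs_sub _ _
        _ = g n z + g n y := by
            rw [abs_of_nonneg (hg_nonneg n z), abs_of_nonneg (hg_nonneg n y)]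
        _ ≤ Gf z + Gf y := add_le_add (hg_le n z) (hg_le n y)
    have hα_tend : Tendsto (fun n : ℕ => (1 / (n + 1) : ℝ) * (g n z * m z)) atTop
        (nhds 0) := by
      have h1 : Tendsto (fun n : ℕ => (1 / (n + 1) : ℝ)) atTop (nhds 0) :=
        tendsto_one_div_add_atTop_nhds_zero_nat
      have h2 : Tendsto (fun n => g n z * m z) atTop (nhds (Gf z * m z)) :=
        (hg_tend z).mul_const _
      have := h1.mul h2
      rwa [zero_mul] at this
    have hsum_tend : Tendsto (fun n => lap G (g n) z + (1 / (n + 1) : ℝ) * (g n z * m z))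
        atTop (nhds (lap G Gf z + 0)) := hlap_tend.add hα_tend
    rw [add_zero] at hsum_tend
    have hconst : Tendsto (fun _ : ℕ => dirac x₀ z * m z) atTop (nhds (dirac x₀ z * m z)) :=
      tendsto_const_nhds
    apply tendsto_nhds_unique (hsum_tend.congr fun n => hres n z) hconst
  -- Gf is superharmonic with finite energy
  have hGfe : G.FiniteEnergy Gf := (finiteEnergy_iff hc).2 SGf
  have hGsh : ∀ z, 0 ≤ G.formalL m Gf z := by
    intro z
    have h1 : 0 ≤ lap G Gf z := by
      rw [hlap z]
      exact mul_nonneg (dirac_nonneg x₀ z) (hm z).le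
    rw [lap_eq_formalL hc m hm] at h1
    exact nonneg_of_mul_nonneg_right h1 (hm z)
  have hconst := hsup Gf hGfe hGsh
  -- contradiction at x₀
  have hzero : lap G Gf x₀ = 0 := by
    unfold lap
    rw [tsum_congr (fun y => by rw [hconst x₀ y, sub_self, mul_zero]), tsum_zero]
  rw [hlap x₀, dirac_apply_self, one_mul] at hzero
  exact (hm x₀).ne' hzero

end RSH

namespace RSH
open WeightedGraph MeasureTheory Filter
open scoped Classical ENNReal

variable {V : Type*} {G : WeightedGraph V} {m : V → ℝ}

lemma energy_toReal (hc : ∀ x, G.c x = 0) {d : V → ℝ} (h : Summable (epair G d d)) :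
    (G.energy d).toReal = (1/2) * ∑' p, epair G d d p := by
  rw [energy_eq_ofReal hc h, ENNReal.toReal_ofReal]
  have : 0 ≤ ∑' p, epair G d d p := tsum_nonneg (epair_nonneg_self G d)
  linarith

/-- Extraction of a good finitely supported approximation from `regDom`. -/
lemma regDom_approx (hc : ∀ x, G.c x = 0) (hm : ∀ x, 0 < m x) {w : V → ℝ}
    (hw : w ∈ G.regDom m) {ε : ℝ} (hε : 0 < ε) :
    ∃ f : V → ℝ, (Function.support f).Finite ∧
      Summable (epair G (fun x => w x - f x) (fun x => w x - f x)) ∧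
      (∑' p, epair G (fun x => w x - f x) (fun x => w x - f x) p) ≤ ε ∧
      ∀ x, (w x - f x) ^ 2 * m x ≤ ε := by
  obtain ⟨hfe, hl2, f, hfs, hconv⟩ := hw
  have hε2 : 0 < ε / 2 := by linarith
  have := (hconv.eventually (gt_mem_nhds hε2)).exists
  obtain ⟨n, hn⟩ := this
  set d := fun x => w x - f n x with hd_def
  have hSd : Summable (epair G d d) :=
    epair_self_sub_summable ((finiteEnergy_iff hc).1 hfe) (epair_self_summable_fs (hfs n))
  have hDl2 : Summable fun x => d x ^ 2 * m x := by
    have h1 : Summable fun x => 2 * (w x ^ 2 * m x) + 2 * ((f n x) ^ 2 * m x) :=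
      ((hl2.mul_left 2).add ((memL2_fs (hfs n)).mul_left 2))
    apply Summable.of_nonneg_of_le _ _ h1
    · intro x
      exact mul_nonneg (sq_nonneg _) (hm x).le
    · intro x
      have := (hm x).le
      simp only [hd_def]
      nlinarith [sq_nonneg (w x + f n x), sq_nonneg (w x - f n x)]
  have h_energy : (G.energy d).toReal = (1/2) * ∑' p, epair G d d p := energy_toReal hc hSd
  have h_tsum_nonneg : 0 ≤ ∑' x, d x ^ 2 * m x :=
    tsum_nonneg fun x => mul_nonneg (sq_nonneg _) (hm x).le
  have h_energy_nonneg : 0 ≤ (1/2) * ∑' p, epair G d d p := by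
    have : 0 ≤ ∑' p, epair G d d p := tsum_nonneg (epair_nonneg_self G d)
    linarith
  have he : (∑' x, d x ^ 2 * m x) = ∑' x, (w x - f n x) ^ 2 * m x := rfl
  rw [h_energy] at hn
  refine ⟨f n, hfs n, hSd, by linarith, ?_⟩
  intro x
  have h1 : d x ^ 2 * m x ≤ ∑' x, d x ^ 2 * m x :=
    Summable.le_tsum hDl2 x fun y _ => mul_nonneg (sq_nonneg _) (hm y).le
  have h2 : d x ^ 2 * m x = (w x - f n x) ^ 2 * m x := rfl
  linarith

/-- Lipschitz property of max against a constant. -/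
lemma lip_max (a b c : ℝ) : |max a c - max b c| ≤ |a - b| := by
  rcases le_total a c with h1 | h1 <;> rcases le_total b c with h2 | h2 <;>
    rw [abs_le] <;> constructor <;>
    simp [max_eq_left, max_eq_right, h1, h2] <;>
    cases abs_cases (a - b) <;> nlinarith [le_abs_self (a - b), neg_abs_le (a - b)]

lemma lip_min (a b c : ℝ) : |min a c - min b c| ≤ |a - b| := by
  have h := lip_max (-a) (-b) (-c)
  rw [max_neg_neg, max_neg_neg] at h
  have h2 : |(-(min a c)) - (-(min b c))| = |min a c - min b c| := by
    rw [show (-(min a c)) - (-(min b c)) = -(min a c - min b c) by ring, abs_neg]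
  have h3 : |(-a) - (-b)| = |a - b| := by
    rw [show (-a) - (-b) = -(a - b) by ring, abs_neg]
  rw [h2, h3] at h
  exact h

/-- The clamp to `[-k, k]`. -/
noncomputable def clamp (k : ℝ) (t : ℝ) : ℝ := max (min t k) (-k)

lemma clamp_lip (k a b : ℝ) : |clamp k a - clamp k b| ≤ |a - b| :=
  (lip_max (min a k) (min b k) (-k)).trans (lip_min a b k)

lemma clamp_eq_of_abs_le {k t : ℝ} (h : |t| ≤ k) : clamp k t = t := by
  rw [abs_le] at h
  unfold clamp
  rw [min_eq_left h.2, max_eq_left h.1]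

lemma clamp_abs_le {k : ℝ} (hk : 0 ≤ k) (t : ℝ) : |clamp k t| ≤ k := by
  unfold clamp
  rw [abs_le]
  constructor
  · simp
  · apply max_le _ (by linarith)
    exact (min_le_right t k)

lemma clamp_monotone (k : ℝ) : Monotone (clamp k) := fun a b hab =>
  max_le_max (min_le_min_right k hab) le_rfl

lemma posPart_lip (a b : ℝ) : |max a 0 - max b 0| ≤ |a - b| := lip_max a b 0

/-- Monotone functions give nonnegative products of differences. -/
lemma mono_diff_nonneg {C : ℝ → ℝ} (hC : Monotone C) (a b : ℝ) :
    0 ≤ (a - b) * (C a - C b) := by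
  rcases le_total a b with h | h
  · have := hC h
    nlinarith
  · have := hC h
    nlinarith

/-- CS for the absolute cross sums. -/
lemma tsum_abs_cs {u v : V → ℝ} (hu : Summable (epair G u u)) (hv : Summable (epair G v v)) :
    (∑' p : V × V, G.b p.1 p.2 * |u p.1 - u p.2| * |v p.1 - v p.2|)
      ≤ Real.sqrt (∑' p, epair G u u p) * Real.sqrt (∑' p, epair G v v p) := by
  have hw : ∀ p : V × V, 0 ≤ G.b p.1 p.2 := fun p => G.b_nonneg _ _
  have hf : Summable fun p : V × V => G.b p.1 p.2 * |u p.1 - u p.2| ^ 2 :=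
    hu.congr fun p => by rw [epair_self_eq, sq_abs]
  have hg : Summable fun p : V × V => G.b p.1 p.2 * |v p.1 - v p.2| ^ 2 :=
    hv.congr fun p => by rw [epair_self_eq, sq_abs]
  have h := cs_sq_le hw hf hg
  have hX_nonneg : 0 ≤ ∑' p : V × V, G.b p.1 p.2 * |u p.1 - u p.2| * |v p.1 - v p.2| :=
    tsum_nonneg fun p => mul_nonneg (mul_nonneg (hw p) (abs_nonneg _)) (abs_nonneg _)
  have e1 : (∑' p : V × V, G.b p.1 p.2 * |u p.1 - u p.2| ^ 2) = ∑' p, epair G u u p :=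
    tsum_congr fun p => by rw [epair_self_eq, sq_abs]
  have e2 : (∑' p : V × V, G.b p.1 p.2 * |v p.1 - v p.2| ^ 2) = ∑' p, epair G v v p :=
    tsum_congr fun p => by rw [epair_self_eq, sq_abs]
  rw [e1, e2] at h
  calc (∑' p : V × V, G.b p.1 p.2 * |u p.1 - u p.2| * |v p.1 - v p.2|)
      = Real.sqrt ((∑' p : V × V, G.b p.1 p.2 * |u p.1 - u p.2| * |v p.1 - v p.2|) ^ 2) :=
        (Real.sqrt_sq hX_nonneg).symm
  _ ≤ Real.sqrt ((∑' p, epair G u u p) * (∑' p, epair G v v p)) := Real.sqrt_le_sqrt h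
  _ = Real.sqrt (∑' p, epair G u u p) * Real.sqrt (∑' p, epair G v v p) :=
      Real.sqrt_mul (tsum_nonneg (epair_nonneg_self G u)) _

/-- A finitely supported function is bounded. -/
lemma fs_bounded {v : V → ℝ} (hv : (Function.support v).Finite) :
    ∃ M : ℝ, 0 ≤ M ∧ ∀ x, |v x| ≤ M := by
  refine ⟨∑ z ∈ hv.toFinset, |v z|, Finset.sum_nonneg fun z _ => abs_nonneg _, fun x => ?_⟩
  by_cases hx : v x = 0
  · rw [hx, abs_zero]
    exact Finset.sum_nonneg fun z _ => abs_nonneg _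
  · exact Finset.single_le_sum (fun z _ => abs_nonneg (v z)) (hv.mem_toFinset.2 hx)

end RSH

namespace RSH
open WeightedGraph MeasureTheory Filter
open scoped Classical ENNReal

variable {V : Type*} {G : WeightedGraph V} {m : V → ℝ}


/-- Triangle inequality for square roots of pair-energy sums. -/
lemma sqrt_tsum_triangle (hc : ∀ x, G.c x = 0) {a b : V → ℝ}
    (Sa : Summable (epair G a a)) (Sd : Summable (epair G (fun x => a x - b x) (fun x => a x - b x))) :
    Real.sqrt (∑' p, epair G b b p)
      ≤ Real.sqrt (∑' p, epair G a a p)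
        + Real.sqrt (∑' p, epair G (fun x => a x - b x) (fun x => a x - b x) p) := by
  have Sv : Summable (epair G (fun x => b x - a x) (fun x => b x - a x)) :=
    Sd.congr fun p => by unfold epair; ring
  have h1 := sqrt_energyBilin_triangle hc Sa Sv
  have h2 : (fun x => a x + (b x - a x)) = b := funext fun x => by ring
  rw [h2] at h1
  have hBb : G.energyBilin b b = (1/2) * ∑' p, epair G b b p := energyBilin_eq hc _ _
  have hBa : G.energyBilin a a = (1/2) * ∑' p, epair G a a p := energyBilin_eq hc _ _
  have hBv : G.energyBilin (fun x => b x - a x) (fun x => b x - a x)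
      = (1/2) * ∑' p, epair G (fun x => a x - b x) (fun x => a x - b x) p := by
    rw [energyBilin_eq hc]
    congr 1
    apply tsum_congr
    intro p
    unfold epair
    ring
  rw [hBb, hBa, hBv] at h1
  have hq1 : 0 ≤ ∑' p, epair G b b p := tsum_nonneg (epair_nonneg_self G _)
  have hq2 : 0 ≤ ∑' p, epair G a a p := tsum_nonneg (epair_nonneg_self G _)
  have hq3 : 0 ≤ ∑' p, epair G (fun x => a x - b x) (fun x => a x - b x) p :=
    tsum_nonneg (epair_nonneg_self G _)
  rw [Real.sqrt_mul (by norm_num : (0:ℝ) ≤ 1/2) _, Real.sqrt_mul (by norm_num : (0:ℝ) ≤ 1/2) _,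
    Real.sqrt_mul (by norm_num : (0:ℝ) ≤ 1/2) _] at h1
  have hhalf : 0 < Real.sqrt (1/2) := Real.sqrt_pos.2 (by norm_num)
  have h1' : Real.sqrt (1/2) * Real.sqrt (∑' p, epair G b b p)
      ≤ Real.sqrt (1/2) * (Real.sqrt (∑' p, epair G a a p)
        + Real.sqrt (∑' p, epair G (fun x => a x - b x) (fun x => a x - b x) p)) := by
    rw [mul_add]
    exact h1
  exact le_of_mul_le_mul_left h1' hhalf

lemma sqrt_tendsto_zero {w : ℕ → ℝ} (hw : Tendsto w atTop (nhds 0)) :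
    Tendsto (fun n => Real.sqrt (w n)) atTop (nhds 0) := by
  have := (Real.continuous_sqrt.tendsto 0).comp hw
  rwa [Real.sqrt_zero] at this

/-- From `green = ∞`, construct a null sequence of nonnegative finitely supported
functions with energies tending to `0` and pointwise liminf bounded below. -/
lemma null_seq (hm : ∀ x, 0 < m x) (hc : ∀ x, G.c x = 0) (S : FormSetup G m)
    (hdom : S.dom = G.regDom m)
    (hpi : ∀ t : ℝ, 0 < t → ∀ f : V → ℝ, MemL2 m f → (∀ x, 0 ≤ f x) → f ≠ 0 →
      ∀ y, 0 < S.T t f y)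
    (x₀ : V) (hgreen : S.green x₀ x₀ = ⊤) :
    ∃ e : ℕ → V → ℝ, (∀ n, (Function.support (e n)).Finite) ∧ (∀ n x, 0 ≤ e n x) ∧
      (∀ n, Summable (epair G (e n) (e n))) ∧
      Tendsto (fun n => Real.sqrt (∑' p, epair G (e n) (e n) p)) atTop (nhds 0) ∧
      (∀ z, ∃ ρ : ℝ, 0 < ρ ∧ ∀ᶠ n in atTop, ρ ≤ e n z) := by
  set g : ℕ → V → ℝ := fun n => S.R (1 / (n + 1)) (dirac x₀) with hg_def
  set A : ℕ → ℝ := fun n => g n x₀ with hA_def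
  have hA : Tendsto A atTop atTop := gR_tendsto_atTop S hgreen
  have hg_dom : ∀ n, g n ∈ S.dom :=
    fun n => S.R_mem _ (alpha_pos n) _ (dirac_memL2 m x₀)
  have sg : ∀ n, Summable (epair G (g n) (g n)) :=
    fun n => (finiteEnergy_iff hc).1 (S.dom_fe _ (hg_dom n))
  have hg_nonneg : ∀ n z, 0 ≤ g n z := fun n z => gR_nonneg S x₀ z n
  -- energy bound on g n
  have hqg : ∀ n, ∑' p, epair G (g n) (g n) p ≤ 2 * (A n * m x₀) := by
    intro n
    have hchar := S.R_char _ (alpha_pos n) _ (dirac_memL2 m x₀) (g n) (hg_dom n)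
    rw [l2inner_dirac_left] at hchar
    have hl2 : 0 ≤ l2inner m (g n) (g n) := l2inner_self_nonneg m (fun x => (hm x).le) _
    have hα := alpha_pos n
    have hB := energyBilin_eq hc (u := g n) (v := g n)
    nlinarith [hchar, hB]
  -- normalized sequence
  set h : ℕ → V → ℝ := fun n => fun z => (A n)⁻¹ * g n z with hh_def
  have hh_dom : ∀ n, h n ∈ G.regDom m := by
    intro n
    have := hg_dom n
    rw [hdom] at this
    exact regDom_smul this (A n)⁻¹
  have Sh : ∀ n, Summable (epair G (h n) (h n)) :=
    fun n => epair_self_smul_summable (sg n) _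
  have hqh_eq : ∀ n, ∑' p, epair G (h n) (h n) p
      = ((A n)⁻¹ * (A n)⁻¹) * ∑' p, epair G (g n) (g n) p := by
    intro n
    rw [← tsum_mul_left]
    apply tsum_congr
    intro p
    unfold epair
    simp only [hh_def]
    ring
  -- approximations
  have happrox : ∀ n : ℕ, ∃ f : V → ℝ, (Function.support f).Finite ∧
      Summable (epair G (fun x => h n x - f x) (fun x => h n x - f x)) ∧
      (∑' p, epair G (fun x => h n x - f x) (fun x => h n x - f x) p) ≤ 1 / (n + 1) ∧
      ∀ x, (h n x - f x) ^ 2 * m x ≤ 1 / (n + 1) :=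
    fun n => regDom_approx hc hm (hh_dom n) (alpha_pos n)
  choose f hf_fs Sdiff hqdiff hptdiff using happrox
  -- the null sequence
  refine ⟨fun n => fun z => max (f n z) 0, ?_, ?_, ?_, ?_, ?_⟩
  · intro n
    apply (hf_fs n).subset
    intro z hz
    simp only [Function.mem_support] at hz ⊢
    intro h0
    exact hz (by rw [h0]; simp)
  · intro n z
    exact le_max_right _ _
  · intro n
    exact epair_contraction_summable (u := f n) (C := fun t => max t 0)
      (epair_self_summable_fs (hf_fs n)) posPart_lip
  · -- energies tend to zero
    have Sf : ∀ n, Summable (epair G (f n) (f n)) :=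
      fun n => epair_self_summable_fs (hf_fs n)
    have hqe_le_qf : ∀ n, ∑' p, epair G (fun z => max (f n z) 0) (fun z => max (f n z) 0) p
        ≤ ∑' p, epair G (f n) (f n) p :=
      fun n => tsum_epair_contraction_le (u := f n) (C := fun t => max t 0)
        (Sf n) posPart_lip
    have htri : ∀ n, Real.sqrt (∑' p, epair G (f n) (f n) p)
        ≤ Real.sqrt (∑' p, epair G (h n) (h n) p) + Real.sqrt (1 / (n + 1)) := by
      intro n
      refine (sqrt_tsum_triangle hc (Sh n) (Sdiff n)).trans ?_
      apply add_le_add_right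
      exact Real.sqrt_le_sqrt (hqdiff n)
    have E1 : ∀ᶠ n in atTop, (1:ℝ) ≤ A n := hA.eventually_ge_atTop 1
    have hβ : Tendsto (fun n : ℕ => Real.sqrt (2 * m x₀ / A n) + Real.sqrt (1 / (n + 1)))
        atTop (nhds 0) := by
      have t1 : Tendsto (fun n : ℕ => 2 * m x₀ / A n) atTop (nhds 0) :=
        Tendsto.div_atTop tendsto_const_nhds hA
      have t2 : Tendsto (fun n : ℕ => (1:ℝ) / (n + 1)) atTop (nhds 0) :=
        tendsto_one_div_add_atTop_nhds_zero_nat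
      have := (sqrt_tendsto_zero t1).add (sqrt_tendsto_zero t2)
      rwa [add_zero] at this
    apply squeeze_zero' (Eventually.of_forall fun n => Real.sqrt_nonneg _) _ hβ
    filter_upwards [E1] with n h1
    have hApos : (0:ℝ) < A n := lt_of_lt_of_le one_pos h1
    have hqh_le : ∑' p, epair G (h n) (h n) p ≤ 2 * m x₀ / A n := by
      rw [hqh_eq n]
      have h2 := hqg n
      have h3 : 0 ≤ ∑' p, epair G (g n) (g n) p := tsum_nonneg (epair_nonneg_self G _)
      rw [div_eq_mul_inv]
      have hinv : (0:ℝ) < (A n)⁻¹ := inv_pos.2 hApos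
      calc (A n)⁻¹ * (A n)⁻¹ * ∑' p, epair G (g n) (g n) p
          ≤ (A n)⁻¹ * (A n)⁻¹ * (2 * (A n * m x₀)) := by
            apply mul_le_mul_of_nonneg_left h2 (by positivity)
      _ = (2 * m x₀) * ((A n)⁻¹ * ((A n)⁻¹ * A n)) := by ring
      _ = 2 * m x₀ * (A n)⁻¹ := by
            rw [inv_mul_cancel₀ (ne_of_gt hApos), mul_one]
    calc Real.sqrt (∑' p, epair G (fun z => max (f n z) 0) (fun z => max (f n z) 0) p)
        ≤ Real.sqrt (∑' p, epair G (f n) (f n) p) := Real.sqrt_le_sqrt (hqe_le_qf n)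
    _ ≤ Real.sqrt (∑' p, epair G (h n) (h n) p) + Real.sqrt (1 / (n + 1)) := htri n
    _ ≤ Real.sqrt (2 * m x₀ / A n) + Real.sqrt (1 / (n + 1)) := by
        apply add_le_add_left
        exact Real.sqrt_le_sqrt hqh_le
  · -- pointwise lower bound
    intro z
    have hcz : 0 < S.T 1 (dirac x₀) z :=
      hpi 1 one_pos (dirac x₀) (dirac_memL2 m x₀) (dirac_nonneg x₀) (dirac_ne_zero x₀) z
    set ρ : ℝ := Real.exp (-1) * S.T 1 (dirac x₀) z / 2 with hρ_def
    have hρ : 0 < ρ := by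
      have := Real.exp_pos (-1)
      positivity
    refine ⟨ρ, hρ, ?_⟩
    have E1 : ∀ᶠ n in atTop, (1:ℝ) ≤ A n := hA.eventually_ge_atTop 1
    have hτ : Tendsto (fun n : ℕ => Real.sqrt (1 / ((n + 1) * m z))) atTop (nhds 0) := by
      apply sqrt_tendsto_zero
      have t2 : Tendsto (fun n : ℕ => (1:ℝ) / (n + 1)) atTop (nhds 0) :=
        tendsto_one_div_add_atTop_nhds_zero_nat
      have := t2.mul_const (1 / m z)
      rw [zero_mul] at this
      refine this.congr fun n => ?_
      field_simp
    have E2 : ∀ᶠ n : ℕ in atTop, Real.sqrt (1 / (((n:ℝ) + 1) * m z)) < ρ :=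
      hτ.eventually_lt_const hρ
    filter_upwards [E1, E2] with n h1 h2
    have hApos : (0:ℝ) < A n := lt_of_lt_of_le one_pos h1
    -- Harnack lower bound on h n z
    have hhar := R_harnack S (alpha_pos n) x₀ x₀ z
    rw [← ENNReal.ofReal_mul
      (mul_nonneg (Real.exp_pos _).le (S.T_pos 1 one_pos _ (dirac_nonneg x₀) z))] at hhar
    have hreal : Real.exp (-(1 / (n + 1))) * S.T 1 (dirac x₀) z * A n ≤ g n z :=
      (ENNReal.ofReal_le_ofReal_iff (hg_nonneg n z)).1 hhar
    have hhz : Real.exp (-(1:ℝ)) * S.T 1 (dirac x₀) z ≤ h n z := by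
      have hexp : Real.exp (-(1:ℝ)) ≤ Real.exp (-(1 / ((n:ℝ) + 1))) := by
        apply Real.exp_le_exp.2
        have h3 : (1:ℝ) / (n + 1) ≤ 1 := by
          rw [div_le_one (by positivity)]
          have : (0:ℝ) ≤ n := Nat.cast_nonneg n
          linarith
        linarith
      have h4 : Real.exp (-(1:ℝ)) * S.T 1 (dirac x₀) z * A n ≤ g n z := by
        calc Real.exp (-(1:ℝ)) * S.T 1 (dirac x₀) z * A n
            ≤ Real.exp (-(1 / ((n:ℝ) + 1))) * S.T 1 (dirac x₀) z * A n := by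
              apply mul_le_mul_of_nonneg_right
                (mul_le_mul_of_nonneg_right hexp hcz.le) hApos.le
        _ ≤ g n z := hreal
      simp only [hh_def]
      rw [le_inv_mul_iff₀ hApos]
      calc A n * (Real.exp (-(1:ℝ)) * S.T 1 (dirac x₀) z)
          = Real.exp (-(1:ℝ)) * S.T 1 (dirac x₀) z * A n := by ring
      _ ≤ g n z := h4
    -- approximation lower bound
    have hfz : h n z - Real.sqrt (1 / ((n + 1) * m z)) ≤ f n z := by
      have hp := hptdiff n z
      have hsq : (h n z - f n z) ^ 2 ≤ 1 / ((n + 1) * m z) := by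
        rw [le_div_iff₀ (by
          have := hm z
          positivity : (0:ℝ) < ((n:ℝ) + 1) * m z)]
        calc (h n z - f n z) ^ 2 * (((n:ℝ) + 1) * m z)
            = ((h n z - f n z) ^ 2 * m z) * ((n:ℝ) + 1) := by ring
        _ ≤ (1 / ((n:ℝ) + 1)) * ((n:ℝ) + 1) :=
            mul_le_mul_of_nonneg_right hp (by positivity)
        _ = 1 := by field_simp
      have habs : |h n z - f n z| ≤ Real.sqrt (1 / ((n + 1) * m z)) := by
        rw [← Real.sqrt_sq_eq_abs]
        exact Real.sqrt_le_sqrt hsq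
      have := (abs_le.1 habs).2
      linarith
    have hτρ : Real.sqrt (1 / ((n + 1) * m z)) ≤ ρ := h2.le
    have h2ρ : 2 * ρ = Real.exp (-1) * S.T 1 (dirac x₀) z := by
      rw [hρ_def]
      ring
    calc ρ = 2 * ρ - ρ := by ring
    _ ≤ h n z - Real.sqrt (1 / ((n + 1) * m z)) := by
        rw [h2ρ]
        exact sub_le_sub hhz hτρ
    _ ≤ f n z := hfz
    _ ≤ max (f n z) 0 := le_max_left _ _

end RSH

namespace RSH
open WeightedGraph MeasureTheory Filter
open scoped Classical ENNReal

variable {V : Type*} {G : WeightedGraph V} {m : V → ℝ}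

lemma direction_mp (G : WeightedGraph V) (m : V → ℝ) (hm : ∀ x, 0 < m x)
    (hconn : G.Connected) (hc : ∀ x, G.c x = 0) (S : FormSetup G m)
    (hdom : S.dom = G.regDom m)
    (hpi : ∀ t : ℝ, 0 < t → ∀ f : V → ℝ, MemL2 m f → (∀ x, 0 ≤ f x) → f ≠ 0 →
      ∀ y, 0 < S.T t f y)
    (hgreen : ∀ x y, S.green x y = ⊤) (u : V → ℝ) (hu : G.FiniteEnergy u)
    (hsh : ∀ x, 0 ≤ G.formalL m u x) : ∀ x y, u x = u y := by
  intro x y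
  obtain ⟨e, he_fs, he_nonneg, Se, hse, hlow⟩ := null_seq hm hc S hdom hpi x (hgreen x x)
  have Su := (finiteEnergy_iff hc).1 hu
  have hφ : ∀ z, 0 ≤ lap G u z := by
    intro z
    rw [lap_eq_formalL hc m hm]
    exact mul_nonneg (hm z).le (hsh z)
  -- STEP A: u is harmonic
  have hlap0 : ∀ z, lap G u z = 0 := by
    intro z
    obtain ⟨ρ, hρ, hev⟩ := hlow z
    have hQle : ∀ n, G.energyBilin u (e n)
        ≤ Real.sqrt (G.energyBilin u u) * Real.sqrt (∑' p, epair G (e n) (e n) p) := by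
      intro n
      refine (energyBilin_le_sqrt hc Su (Se n)).trans ?_
      apply mul_le_mul_of_nonneg_left _ (Real.sqrt_nonneg _)
      apply Real.sqrt_le_sqrt
      rw [energyBilin_eq hc _ _]
      have h0 : 0 ≤ ∑' p, epair G (e n) (e n) p := tsum_nonneg (epair_nonneg_self G _)
      linarith
    have hsingle : ∀ n, lap G u z * e n z ≤ G.energyBilin u (e n) := by
      intro n
      rw [green_formula hc Su (he_fs n)]
      by_cases hz : e n z = 0
      · rw [hz, mul_zero]
        exact Finset.sum_nonneg fun z' _ => mul_nonneg (he_nonneg n z') (hφ z')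
      · have hmem : z ∈ (he_fs n).toFinset := (he_fs n).mem_toFinset.2 hz
        have h1 := Finset.single_le_sum (f := fun z' => e n z' * lap G u z')
          (fun z' _ => mul_nonneg (he_nonneg n z') (hφ z')) hmem
        have h1' : e n z * lap G u z ≤ ∑ z' ∈ (he_fs n).toFinset, e n z' * lap G u z' := h1
        linarith
    have hev2 : ∀ᶠ n in atTop, lap G u z * ρ
        ≤ Real.sqrt (G.energyBilin u u) * Real.sqrt (∑' p, epair G (e n) (e n) p) := by
      filter_upwards [hev] with n hn
      calc lap G u z * ρ ≤ lap G u z * e n z := mul_le_mul_of_nonneg_left hn (hφ z)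
      _ ≤ _ := (hsingle n).trans (hQle n)
    have htend : Tendsto (fun n => Real.sqrt (G.energyBilin u u)
        * Real.sqrt (∑' p, epair G (e n) (e n) p)) atTop (nhds 0) := by
      have := hse.const_mul (Real.sqrt (G.energyBilin u u))
      rwa [mul_zero] at this
    have hfin : lap G u z * ρ ≤ 0 := ge_of_tendsto htend hev2
    have h1 : lap G u z ≤ 0 := by nlinarith
    exact le_antisymm h1 (hφ z)
  -- STEP B: u is constant on edges
  have hadj : ∀ a b : V, 0 < G.b a b → u a = u b := by
    intro a b hab
    set k : ℝ := max |u a| |u b| with hk_def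
    have hk0 : 0 ≤ k := le_trans (abs_nonneg _) (le_max_left _ _)
    set uk : V → ℝ := fun t => clamp k (u t) with huk_def
    have Suk : Summable (epair G uk uk) :=
      epair_contraction_summable (u := u) (C := clamp k) Su (clamp_lip k)
    have hw_fs : ∀ n, (Function.support (fun x' => e n x' * uk x')).Finite := by
      intro n
      apply (he_fs n).subset
      intro x' hx'
      simp only [Function.mem_support] at hx' ⊢
      intro h0
      exact hx' (by rw [h0, zero_mul])
    have hw0 : ∀ n, G.energyBilin u (fun x' => e n x' * uk x') = 0 := by
      intro n
      rw [green_formula hc Su (hw_fs n)]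
      apply Finset.sum_eq_zero
      intro z _
      rw [hlap0 z, mul_zero]
    -- T1 and T2
    have hT1_nonneg : ∀ n (p : V × V), 0 ≤ epair G u uk p * e n p.1 := by
      intro n p
      apply mul_nonneg _ (he_nonneg n p.1)
      unfold epair
      rw [mul_assoc]
      apply mul_nonneg (G.b_nonneg _ _)
      exact mono_diff_nonneg (clamp_monotone k) (u p.1) (u p.2)
    have hT1_sum : ∀ n, Summable fun p : V × V => epair G u uk p * e n p.1 := by
      intro n
      obtain ⟨M, hM0, hMb⟩ := fs_bounded (he_fs n)
      have hbd : ∀ p : V × V, |epair G u uk p * e n p.1| ≤ M * epair G u u p := by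
        intro p
        rw [abs_mul]
        have h1 : |epair G u uk p| ≤ epair G u u p := by
          have h2 : |uk p.1 - uk p.2| ≤ |u p.1 - u p.2| := clamp_lip k _ _
          calc |epair G u uk p|
              = G.b p.1 p.2 * |u p.1 - u p.2| * |uk p.1 - uk p.2| := by
                unfold epair
                rw [abs_mul, abs_mul, abs_of_nonneg (G.b_nonneg _ _)]
          _ ≤ G.b p.1 p.2 * |u p.1 - u p.2| * |u p.1 - u p.2| :=
              mul_le_mul_of_nonneg_left h2
                (mul_nonneg (G.b_nonneg _ _) (abs_nonneg _))
          _ = epair G u u p := by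
              rw [epair_self_eq, ← sq_abs]
              ring
        have h4 : |e n p.1| ≤ M := hMb p.1
        calc |epair G u uk p| * |e n p.1| ≤ epair G u u p * M :=
          mul_le_mul h1 h4 (abs_nonneg _) (epair_nonneg_self G u p)
        _ = M * epair G u u p := by ring
      apply Summable.of_abs
      exact Summable.of_nonneg_of_le (fun p => abs_nonneg _) hbd (Su.mul_left M)
    have habsS : ∀ n, Summable fun p : V × V =>
        G.b p.1 p.2 * |u p.1 - u p.2| * |e n p.1 - e n p.2| := by
      intro n
      apply cs_summable (fun p => G.b_nonneg _ _)
      · exact Su.congr fun p => by rw [epair_self_eq, sq_abs]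
      · exact (Se n).congr fun p => by rw [epair_self_eq, sq_abs]
    have hT2_bd : ∀ n (p : V × V),
        |G.b p.1 p.2 * (u p.1 - u p.2) * (e n p.1 - e n p.2) * uk p.2|
          ≤ k * (G.b p.1 p.2 * |u p.1 - u p.2| * |e n p.1 - e n p.2|) := by
      intro n p
      rw [abs_mul, abs_mul, abs_mul, abs_of_nonneg (G.b_nonneg _ _)]
      have h1 : |uk p.2| ≤ k := clamp_abs_le hk0 _
      calc G.b p.1 p.2 * |u p.1 - u p.2| * |e n p.1 - e n p.2| * |uk p.2|
          ≤ G.b p.1 p.2 * |u p.1 - u p.2| * |e n p.1 - e n p.2| * k := by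
            apply mul_le_mul_of_nonneg_left h1
            exact mul_nonneg (mul_nonneg (G.b_nonneg _ _) (abs_nonneg _)) (abs_nonneg _)
      _ = k * (G.b p.1 p.2 * |u p.1 - u p.2| * |e n p.1 - e n p.2|) := by ring
    have hT2_abs_sum : ∀ n, Summable fun p : V × V =>
        |G.b p.1 p.2 * (u p.1 - u p.2) * (e n p.1 - e n p.2) * uk p.2| := by
      intro n
      exact Summable.of_nonneg_of_le (fun p => abs_nonneg _) (hT2_bd n)
        ((habsS n).mul_left k)
    have hT2_sum : ∀ n, Summable fun p : V × V =>
        G.b p.1 p.2 * (u p.1 - u p.2) * (e n p.1 - e n p.2) * uk p.2 :=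
      fun n => (hT2_abs_sum n).of_abs
    have hsplit : ∀ n (p : V × V), epair G u (fun x' => e n x' * uk x') p
        = epair G u uk p * e n p.1
          + G.b p.1 p.2 * (u p.1 - u p.2) * (e n p.1 - e n p.2) * uk p.2 := by
      intro n p
      unfold epair
      ring
    have hkey : ∀ n, (∑' p : V × V, epair G u uk p * e n p.1)
        = - ∑' p : V × V, G.b p.1 p.2 * (u p.1 - u p.2) * (e n p.1 - e n p.2) * uk p.2 := by
      intro n
      have h0 := hw0 n
      rw [energyBilin_eq hc _ _] at h0
      have h1 : (∑' p : V × V, epair G u (fun x' => e n x' * uk x') p)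
          = (∑' p : V × V, epair G u uk p * e n p.1)
            + ∑' p : V × V, G.b p.1 p.2 * (u p.1 - u p.2) * (e n p.1 - e n p.2) * uk p.2 := by
        rw [← Summable.tsum_add (hT1_sum n) (hT2_sum n)]
        exact tsum_congr (hsplit n)
      rw [h1] at h0
      linarith
    -- the bound on T2 sums
    have hT2_tsum_bd : ∀ n, |∑' p : V × V,
        G.b p.1 p.2 * (u p.1 - u p.2) * (e n p.1 - e n p.2) * uk p.2|
          ≤ k * (Real.sqrt (∑' p, epair G u u p)
              * Real.sqrt (∑' p, epair G (e n) (e n) p)) := by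
      intro n
      have h1 : |∑' p : V × V, G.b p.1 p.2 * (u p.1 - u p.2) * (e n p.1 - e n p.2) * uk p.2|
          ≤ ∑' p : V × V, |G.b p.1 p.2 * (u p.1 - u p.2) * (e n p.1 - e n p.2) * uk p.2| := by
        have h0 := norm_tsum_le_tsum_norm (f := fun p : V × V =>
          G.b p.1 p.2 * (u p.1 - u p.2) * (e n p.1 - e n p.2) * uk p.2)
          ((hT2_abs_sum n).congr fun p => (Real.norm_eq_abs _).symm)
        simp only [Real.norm_eq_abs] at h0
        exact h0
      refine h1.trans ?_
      have h2 : (∑' p : V × V, |G.b p.1 p.2 * (u p.1 - u p.2) * (e n p.1 - e n p.2) * uk p.2|)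
          ≤ ∑' p : V × V, k * (G.b p.1 p.2 * |u p.1 - u p.2| * |e n p.1 - e n p.2|) :=
        Summable.tsum_le_tsum (hT2_bd n) (hT2_abs_sum n) ((habsS n).mul_left k)
      refine h2.trans ?_
      rw [tsum_mul_left]
      apply mul_le_mul_of_nonneg_left _ hk0
      exact tsum_abs_cs Su (Se n)
    -- T1 sums tend to zero
    have hT1_tend : Tendsto (fun n => ∑' p : V × V, epair G u uk p * e n p.1) atTop
        (nhds 0) := by
      have htend0 := hse.const_mul (k * Real.sqrt (∑' p, epair G u u p))
      rw [mul_zero] at htend0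
      apply squeeze_zero_norm' _ htend0
      · apply Eventually.of_forall
        intro n
        rw [Real.norm_eq_abs, hkey n, abs_neg]
        calc |∑' p : V × V, G.b p.1 p.2 * (u p.1 - u p.2) * (e n p.1 - e n p.2) * uk p.2|
            ≤ k * (Real.sqrt (∑' p, epair G u u p)
                * Real.sqrt (∑' p, epair G (e n) (e n) p)) := hT2_tsum_bd n
        _ = k * Real.sqrt (∑' p, epair G u u p)
              * Real.sqrt (∑' p, epair G (e n) (e n) p) := by ring
    -- single term estimate and conclusion
    obtain ⟨ρ, hρ, hev⟩ := hlow a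
    have hsingle : ∀ n, epair G u uk (a, b) * e n a
        ≤ ∑' p : V × V, epair G u uk p * e n p.1 :=
      fun n => Summable.le_tsum (hT1_sum n) (a, b) fun p _ => hT1_nonneg n p
    have hev2 : ∀ᶠ n in atTop, epair G u uk (a, b) * ρ
        ≤ ∑' p : V × V, epair G u uk p * e n p.1 := by
      filter_upwards [hev] with n hn
      refine le_trans ?_ (hsingle n)
      apply mul_le_mul_of_nonneg_left hn
      unfold epair
      rw [mul_assoc]
      apply mul_nonneg (G.b_nonneg _ _)
      exact mono_diff_nonneg (clamp_monotone k) (u a) (u b)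
    have hle0 : epair G u uk (a, b) * ρ ≤ 0 := ge_of_tendsto hT1_tend hev2
    have hnn : 0 ≤ epair G u uk (a, b) := by
      unfold epair
      rw [mul_assoc]
      apply mul_nonneg (G.b_nonneg _ _)
      exact mono_diff_nonneg (clamp_monotone k) (u a) (u b)
    have hzero : epair G u uk (a, b) = 0 := by nlinarith
    have huka : uk a = u a := clamp_eq_of_abs_le (le_max_left _ _)
    have hukb : uk b = u b := clamp_eq_of_abs_le (le_max_right _ _)
    have : G.b a b * (u a - u b) * (u a - u b) = 0 := by
      have h5 : epair G u uk (a, b) = G.b a b * (u a - u b) * (u a - u b) := by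
        unfold epair
        rw [huka, hukb]
      rw [← h5, hzero]
    have h6 : (u a - u b) ^ 2 = 0 := by nlinarith [sq_nonneg (u a - u b)]
    have h7 : u a - u b = 0 := by
      exact pow_eq_zero_iff (by norm_num) |>.1 h6
    linarith
  -- STEP C: connectivity
  obtain ⟨n, p, hp0, hpn, hedge⟩ := hconn x y
  have hpath : ∀ j, j ≤ n → u x = u (p j) := by
    intro j
    induction j with
    | zero => intro _; rw [hp0]
    | succ i ih =>
      intro hle
      have hi : i ≤ n := le_trans (Nat.le_succ i) hle
      have hlt : i < n := lt_of_lt_of_le (Nat.lt_succ_self i) hle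
      rw [ih hi]
      exact hadj _ _ (hedge i hlt)
  rw [← hpn]
  exact hpath n le_rfl

end RSH
/-- superharmonic characterization of recurrence: the regular Dirichlet
form of a connected graph `(b,0)` is recurrent iff every superharmonic function of
finite energy is constant. -/
theorem recurrence_iff_superharmonic_constant {V : Type*} [Countable V]
    (G : WeightedGraph V) (m : V → ℝ) (hm : ∀ x, 0 < m x) (hconn : G.Connected)
    (hc : ∀ x, G.c x = 0) (S : FormSetup G m) (hdom : S.dom = G.regDom m)
    (hpi : ∀ t : ℝ, 0 < t → ∀ f : V → ℝ, MemL2 m f → (∀ x, 0 ≤ f x) → f ≠ 0 →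
      ∀ y, 0 < S.T t f y) :
    (∀ x y, S.green x y = ⊤) ↔
      ∀ u : V → ℝ, G.FiniteEnergy u → (∀ x, 0 ≤ G.formalL m u x) →
        ∀ x y, u x = u y := by
  constructor
  · intro hgreen u hu hsh
    exact RSH.direction_mp G m hm hconn hc S hdom hpi hgreen u hu hsh
  · intro hsup
    exact RSH.direction_mpr G m hm hc S hdom hpi hsup
end

section
/- For (b,0) connected and m(V) < ∞, the following are equivalent: (i) Q^{(D)} is recurrent; (ii) Q^{(D)} is stochastically complete, i.e. (L^{(D)}+1)^{-1}1 = 1 (resolvent extended to ℓ^∞); (iii) Q^{(D)} = Q^{(N)}, i.e. the regular and Neumann Dirichlet forms coincide. -/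
open scoped ENNReal NNReal BigOperators
open MeasureTheory Filter

section FMAux

open Set Real

namespace FMAux

variable {V : Type*} {m : V → ℝ}

theorem summable_mul_m (hm : ∀ x, 0 < m x) {u v : V → ℝ} (hu : MemL2 m u) (hv : MemL2 m v) :
    Summable fun x => u x * v x * m x := by
  have habs : Summable fun x => |u x * v x * m x| := by
    refine Summable.of_nonneg_of_le (fun x => abs_nonneg _) (fun x => ?_)
      (((hu.add hv)).mul_left (1 / 2 : ℝ))
    have hmx := (hm x).le
    have h1 : |u x * v x * m x| = |u x| * |v x| * m x := by
      rw [abs_mul, abs_mul, abs_of_nonneg hmx]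
    rw [h1]
    have h2 : |u x| * |v x| ≤ 1 / 2 * (u x ^ 2 + v x ^ 2) := by
      nlinarith [sq_nonneg (|u x| - |v x|), sq_abs (u x), sq_abs (v x)]
    nlinarith [sq_nonneg (u x), sq_nonneg (v x)]
  exact habs.of_abs

theorem MemL2.sub2 (hm : ∀ x, 0 < m x) {u v : V → ℝ} (hu : MemL2 m u) (hv : MemL2 m v) :
    MemL2 m fun x => u x - v x := by
  refine Summable.of_nonneg_of_le (fun x => ?_) (fun x => ?_)
    (((hu.mul_left 2).add (hv.mul_left 2)))
  · exact mul_nonneg (sq_nonneg _) (hm x).le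
  · show (u x - v x) ^ 2 * m x ≤ 2 * (u x ^ 2 * m x) + 2 * (v x ^ 2 * m x)
    have hmx := (hm x).le
    have : (u x - v x) ^ 2 ≤ 2 * u x ^ 2 + 2 * v x ^ 2 := by nlinarith [sq_nonneg (u x + v x)]
    nlinarith

theorem MemL2.add2 (hm : ∀ x, 0 < m x) {u v : V → ℝ} (hu : MemL2 m u) (hv : MemL2 m v) :
    MemL2 m fun x => u x + v x := by
  have := MemL2.sub2 hm hu (show MemL2 m fun x => -v x by simpa [MemL2, neg_sq] using hv)
  simpa [sub_neg_eq_add] using this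

theorem memL2_one (hfin : Summable m) : MemL2 m fun _ : V => (1 : ℝ) := by
  simpa [MemL2] using hfin

theorem memL2_of_le (hm : ∀ x, 0 < m x) {u v : V → ℝ} (hv : MemL2 m v)
    (h : ∀ x, |u x| ≤ |v x|) : MemL2 m u := by
  refine Summable.of_nonneg_of_le (fun x => mul_nonneg (sq_nonneg _) (hm x).le)
    (fun x => ?_) hv
  have := h x
  have h2 : u x ^ 2 ≤ v x ^ 2 := by
    have := sq_le_sq' (neg_le_of_abs_le (by simpa using (abs_le_abs_of_nonneg (abs_nonneg _) this)))
      (le_of_abs_le this)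
    nlinarith [sq_abs (u x), sq_abs (v x), abs_nonneg (u x), abs_nonneg (v x), h x]
  exact mul_le_mul_of_nonneg_right h2 (hm x).le

theorem memL2_of_finsupp (hm : ∀ x, 0 < m x) {u : V → ℝ} (hu : (Function.support u).Finite) :
    MemL2 m u := by
  refine summable_of_ne_finset_zero (s := hu.toFinset) fun x hx => ?_
  have : u x = 0 := by
    by_contra h
    exact hx (hu.mem_toFinset.mpr h)
  simp [this]

open scoped Classical in
theorem memL2_delta (hm : ∀ x, 0 < m x) (x₀ : V) :
    MemL2 m fun z => if z = x₀ then (1 : ℝ) else 0 := by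
  classical
  refine memL2_of_finsupp hm (Set.Finite.subset (Set.finite_singleton x₀) ?_)
  intro z hz
  rcases eq_or_ne z x₀ with h | h
  · simp [h]
  · simp [Function.mem_support, h] at hz

/-- Cauchy-Schwarz for weighted sums of nonnegative functions. -/
theorem tsum_cs (hm : ∀ x, 0 < m x) {f g : V → ℝ} (hf0 : ∀ x, 0 ≤ f x) (hg0 : ∀ x, 0 ≤ g x)
    (hf : MemL2 m f) (hg : MemL2 m g) :
    ∑' x, f x * g x * m x ≤ Real.sqrt (∑' x, f x ^ 2 * m x) * Real.sqrt (∑' x, g x ^ 2 * m x) := by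
  have hAB : 0 ≤ Real.sqrt (∑' x, f x ^ 2 * m x) * Real.sqrt (∑' x, g x ^ 2 * m x) :=
    mul_nonneg (Real.sqrt_nonneg _) (Real.sqrt_nonneg _)
  have hsum : Summable fun x => f x * g x * m x := summable_mul_m hm hf hg
  refine Summable.tsum_le_of_sum_le hsum fun s => ?_
  have key : ∑ x ∈ s, f x * g x * m x
      ≤ Real.sqrt (∑ x ∈ s, f x ^ 2 * m x) * Real.sqrt (∑ x ∈ s, g x ^ 2 * m x) := by
    have := Real.sum_mul_le_sqrt_mul_sqrt s (fun x => f x * Real.sqrt (m x))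
      (fun x => g x * Real.sqrt (m x))
    have h1 : ∀ x : V, f x * Real.sqrt (m x) * (g x * Real.sqrt (m x)) = f x * g x * m x := by
      intro x
      have h := Real.mul_self_sqrt (hm x).le
      linear_combination f x * g x * h
    have h2 : ∀ x : V, (f x * Real.sqrt (m x)) ^ 2 = f x ^ 2 * m x := by
      intro x
      rw [mul_pow, Real.sq_sqrt (hm x).le]
    have h3 : ∀ x : V, (g x * Real.sqrt (m x)) ^ 2 = g x ^ 2 * m x := by
      intro x
      rw [mul_pow, Real.sq_sqrt (hm x).le]
    simp only [h1, h2, h3] at this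
    exact this
  refine key.trans (mul_le_mul ?_ ?_ (Real.sqrt_nonneg _) (Real.sqrt_nonneg _))
  · exact Real.sqrt_le_sqrt (Summable.sum_le_tsum s (fun x _ => mul_nonneg (sq_nonneg _) (hm x).le) hf)
  · exact Real.sqrt_le_sqrt (Summable.sum_le_tsum s (fun x _ => mul_nonneg (sq_nonneg _) (hm x).le) hg)

/-- The pure-`b` energy sum, in `ℝ≥0∞`. -/
noncomputable def E (G : WeightedGraph V) (u : V → ℝ) : ℝ≥0∞ :=
  ∑' p : V × V, ENNReal.ofReal (G.b p.1 p.2 * (u p.1 - u p.2) ^ 2)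

theorem energy_eq {G : WeightedGraph V} (hc : ∀ x, G.c x = 0) (u : V → ℝ) :
    G.energy u = 2⁻¹ * E G u := by
  unfold WeightedGraph.energy E
  simp [hc, one_div]

theorem fe_iff {G : WeightedGraph V} (hc : ∀ x, G.c x = 0) (u : V → ℝ) :
    G.FiniteEnergy u ↔ E G u < ⊤ := by
  unfold WeightedGraph.FiniteEnergy
  rw [energy_eq hc]
  constructor
  · intro h
    by_contra htop
    rw [not_lt, top_le_iff] at htop
    rw [htop] at h
    simp [ENNReal.mul_top] at h
  · intro h
    exact lt_of_le_of_lt (mul_le_of_le_one_left zero_le (by norm_num)) h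

theorem E_mono {G : WeightedGraph V} {u v : V → ℝ}
    (h : ∀ p : V × V, (u p.1 - u p.2) ^ 2 ≤ (v p.1 - v p.2) ^ 2) : E G u ≤ E G v := by
  refine ENNReal.tsum_le_tsum fun p => ENNReal.ofReal_le_ofReal ?_
  exact mul_le_mul_of_nonneg_left (h p) (G.b_nonneg _ _)

theorem E_add_le {G : WeightedGraph V} (u v : V → ℝ) :
    E G (fun x => u x + v x) ≤ 2 * E G u + 2 * E G v := by
  have key : ∀ p : V × V,
      ENNReal.ofReal (G.b p.1 p.2 * ((u p.1 + v p.1) - (u p.2 + v p.2)) ^ 2)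
        ≤ 2 * ENNReal.ofReal (G.b p.1 p.2 * (u p.1 - u p.2) ^ 2)
          + 2 * ENNReal.ofReal (G.b p.1 p.2 * (v p.1 - v p.2) ^ 2) := by
    intro p
    have hb := G.b_nonneg p.1 p.2
    have h1 : G.b p.1 p.2 * ((u p.1 + v p.1) - (u p.2 + v p.2)) ^ 2
        ≤ 2 * (G.b p.1 p.2 * (u p.1 - u p.2) ^ 2) + 2 * (G.b p.1 p.2 * (v p.1 - v p.2) ^ 2) := by
      nlinarith [sq_nonneg ((u p.1 - u p.2) - (v p.1 - v p.2)), hb,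
        sq_nonneg ((u p.1 - u p.2) + (v p.1 - v p.2))]
    calc ENNReal.ofReal (G.b p.1 p.2 * ((u p.1 + v p.1) - (u p.2 + v p.2)) ^ 2)
        ≤ ENNReal.ofReal (2 * (G.b p.1 p.2 * (u p.1 - u p.2) ^ 2)
            + 2 * (G.b p.1 p.2 * (v p.1 - v p.2) ^ 2)) := ENNReal.ofReal_le_ofReal h1
      _ = ENNReal.ofReal (2 * (G.b p.1 p.2 * (u p.1 - u p.2) ^ 2))
            + ENNReal.ofReal (2 * (G.b p.1 p.2 * (v p.1 - v p.2) ^ 2)) := by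
          rw [ENNReal.ofReal_add] <;> positivity
      _ = 2 * ENNReal.ofReal (G.b p.1 p.2 * (u p.1 - u p.2) ^ 2)
            + 2 * ENNReal.ofReal (G.b p.1 p.2 * (v p.1 - v p.2) ^ 2) := by
          rw [ENNReal.ofReal_mul (by norm_num : (0:ℝ) ≤ 2),
            ENNReal.ofReal_mul (by norm_num : (0:ℝ) ≤ 2)]
          norm_num
  calc E G (fun x => u x + v x) ≤ ∑' p : V × V,
        (2 * ENNReal.ofReal (G.b p.1 p.2 * (u p.1 - u p.2) ^ 2)
          + 2 * ENNReal.ofReal (G.b p.1 p.2 * (v p.1 - v p.2) ^ 2)) :=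
      ENNReal.tsum_le_tsum key
    _ = 2 * E G u + 2 * E G v := by
      rw [ENNReal.tsum_add, ENNReal.tsum_mul_left, ENNReal.tsum_mul_left]
      rfl

theorem E_sub_le {G : WeightedGraph V} (u v : V → ℝ) :
    E G (fun x => u x - v x) ≤ 2 * E G u + 2 * E G v := by
  have hneg : E G (fun x => -v x) = E G v := by
    unfold E
    congr 1
    funext p
    congr 1
    ring
  have := E_add_le (G := G) u (fun x => -v x)
  rw [hneg] at this
  simpa [sub_eq_add_neg] using this

theorem summable_of_E_lt_top {G : WeightedGraph V} {u : V → ℝ} (h : E G u < ⊤) :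
    Summable fun p : V × V => G.b p.1 p.2 * (u p.1 - u p.2) ^ 2 := by
  have := ENNReal.summable_toReal h.ne
  refine this.congr fun p => ?_
  rw [ENNReal.toReal_ofReal (mul_nonneg (G.b_nonneg _ _) (sq_nonneg _))]

theorem E_eq_ofReal {G : WeightedGraph V} {u : V → ℝ}
    (h : Summable fun p : V × V => G.b p.1 p.2 * (u p.1 - u p.2) ^ 2) :
    E G u = ENNReal.ofReal (∑' p : V × V, G.b p.1 p.2 * (u p.1 - u p.2) ^ 2) := by
  rw [ENNReal.ofReal_tsum_of_nonneg (fun p => mul_nonneg (G.b_nonneg _ _) (sq_nonneg _)) h]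
  rfl

theorem E_toReal {G : WeightedGraph V} {u : V → ℝ}
    (h : Summable fun p : V × V => G.b p.1 p.2 * (u p.1 - u p.2) ^ 2) :
    (E G u).toReal = ∑' p : V × V, G.b p.1 p.2 * (u p.1 - u p.2) ^ 2 := by
  rw [E_eq_ofReal h,
    ENNReal.toReal_ofReal (tsum_nonneg fun p => mul_nonneg (G.b_nonneg _ _) (sq_nonneg _))]

theorem tsum_sq_lt_top {G : WeightedGraph V} {w : V → ℝ} (hw : (Function.support w).Finite) :
    ∑' p : V × V, ENNReal.ofReal (G.b p.1 p.2 * w p.1 ^ 2) < ⊤ := by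
  classical
  have hterm : ∀ p : V × V, ENNReal.ofReal (G.b p.1 p.2 * w p.1 ^ 2)
      = ENNReal.ofReal (w p.1 ^ 2) * ENNReal.ofReal (G.b p.1 p.2) := by
    intro p
    rw [mul_comm (G.b p.1 p.2), ENNReal.ofReal_mul (sq_nonneg _)]
  simp only [hterm]
  rw [ENNReal.tsum_prod']
  have hrow : ∀ x, ∑' y, ENNReal.ofReal (w x ^ 2) * ENNReal.ofReal (G.b x y)
      = ENNReal.ofReal (w x ^ 2) * ENNReal.ofReal (∑' y, G.b x y) := by
    intro x
    rw [ENNReal.tsum_mul_left, ENNReal.ofReal_tsum_of_nonneg (G.b_nonneg x) (G.b_summable x)]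
  simp only [hrow]
  rw [tsum_eq_sum (s := hw.toFinset) (fun x hx => by
    have : w x = 0 := by
      by_contra h
      exact hx (hw.mem_toFinset.mpr h)
    simp [this])]
  exact ENNReal.sum_lt_top.mpr fun x _ => ENNReal.mul_lt_top ENNReal.ofReal_lt_top
    ENNReal.ofReal_lt_top

theorem E_finsupp {G : WeightedGraph V} {u : V → ℝ} (hu : (Function.support u).Finite) :
    E G u < ⊤ := by
  have key : ∀ p : V × V, ENNReal.ofReal (G.b p.1 p.2 * (u p.1 - u p.2) ^ 2)
      ≤ 2 * ENNReal.ofReal (G.b p.1 p.2 * u p.1 ^ 2)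
        + 2 * ENNReal.ofReal (G.b p.1 p.2 * u p.2 ^ 2) := by
    intro p
    have hb := G.b_nonneg p.1 p.2
    have h1 : G.b p.1 p.2 * (u p.1 - u p.2) ^ 2
        ≤ 2 * (G.b p.1 p.2 * u p.1 ^ 2) + 2 * (G.b p.1 p.2 * u p.2 ^ 2) := by
      nlinarith [sq_nonneg (u p.1 + u p.2), sq_nonneg (u p.1 - u p.2)]
    calc ENNReal.ofReal (G.b p.1 p.2 * (u p.1 - u p.2) ^ 2)
        ≤ ENNReal.ofReal (2 * (G.b p.1 p.2 * u p.1 ^ 2) + 2 * (G.b p.1 p.2 * u p.2 ^ 2)) :=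
          ENNReal.ofReal_le_ofReal h1
      _ = 2 * ENNReal.ofReal (G.b p.1 p.2 * u p.1 ^ 2)
            + 2 * ENNReal.ofReal (G.b p.1 p.2 * u p.2 ^ 2) := by
          rw [ENNReal.ofReal_add (by positivity) (by positivity),
            ENNReal.ofReal_mul (by norm_num : (0:ℝ) ≤ 2),
            ENNReal.ofReal_mul (by norm_num : (0:ℝ) ≤ 2)]
          norm_num
  have hswap : ∑' p : V × V, ENNReal.ofReal (G.b p.1 p.2 * u p.2 ^ 2)
      = ∑' p : V × V, ENNReal.ofReal (G.b p.1 p.2 * u p.1 ^ 2) := by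
    rw [← Equiv.tsum_eq (Equiv.prodComm V V) (fun p => ENNReal.ofReal (G.b p.1 p.2 * u p.2 ^ 2))]
    congr 1
    funext p
    simp only [Equiv.prodComm_apply, Prod.fst_swap, Prod.snd_swap]
    rw [G.b_symm]
  have hE : E G u ≤ 2 * ∑' p : V × V, ENNReal.ofReal (G.b p.1 p.2 * u p.1 ^ 2)
      + 2 * ∑' p : V × V, ENNReal.ofReal (G.b p.1 p.2 * u p.2 ^ 2) := by
    calc E G u ≤ ∑' p : V × V, (2 * ENNReal.ofReal (G.b p.1 p.2 * u p.1 ^ 2)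
        + 2 * ENNReal.ofReal (G.b p.1 p.2 * u p.2 ^ 2)) := ENNReal.tsum_le_tsum key
      _ = _ := by rw [ENNReal.tsum_add, ENNReal.tsum_mul_left, ENNReal.tsum_mul_left]
  rw [hswap] at hE
  refine lt_of_le_of_lt hE ?_
  have h1 := tsum_sq_lt_top (G := G) hu
  exact ENNReal.add_lt_top.mpr ⟨ENNReal.mul_lt_top (by norm_num) h1,
    ENNReal.mul_lt_top (by norm_num) h1⟩

theorem E_one {G : WeightedGraph V} : E G (fun _ => (1 : ℝ)) = 0 := by
  unfold E
  simp

theorem fe_sub {G : WeightedGraph V} (hc : ∀ x, G.c x = 0) {u v : V → ℝ}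
    (hu : G.FiniteEnergy u) (hv : G.FiniteEnergy v) : G.FiniteEnergy fun x => u x - v x := by
  rw [fe_iff hc] at *
  refine lt_of_le_of_lt (E_sub_le u v) ?_
  exact ENNReal.add_lt_top.mpr ⟨ENNReal.mul_lt_top (by norm_num) hu,
    ENNReal.mul_lt_top (by norm_num) hv⟩

theorem fe_one {G : WeightedGraph V} (hc : ∀ x, G.c x = 0) :
    G.FiniteEnergy fun _ : V => (1 : ℝ) := by
  rw [fe_iff hc, E_one]
  exact ENNReal.zero_lt_top

theorem fe_finsupp {G : WeightedGraph V} (hc : ∀ x, G.c x = 0) {u : V → ℝ}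
    (hu : (Function.support u).Finite) : G.FiniteEnergy u :=
  (fe_iff hc u).2 (E_finsupp hu)

theorem bilin_eq {G : WeightedGraph V} (hc : ∀ x, G.c x = 0) (u v : V → ℝ) :
    G.energyBilin u v
      = 2⁻¹ * ∑' p : V × V, G.b p.1 p.2 * (u p.1 - u p.2) * (v p.1 - v p.2) := by
  unfold WeightedGraph.energyBilin
  simp [hc, one_div]

theorem bilin_symm {G : WeightedGraph V} (u v : V → ℝ) :
    G.energyBilin u v = G.energyBilin v u := by
  unfold WeightedGraph.energyBilin
  congr 1
  · congr 2
    funext p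
    ring
  · congr 1
    funext x
    ring

theorem l2inner_comm (u v : V → ℝ) : l2inner m u v = l2inner m v u := by
  unfold l2inner
  congr 1
  funext x
  ring

open scoped Classical in
theorem l2inner_delta_right (g : V → ℝ) (x₀ : V) :
    l2inner m g (fun z => if z = x₀ then 1 else 0) = g x₀ * m x₀ := by
  unfold l2inner
  rw [tsum_eq_single x₀ (fun b hb => by simp [hb])]
  simp

theorem l2inner_sub_left {u v w : V → ℝ} (hu : Summable fun x => u x * w x * m x)
    (hv : Summable fun x => v x * w x * m x) :
    l2inner m (fun x => u x - v x) w = l2inner m u w - l2inner m v w := by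
  unfold l2inner
  rw [← Summable.tsum_sub hu hv]
  congr 1
  funext x
  ring

section SetupLemmas

variable {G : WeightedGraph V} (S : FormSetup G m)

theorem aemeas_T {f : V → ℝ} (hf : MemL2 m f) (y : V) :
    AEMeasurable (fun t => S.T t f y) (MeasureTheory.volume.restrict (Set.Ioi (0:ℝ))) :=
  (S.T_cont f hf y).aemeasurable measurableSet_Ioi

theorem lintegral_exp_Ioi {α : ℝ} (hα : 0 < α) :
    ∫⁻ t in Set.Ioi (0:ℝ), ENNReal.ofReal (Real.exp (-α * t)) = ENNReal.ofReal α⁻¹ := by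
  have hint : MeasureTheory.IntegrableOn (fun t : ℝ => Real.exp (-α * t)) (Set.Ioi 0) :=
    exp_neg_integrableOn_Ioi 0 hα
  rw [← MeasureTheory.ofReal_integral_eq_lintegral_ofReal hint
    (Filter.Eventually.of_forall fun t => (Real.exp_pos _).le)]
  congr 1
  have h := MeasureTheory.integral_comp_mul_left_Ioi (fun s => Real.exp (-s)) 0 hα
  simp only [mul_zero, integral_exp_neg_Ioi_zero, smul_eq_mul, mul_one] at h
  rw [← h]
  congr 1
  funext t
  rw [neg_mul]

theorem T_markov_one {t : ℝ} (ht : 0 < t) (y : V) :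
    0 ≤ S.T t (fun _ => (1:ℝ)) y ∧ S.T t (fun _ => (1:ℝ)) y ≤ 1 :=
  S.T_markov t ht _ (fun _ => ⟨zero_le_one, le_rfl⟩) y

theorem R_le_inv (hfin : Summable m) {α : ℝ} (hα : 0 < α) (y : V) :
    S.R α (fun _ => (1:ℝ)) y ≤ α⁻¹ := by
  have hlap := S.R_laplace α hα (fun _ => 1) (memL2_one hfin) (fun _ => zero_le_one) y
  have hle : (∫⁻ t in Set.Ioi (0:ℝ),
      ENNReal.ofReal (Real.exp (-α * t) * S.T t (fun _ => (1:ℝ)) y))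
      ≤ ∫⁻ t in Set.Ioi (0:ℝ), ENNReal.ofReal (Real.exp (-α * t)) := by
    refine MeasureTheory.lintegral_mono_ae ((MeasureTheory.ae_restrict_iff'
      measurableSet_Ioi).2 (Filter.Eventually.of_forall fun t ht => ?_))
    exact ENNReal.ofReal_le_ofReal
      (mul_le_of_le_one_right (Real.exp_pos _).le (T_markov_one S ht y).2)
  rw [← hlap, lintegral_exp_Ioi hα] at hle
  exact (ENNReal.ofReal_le_ofReal_iff (inv_nonneg.2 hα.le)).1 hle

theorem T_one_anti (s r : ℝ) (hs : 0 < s) (hr : 0 < r) (y : V) :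
    S.T (s + r) (fun _ => (1:ℝ)) y ≤ S.T s (fun _ => (1:ℝ)) y := by
  have hmark := fun x => (T_markov_one S hr x).2
  have hfun : (fun x => (1:ℝ) - S.T r (fun _ => (1:ℝ)) x)
      = (fun _ => (1:ℝ)) - S.T r (fun _ => (1:ℝ)) := by
    funext x
    simp
  have hpos := S.T_pos s hs (fun x => 1 - S.T r (fun _ => (1:ℝ)) x)
    (fun x => sub_nonneg.2 (hmark x)) y
  rw [hfun, (S.T_linear s).map_sub] at hpos
  simp only [Pi.sub_apply] at hpos
  rw [S.T_semigroup s r hs hr]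
  linarith

/-- Conservativeness from `(L+1)⁻¹ 1 = 1`. -/
theorem Tcons (hfin : Summable m) (hR : ∀ y, S.R 1 (fun _ => (1:ℝ)) y = 1) :
    ∀ t : ℝ, 0 < t → ∀ y, S.T t (fun _ => (1:ℝ)) y = 1 := by
  intro t0 ht0 y
  have hlap := S.R_laplace 1 one_pos (fun _ => 1) (memL2_one hfin) (fun _ => zero_le_one) y
  rw [hR y] at hlap
  have hexp : (∫⁻ t in Set.Ioi (0:ℝ), ENNReal.ofReal (Real.exp (-1 * t))) = 1 := by
    rw [lintegral_exp_Ioi one_pos]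
    norm_num
  set Gf := fun t => ENNReal.ofReal (Real.exp (-1 * t) * S.T t (fun _ => (1:ℝ)) y) with hGf
  have hGmeas : AEMeasurable Gf (MeasureTheory.volume.restrict (Set.Ioi (0:ℝ))) := by
    refine AEMeasurable.ennreal_ofReal (AEMeasurable.mul ?_ (aemeas_T S (memL2_one hfin) y))
    exact (Real.measurable_exp.comp (measurable_id.const_mul (-1))).aemeasurable
  have hGle : Gf ≤ᵐ[MeasureTheory.volume.restrict (Set.Ioi (0:ℝ))]
      fun t => ENNReal.ofReal (Real.exp (-1 * t)) := by
    refine (MeasureTheory.ae_restrict_iff' measurableSet_Ioi).2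
      (Filter.Eventually.of_forall fun t ht => ?_)
    exact ENNReal.ofReal_le_ofReal
      (mul_le_of_le_one_right (Real.exp_pos _).le (T_markov_one S ht y).2)
  have hGint : (∫⁻ t in Set.Ioi (0:ℝ), Gf t) = 1 := by
    rw [← hlap]
    simp
  have hsub : (∫⁻ t in Set.Ioi (0:ℝ), (ENNReal.ofReal (Real.exp (-1 * t)) - Gf t)) = 0 := by
    rw [MeasureTheory.lintegral_sub' hGmeas (by rw [hGint]; exact ENNReal.one_ne_top) hGle,
      hexp, hGint, tsub_self]
  have hae : ∀ᵐ t ∂(MeasureTheory.volume.restrict (Set.Ioi (0:ℝ))),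
      ENNReal.ofReal (Real.exp (-1 * t)) - Gf t = 0 := by
    have hmeas : AEMeasurable (fun t => ENNReal.ofReal (Real.exp (-1 * t)) - Gf t)
        (MeasureTheory.volume.restrict (Set.Ioi (0:ℝ))) := by
      refine AEMeasurable.sub ?_ hGmeas
      exact (Real.measurable_exp.comp (measurable_id.const_mul (-1))).ennreal_ofReal.aemeasurable
    exact (MeasureTheory.lintegral_eq_zero_iff' hmeas).1 hsub
  have key : ∀ᵐ t ∂(MeasureTheory.volume.restrict (Set.Ioi (0:ℝ))),
      S.T t (fun _ => (1:ℝ)) y = 1 := by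
    filter_upwards [hae, MeasureTheory.ae_restrict_mem measurableSet_Ioi] with t ht hmem
    have hT01 := T_markov_one S hmem y
    have hle2 : ENNReal.ofReal (Real.exp (-1 * t))
        ≤ ENNReal.ofReal (Real.exp (-1 * t) * S.T t (fun _ => (1:ℝ)) y) :=
      tsub_eq_zero_iff_le.1 ht
    have hle3 : Real.exp (-1 * t) ≤ Real.exp (-1 * t) * S.T t (fun _ => (1:ℝ)) y :=
      (ENNReal.ofReal_le_ofReal_iff (mul_nonneg (Real.exp_pos _).le hT01.1)).1 hle2
    have h1le : (1:ℝ) ≤ S.T t (fun _ => (1:ℝ)) y := by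
      have hp := Real.exp_pos (-1 * t)
      nlinarith
    linarith [hT01.2]
  have hbad : (MeasureTheory.volume.restrict (Set.Ioi (0:ℝ)))
      {t | ¬ S.T t (fun _ => (1:ℝ)) y = 1} = 0 := MeasureTheory.ae_iff.1 key
  obtain ⟨s, hs1, hs2⟩ : ∃ s ∈ Set.Ioc t0 (t0 + 1), S.T s (fun _ => (1:ℝ)) y = 1 := by
    by_contra hcon
    push_neg at hcon
    have hsubset : Set.Ioc t0 (t0 + 1) ⊆ {t | ¬ S.T t (fun _ => (1:ℝ)) y = 1} :=
      fun s hs => hcon s hs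
    have hle4 := MeasureTheory.measure_mono
      (μ := MeasureTheory.volume.restrict (Set.Ioi (0:ℝ))) hsubset
    rw [hbad] at hle4
    have : (MeasureTheory.volume.restrict (Set.Ioi (0:ℝ))) (Set.Ioc t0 (t0 + 1)) = 1 := by
      have hss : Set.Ioc t0 (t0 + 1) ⊆ Set.Ioi (0:ℝ) := fun s hs => lt_trans ht0 hs.1
      rw [MeasureTheory.Measure.restrict_apply measurableSet_Ioc,
        Set.inter_eq_left.2 hss, Real.volume_Ioc]
      norm_num
    rw [this] at hle4
    exact absurd (le_antisymm hle4 zero_le) one_ne_zero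
  have hanti := T_one_anti S t0 (s - t0) ht0 (by linarith [hs1.1]) y
  rw [add_sub_cancel] at hanti
  rw [hs2] at hanti
  linarith [(T_markov_one S ht0 y).2]

theorem SC_to_B' (hfin : Summable m) (hsc : S.StochComplete) :
    ∀ y, S.R 1 (fun _ => (1:ℝ)) y = 1 := by
  intro y
  have h := hsc (fun _ => fun _ => 1) (fun _ => memL2_one hfin)
    (fun n x => ⟨zero_le_one, le_rfl, le_rfl⟩) (fun x => tendsto_const_nhds) y
  exact tendsto_nhds_unique tendsto_const_nhds h

open scoped Classical in
theorem B'_to_SC (hm : ∀ x, 0 < m x) (hfin : Summable m)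
    (hR : ∀ y, S.R 1 (fun _ => (1:ℝ)) y = 1) : S.StochComplete := by
  intro f hfL2 hfcond hften x
  set g : ℕ → V → ℝ := fun n => fun z => (1:ℝ) - f n z with hg
  have hgL2 : ∀ n, MemL2 m (g n) := fun n => MemL2.sub2 hm (memL2_one hfin) (hfL2 n)
  have hg01 : ∀ n z, 0 ≤ g n z ∧ g n z ≤ 1 := fun n z =>
    ⟨sub_nonneg.2 (hfcond n z).2.2, by have := (hfcond n z).1; simp only [hg]; linarith⟩
  have hsplit : ∀ n, S.R 1 (f n) x = 1 - S.R 1 (g n) x := by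
    intro n
    have h1 : (fun _ => (1:ℝ)) = f n + g n := by
      funext z
      simp [hg]
    have happ : S.R 1 (fun _ => (1:ℝ)) = S.R 1 (f n) + S.R 1 (g n) := by
      rw [h1, (S.R_linear 1).map_add]
    have h2 := congrFun happ x
    rw [hR x] at h2
    simp only [Pi.add_apply] at h2
    linarith
  have hnn : ∀ n, 0 ≤ S.R 1 (g n) x := fun n =>
    S.R_pos 1 one_pos (g n) (fun z => (hg01 n z).1) x
  have hTto : ∀ t : ℝ, 0 < t → Tendsto (fun n => S.T t (g n) x) atTop (nhds 0) := by
    intro t ht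
    have hδ : MemL2 m (fun z => if z = x then (1:ℝ) else 0) := memL2_delta hm x
    set dlt : V → ℝ := fun z => if z = x then (1:ℝ) else 0 with hdlt
    have hTδ : MemL2 m (S.T t dlt) := S.T_l2 t ht dlt hδ
    have hkey : ∀ n, S.T t (g n) x * m x = ∑' z, g n z * S.T t dlt z * m z := by
      intro n
      have h1 := S.T_symm t ht (g n) dlt (hgL2 n) hδ
      have h2 : l2inner m (S.T t (g n)) dlt = S.T t (g n) x * m x := l2inner_delta_right _ x
      rw [← h2, h1]
      rfl
    have hbound : Summable (fun z => |S.T t dlt z| * m z) := by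
      refine Summable.of_nonneg_of_le (fun z => mul_nonneg (abs_nonneg _) (hm z).le)
        (fun z => ?_) ((hTδ.add hfin).mul_left (1/2 : ℝ))
      have h1 : |S.T t dlt z| ≤ (S.T t dlt z ^ 2 + 1)/2 := by
        nlinarith [sq_abs (S.T t dlt z), sq_nonneg (|S.T t dlt z| - 1)]
      calc |S.T t dlt z| * m z ≤ ((S.T t dlt z ^ 2 + 1)/2) * m z :=
            mul_le_mul_of_nonneg_right h1 (hm z).le
        _ = 1/2 * (S.T t dlt z ^ 2 * m z + m z) := by ring
    have htsum : Tendsto (fun n => ∑' z, g n z * S.T t dlt z * m z) atTop (nhds 0) := by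
      have hmain := tendsto_tsum_of_dominated_convergence (𝓕 := atTop) (f := fun n z =>
          g n z * S.T t dlt z * m z) (g := fun _ => (0:ℝ))
          (bound := fun z => |S.T t dlt z| * m z) hbound (fun z => ?_)
        (Filter.Eventually.of_forall fun n z => ?_)
      · simpa using hmain
      · have h1 : Tendsto (fun n => g n z) atTop (nhds 0) := by
          have h2 := (hften z).const_sub 1
          simpa [hg] using h2
        have h3 := h1.mul_const (S.T t dlt z * m z)
        simp only [zero_mul] at h3
        exact h3.congr fun n => by ring
      · have h4 : |g n z| ≤ 1 := by
          rw [abs_of_nonneg (hg01 n z).1]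
          exact (hg01 n z).2
        calc ‖g n z * S.T t dlt z * m z‖ = |g n z| * (|S.T t dlt z| * m z) := by
              rw [Real.norm_eq_abs, abs_mul, abs_mul, abs_of_nonneg (hm z).le, mul_assoc]
          _ ≤ 1 * (|S.T t dlt z| * m z) := by
              exact mul_le_mul_of_nonneg_right h4 (mul_nonneg (abs_nonneg _) (hm z).le)
          _ = |S.T t dlt z| * m z := one_mul _
    have hx0 := (hm x).ne'
    have heq : ∀ n, S.T t (g n) x = (∑' z, g n z * S.T t dlt z * m z) / m x := fun n =>
      (eq_div_iff hx0).mpr (hkey n)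
    have h5 := htsum.div_const (m x)
    simp only [zero_div] at h5
    exact h5.congr fun n => (heq n).symm
  have hofreal : ∀ n, ENNReal.ofReal (S.R 1 (g n) x)
      = ∫⁻ t in Set.Ioi (0:ℝ), ENNReal.ofReal (Real.exp (-1 * t) * S.T t (g n) x) :=
    fun n => S.R_laplace 1 one_pos (g n) (hgL2 n) (fun z => (hg01 n z).1) x
  have hexp1 : (∫⁻ t in Set.Ioi (0:ℝ), ENNReal.ofReal (Real.exp (-1 * t))) = 1 := by
    rw [lintegral_exp_Ioi one_pos]
    norm_num
  have hlim : Tendsto (fun n => ∫⁻ t in Set.Ioi (0:ℝ),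
      ENNReal.ofReal (Real.exp (-1 * t) * S.T t (g n) x)) atTop (nhds 0) := by
    have hmain := MeasureTheory.tendsto_lintegral_of_dominated_convergence'
      (μ := MeasureTheory.volume.restrict (Set.Ioi (0:ℝ)))
      (F := fun n t => ENNReal.ofReal (Real.exp (-1 * t) * S.T t (g n) x))
      (f := fun _ => (0:ℝ≥0∞)) (bound := fun t => ENNReal.ofReal (Real.exp (-1 * t)))
      (fun n => AEMeasurable.ennreal_ofReal (AEMeasurable.mul
        ((Real.measurable_exp.comp (measurable_id.const_mul (-1))).aemeasurable)
        (aemeas_T S (hgL2 n) x)))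
      (fun n => (MeasureTheory.ae_restrict_iff' measurableSet_Ioi).2
        (Filter.Eventually.of_forall fun t ht => ENNReal.ofReal_le_ofReal
          (mul_le_of_le_one_right (Real.exp_pos _).le
            (S.T_markov t ht (g n) (fun z => hg01 n z) x).2)))
      (by rw [hexp1]; exact ENNReal.one_ne_top)
      ((MeasureTheory.ae_restrict_iff' measurableSet_Ioi).2
        (Filter.Eventually.of_forall fun t ht => ?_))
    · simpa using hmain
    · have h6 := (hTto t ht).const_mul (Real.exp (-1 * t))
      simp only [mul_zero] at h6
      have h7 := ENNReal.tendsto_ofReal h6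
      simpa using h7
  have hRto : Tendsto (fun n => S.R 1 (g n) x) atTop (nhds 0) := by
    have h8 : Tendsto (fun n => ENNReal.ofReal (S.R 1 (g n) x)) atTop (nhds 0) :=
      hlim.congr fun n => (hofreal n).symm
    have h9 := (ENNReal.tendsto_toReal (show (0:ℝ≥0∞) ≠ ⊤ from ENNReal.zero_ne_top)).comp h8
    simp only [ENNReal.toReal_zero] at h9
    refine h9.congr fun n => ?_
    simp only [Function.comp_apply]
    exact ENNReal.toReal_ofReal (hnn n)
  have hfinal := (tendsto_const_nhds (x := (1:ℝ)) (f := atTop)).sub hRto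
  simp only [sub_zero] at hfinal
  exact hfinal.congr fun n => (hsplit n).symm

theorem C_to_B' {G : WeightedGraph V} (S : FormSetup G m) (hm : ∀ x, 0 < m x)
    (hfin : Summable m) (hc : ∀ x, G.c x = 0) (hdom : S.dom = G.regDom m)
    (hC : G.regDom m = {u | G.FiniteEnergy u ∧ MemL2 m u}) :
    ∀ y, S.R 1 (fun _ => (1:ℝ)) y = 1 := by
  have honeL2 : MemL2 m (fun _ : V => (1:ℝ)) := memL2_one hfin
  set w : V → ℝ := S.R 1 (fun _ => (1:ℝ)) with hw
  have hwdom : w ∈ S.dom := S.R_mem 1 one_pos _ honeL2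
  have hwFE : G.FiniteEnergy w := S.dom_fe w hwdom
  have hwL2 : MemL2 m w := S.dom_l2 w hwdom
  set v : V → ℝ := fun x => 1 - w x with hv
  have hvL2 : MemL2 m v := MemL2.sub2 hm honeL2 hwL2
  have hvdom : v ∈ S.dom := by
    rw [hdom, hC]
    exact ⟨fe_sub hc (fe_one hc) hwFE, hvL2⟩
  have hchar := S.R_char 1 one_pos (fun _ => (1:ℝ)) honeL2 v hvdom
  rw [← hw] at hchar
  have hEw : G.energyBilin w v
      = -(2⁻¹ * ∑' p : V × V, G.b p.1 p.2 * (w p.1 - w p.2) ^ 2) := by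
    rw [bilin_eq hc, neg_mul_eq_mul_neg, ← tsum_neg]
    congr 1
    refine tsum_congr fun p => ?_
    simp only [hv]
    ring
  have hEsq : (0:ℝ) ≤ ∑' p : V × V, G.b p.1 p.2 * (w p.1 - w p.2) ^ 2 :=
    tsum_nonneg fun p => mul_nonneg (G.b_nonneg _ _) (sq_nonneg _)
  have hsum_wv : Summable fun x => w x * v x * m x := summable_mul_m hm hwL2 hvL2
  have hsum_1v : Summable fun x => (1:ℝ) * v x * m x := summable_mul_m hm honeL2 hvL2
  have hinner : l2inner m (fun _ => (1:ℝ)) v - l2inner m w v = ∑' x, v x ^ 2 * m x := by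
    unfold l2inner
    rw [← Summable.tsum_sub hsum_1v hsum_wv]
    congr 1
    funext z
    simp only [hv]
    ring
  have hsum0 : (∑' x, v x ^ 2 * m x) = 0 := by
    have h1 : (∑' x, v x ^ 2 * m x)
        = -(2⁻¹ * ∑' p : V × V, G.b p.1 p.2 * (w p.1 - w p.2) ^ 2) := by
      rw [← hinner, ← hEw]
      linarith [hchar]
    have h2 : (0:ℝ) ≤ ∑' x, v x ^ 2 * m x :=
      tsum_nonneg fun z => mul_nonneg (sq_nonneg _) (hm z).le
    rw [h1] at h2 ⊢
    linarith
  intro y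
  have hle := Summable.le_tsum hvL2 y (fun b _ => mul_nonneg (sq_nonneg _) (hm b).le)
  rw [hsum0] at hle
  have h0 : v y ^ 2 * m y = 0 :=
    le_antisymm hle (mul_nonneg (sq_nonneg _) (hm y).le)
  have hvy : v y = 0 := by
    rcases mul_eq_zero.1 h0 with h | h
    · exact sq_eq_zero_iff.1 h
    · exact absurd h (hm y).ne'
  simp only [hv] at hvy
  linarith

open scoped Classical in
theorem A_to_B' (hm : ∀ x, 0 < m x) (hfin : Summable m)
    (hA : ∀ x y, S.green x y = ⊤) : ∀ y, S.R 1 (fun _ => (1:ℝ)) y = 1 := by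
  have honeL2 : MemL2 m (fun _ : V => (1:ℝ)) := memL2_one hfin
  set w : V → ℝ := S.R 1 (fun _ => (1:ℝ)) with hw
  have hwdom : w ∈ S.dom := S.R_mem 1 one_pos _ honeL2
  have hwL2 : MemL2 m w := S.dom_l2 w hwdom
  have hw0 : ∀ z, 0 ≤ w z := S.R_pos 1 one_pos _ (fun _ => zero_le_one)
  have hw1 : ∀ z, w z ≤ 1 := by
    intro z
    have := R_le_inv S hfin one_pos z
    simpa using this
  intro y
  by_contra hne
  have hwy : w y < 1 := lt_of_le_of_ne (hw1 y) hne
  set h : V → ℝ := fun z => 1 - w z with hh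
  have hh0 : ∀ z, 0 ≤ h z := fun z => sub_nonneg.2 (hw1 z)
  have hhy : 0 < h y := by
    simp only [hh]
    linarith
  have hhL2 : MemL2 m h := MemL2.sub2 hm honeL2 hwL2
  set dlt : V → ℝ := fun z => if z = y then (1:ℝ) else 0 with hdlt
  have hδL2 : MemL2 m dlt := memL2_delta hm y
  have hδ0 : ∀ z, 0 ≤ dlt z := fun z => by
    by_cases hz : z = y <;> simp [hdlt, hz]
  have key : ∀ α : ℝ, 0 < α → h y * S.R α dlt y * m y ≤ m y := by
    intro α hα
    have hRdom := S.R_mem α hα dlt hδL2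
    have hRL2 : MemL2 m (S.R α dlt) := S.dom_l2 _ hRdom
    have hR0 : ∀ z, 0 ≤ S.R α dlt z := S.R_pos α hα dlt hδ0
    have hchar1 := S.R_char 1 one_pos (fun _ => (1:ℝ)) honeL2 (S.R α dlt) hRdom
    rw [← hw] at hchar1
    have hchar2 := S.R_char α hα dlt hδL2 w hwdom
    have hsym : G.energyBilin w (S.R α dlt) = G.energyBilin (S.R α dlt) w := bilin_symm _ _
    have hsum_1R : Summable fun z => (1:ℝ) * S.R α dlt z * m z :=
      summable_mul_m hm honeL2 hRL2
    have hsum_wR : Summable fun z => w z * S.R α dlt z * m z :=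
      summable_mul_m hm hwL2 hRL2
    have hhR : l2inner m h (S.R α dlt)
        = l2inner m (fun _ => (1:ℝ)) (S.R α dlt) - l2inner m w (S.R α dlt) :=
      l2inner_sub_left hsum_1R hsum_wR
    have hδw : l2inner m dlt w = w y * m y := by
      rw [l2inner_comm]
      exact l2inner_delta_right w y
    have hαRw : 0 ≤ α * l2inner m (S.R α dlt) w := by
      refine mul_nonneg hα.le (tsum_nonneg fun z => ?_)
      exact mul_nonneg (mul_nonneg (hR0 z) (hw0 z)) (hm z).le
    have hhRval : l2inner m h (S.R α dlt) ≤ m y := by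
      have e1 : l2inner m h (S.R α dlt) = G.energyBilin w (S.R α dlt) := by
        rw [hhR]
        linarith [hchar1]
      rw [e1, hsym]
      have e2 : G.energyBilin (S.R α dlt) w = w y * m y - α * l2inner m (S.R α dlt) w := by
        rw [← hδw]
        linarith [hchar2]
      rw [e2]
      have hwy1 : w y * m y ≤ m y := by
        nlinarith [hm y, hw1 y, hw0 y]
      linarith
    have hterm : h y * S.R α dlt y * m y ≤ l2inner m h (S.R α dlt) := by
      have hsumm : Summable fun z => h z * S.R α dlt z * m z := summable_mul_m hm hhL2 hRL2
      exact Summable.le_tsum hsumm y fun b _ =>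
        mul_nonneg (mul_nonneg (hh0 b) (hR0 b)) (hm b).le
    linarith
  -- the resolvents at small α blow up
  set ρ : ℕ → ℝ := fun n => S.R (((n:ℝ)+1)⁻¹) dlt y with hρ
  have hαn : ∀ n : ℕ, (0:ℝ) < ((n:ℝ)+1)⁻¹ := fun n => by positivity
  have hρ0 : ∀ n, 0 ≤ ρ n := fun n => S.R_pos _ (hαn n) dlt hδ0 y
  have hofreal : ∀ n, ENNReal.ofReal (ρ n) = ∫⁻ t in Set.Ioi (0:ℝ),
      ENNReal.ofReal (Real.exp (-(((n:ℝ)+1)⁻¹) * t) * S.T t dlt y) := fun n =>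
    S.R_laplace _ (hαn n) dlt hδL2 hδ0 y
  have hbdd : ∀ n, ENNReal.ofReal (ρ n) ≤ ENNReal.ofReal ((h y)⁻¹) := by
    intro n
    refine ENNReal.ofReal_le_ofReal ?_
    have hk : h y * ρ n * m y ≤ m y := key _ (hαn n)
    have h1 : h y * ρ n ≤ 1 := by
      have := (mul_le_mul_iff_of_pos_right (hm y)).mp (by linarith [hk] : h y * ρ n * m y ≤ 1 * m y)
      linarith
    rw [← one_div]
    rw [le_div_iff₀ hhy]
    linarith [h1]
  have hsup : (⨆ n : ℕ, ENNReal.ofReal (ρ n)) = ⊤ := by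
    have hmeas : ∀ n : ℕ, AEMeasurable
        (fun t => ENNReal.ofReal (Real.exp (-(((n:ℝ)+1)⁻¹) * t) * S.T t dlt y))
        (MeasureTheory.volume.restrict (Set.Ioi (0:ℝ))) := fun n =>
      AEMeasurable.ennreal_ofReal (AEMeasurable.mul
        ((Real.measurable_exp.comp (measurable_id.const_mul _)).aemeasurable)
        (aemeas_T S hδL2 y))
    have hmono : ∀ᵐ t ∂(MeasureTheory.volume.restrict (Set.Ioi (0:ℝ))),
        Monotone fun n : ℕ => ENNReal.ofReal
          (Real.exp (-(((n:ℝ)+1)⁻¹) * t) * S.T t dlt y) := by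
      filter_upwards [MeasureTheory.ae_restrict_mem measurableSet_Ioi] with t htpos
      intro i j hij
      refine ENNReal.ofReal_le_ofReal (mul_le_mul_of_nonneg_right ?_
        (S.T_pos t htpos dlt hδ0 y))
      refine Real.exp_le_exp.2 ?_
      have hle : ((j:ℝ)+1)⁻¹ ≤ ((i:ℝ)+1)⁻¹ := by
        refine inv_anti₀ (by positivity) (by exact_mod_cast by linarith [hij])
      nlinarith [le_of_lt (show (0:ℝ) < t from htpos)]
    have hisup : ∀ᵐ t ∂(MeasureTheory.volume.restrict (Set.Ioi (0:ℝ))),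
        (⨆ n : ℕ, ENNReal.ofReal (Real.exp (-(((n:ℝ)+1)⁻¹) * t) * S.T t dlt y))
          = ENNReal.ofReal (S.T t dlt y) := by
      filter_upwards [MeasureTheory.ae_restrict_mem measurableSet_Ioi] with t htpos
      have hT0 : 0 ≤ S.T t dlt y := S.T_pos t htpos dlt hδ0 y
      have hmono2 : Monotone fun n : ℕ => ENNReal.ofReal
          (Real.exp (-(((n:ℝ)+1)⁻¹) * t) * S.T t dlt y) := by
        intro i j hij
        refine ENNReal.ofReal_le_ofReal (mul_le_mul_of_nonneg_right ?_ hT0)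
        refine Real.exp_le_exp.2 ?_
        have hle : ((j:ℝ)+1)⁻¹ ≤ ((i:ℝ)+1)⁻¹ := by
          refine inv_anti₀ (by positivity) (by exact_mod_cast by linarith [hij])
        nlinarith [le_of_lt (show (0:ℝ) < t from htpos)]
      have htends : Tendsto (fun n : ℕ => ENNReal.ofReal
          (Real.exp (-(((n:ℝ)+1)⁻¹) * t) * S.T t dlt y)) atTop
          (nhds (ENNReal.ofReal (S.T t dlt y))) := by
        refine ENNReal.tendsto_ofReal ?_
        have hexp : Tendsto (fun n : ℕ => Real.exp (-(((n:ℝ)+1)⁻¹) * t)) atTop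
            (nhds 1) := by
          have h1 : Tendsto (fun n : ℕ => ((n:ℝ)+1)⁻¹) atTop (nhds 0) :=
            tendsto_one_div_add_atTop_nhds_zero_nat.congr fun n => by
              rw [one_div]
          have h2 : Tendsto (fun n : ℕ => -(((n:ℝ)+1)⁻¹) * t) atTop (nhds 0) := by
            have := (h1.neg).mul_const t
            simpa using this
          have h3 := (Real.continuous_exp.tendsto 0).comp h2
          simpa [Function.comp_def] using h3
        have := hexp.mul_const (S.T t dlt y)
        simpa using this
      exact tendsto_nhds_unique (tendsto_atTop_iSup hmono2) htends
    calc (⨆ n : ℕ, ENNReal.ofReal (ρ n))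
        = ⨆ n : ℕ, ∫⁻ t in Set.Ioi (0:ℝ),
            ENNReal.ofReal (Real.exp (-(((n:ℝ)+1)⁻¹) * t) * S.T t dlt y) := by
          exact iSup_congr hofreal
      _ = ∫⁻ t in Set.Ioi (0:ℝ), ⨆ n : ℕ,
            ENNReal.ofReal (Real.exp (-(((n:ℝ)+1)⁻¹) * t) * S.T t dlt y) :=
          (MeasureTheory.lintegral_iSup' hmeas hmono).symm
      _ = ∫⁻ t in Set.Ioi (0:ℝ), ENNReal.ofReal (S.T t dlt y) :=
          MeasureTheory.lintegral_congr_ae hisup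
      _ = S.green y y := rfl
      _ = ⊤ := hA y y
  have : (⨆ n : ℕ, ENNReal.ofReal (ρ n)) ≤ ENNReal.ofReal ((h y)⁻¹) := iSup_le hbdd
  rw [hsup] at this
  exact absurd (top_le_iff.1 this) ENNReal.ofReal_ne_top

open scoped Classical in
theorem B'_to_A (hm : ∀ x, 0 < m x) (hfin : Summable m)
    (hpi : ∀ t : ℝ, 0 < t → ∀ f : V → ℝ, MemL2 m f → (∀ x, 0 ≤ f x) → f ≠ 0 →
      ∀ y, 0 < S.T t f y)
    (hR : ∀ y, S.R 1 (fun _ => (1:ℝ)) y = 1) : ∀ x y, S.green x y = ⊤ := by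
  have hT1 := Tcons S hfin hR
  intro x y
  set M : ℝ := ∑' z, m z with hM
  have hM0 : 0 < M := by
    have := Summable.le_tsum hfin x fun b _ => (hm b).le
    linarith [hm x]
  have hdiag : ∀ x₀ : V, ∀ s : ℝ, 0 < s →
      m x₀ / M ≤ S.T (s + s) (fun z => if z = x₀ then (1:ℝ) else 0) x₀ := by
    intro x₀ s hs
    set dx : V → ℝ := fun z => if z = x₀ then (1:ℝ) else 0 with hdx
    have hδL2 : MemL2 m dx := memL2_delta hm x₀
    have hδ0 : ∀ z, 0 ≤ dx z := fun z => by
      by_cases hz : z = x₀ <;> simp [hdx, hz]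
    set a : V → ℝ := S.T s dx with ha
    have haL2 : MemL2 m a := S.T_l2 s hs dx hδL2
    have ha0 : ∀ z, 0 ≤ a z := S.T_pos s hs dx hδ0
    have h1 : (∑' z, a z * 1 * m z) = m x₀ := by
      have hsym := S.T_symm s hs dx (fun _ => (1:ℝ)) hδL2 (memL2_one hfin)
      have hLHS : l2inner m (S.T s dx) (fun _ => (1:ℝ)) = ∑' z, a z * 1 * m z := rfl
      have hRHS : l2inner m dx (S.T s (fun _ => (1:ℝ))) = m x₀ := by
        unfold l2inner
        rw [tsum_eq_single x₀ (fun b hb => by simp [hdx, hb])]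
        simp [hdx, hT1 s hs x₀]
      rw [← hLHS, hsym, hRHS]
    have h3 : (∑' z, a z ^ 2 * m z) = S.T (s+s) dx x₀ * m x₀ := by
      have hsym2 := S.T_symm s hs dx a hδL2 haL2
      have hLHS : l2inner m (S.T s dx) a = ∑' z, a z ^ 2 * m z := by
        unfold l2inner
        refine tsum_congr fun z => ?_
        rw [← ha]
        ring
      have hRHS : l2inner m dx (S.T s a) = S.T s a x₀ * m x₀ := by
        unfold l2inner
        rw [tsum_eq_single x₀ (fun b hb => by simp [hdx, hb])]
        simp [hdx]
      have hsemi : S.T s a = S.T (s + s) dx := by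
        rw [ha, ← S.T_semigroup s s hs hs]
      rw [← hLHS, hsym2, hRHS, hsemi]
    have hcs := tsum_cs hm ha0 (fun _ => zero_le_one) haL2 (memL2_one hfin)
    rw [h1, h3] at hcs
    have hone : (∑' z : V, (1:ℝ) ^ 2 * m z) = M := by
      rw [hM]
      refine tsum_congr fun z => ?_
      ring
    rw [hone] at hcs
    have hT2s0 : 0 ≤ S.T (s+s) dx x₀ := S.T_pos (s+s) (by linarith) dx hδ0 x₀
    have hsq : m x₀ ^ 2 ≤ S.T (s+s) dx x₀ * m x₀ * M := by
      have h4 : (0:ℝ) ≤ S.T (s+s) dx x₀ * m x₀ := mul_nonneg hT2s0 (hm x₀).le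
      have h5 := mul_le_mul hcs hcs (hm x₀).le (by positivity)
      calc m x₀ ^ 2 = m x₀ * m x₀ := sq (m x₀)
        _ ≤ (Real.sqrt (S.T (s+s) dx x₀ * m x₀) * Real.sqrt M)
            * (Real.sqrt (S.T (s+s) dx x₀ * m x₀) * Real.sqrt M) := h5
        _ = S.T (s+s) dx x₀ * m x₀ * M := by
            rw [mul_mul_mul_comm, Real.mul_self_sqrt h4, Real.mul_self_sqrt hM0.le]
    rw [div_le_iff₀ hM0]
    nlinarith [hm x₀]
  -- off-diagonal bound
  set dx : V → ℝ := fun z => if z = x then (1:ℝ) else 0 with hdx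
  set dy : V → ℝ := fun z => if z = y then (1:ℝ) else 0 with hdy
  have hδL2x : MemL2 m dx := memL2_delta hm x
  have hδ0x : ∀ z, 0 ≤ dx z := fun z => by
    by_cases hz : z = x <;> simp [hdx, hz]
  have hδ0y : ∀ z, 0 ≤ dy z := fun z => by
    by_cases hz : z = y <;> simp [hdy, hz]
  have hdxne : dx ≠ 0 := by
    intro hcon
    have := congrFun hcon x
    simp [hdx] at this
  have hc0 : 0 < S.T 1 dx y := hpi 1 one_pos dx hδL2x hδ0x hdxne y
  set c0 : ℝ := S.T 1 dx y with hc0def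
  have hlow : ∀ t : ℝ, 1 < t → c0 * (m y / M) ≤ S.T t dx y := by
    intro t ht
    have hs : 0 < (t - 1)/2 := by linarith
    set s : ℝ := (t-1)/2 with hsdef
    have htt : s + s + 1 = t := by
      rw [hsdef]
      ring
    have hsemi := S.T_semigroup (s+s) 1 (by linarith) one_pos dx
    have hge : ∀ z, 0 ≤ S.T 1 dx z - c0 * dy z := by
      intro z
      by_cases hz : z = y
      · subst hz
        simp [hdy, hc0def]
      · simp only [hdy, if_neg hz, mul_zero, sub_zero]
        exact S.T_pos 1 one_pos dx hδ0x z
    have hpos := S.T_pos (s+s) (by linarith) (fun z => S.T 1 dx z - c0 * dy z) hge y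
    have hlin : S.T (s+s) (fun z => S.T 1 dx z - c0 * dy z)
        = fun z' => S.T (s+s) (S.T 1 dx) z' - c0 * S.T (s+s) dy z' := by
      have h1 : (fun z => S.T 1 dx z - c0 * dy z) = S.T 1 dx - c0 • dy := by
        funext z
        simp [Pi.sub_apply, Pi.smul_apply, smul_eq_mul]
      rw [h1, (S.T_linear (s+s)).map_sub, (S.T_linear (s+s)).map_smul]
      funext z'
      simp [smul_eq_mul]
    rw [hlin] at hpos
    have hpos' : 0 ≤ S.T (s+s) (S.T 1 dx) y - c0 * S.T (s+s) dy y := hpos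
    have hdyb := hdiag y s hs
    rw [← hdy] at hdyb
    have h2 : c0 * (m y / M) ≤ c0 * S.T (s+s) dy y := mul_le_mul_of_nonneg_left hdyb hc0.le
    have hTt : S.T t dx y = S.T (s+s) (S.T 1 dx) y := by
      rw [← htt]
      exact congrFun hsemi y
    rw [hTt]
    linarith [hpos']
  have hconst : (∫⁻ _ in Set.Ioi (1:ℝ), ENNReal.ofReal (c0 * (m y/M))) = ⊤ := by
    rw [MeasureTheory.setLIntegral_const, Real.volume_Ioi]
    rw [ENNReal.mul_top]
    refine (ENNReal.ofReal_pos.2 ?_).ne'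
    have := hm y
    positivity
  have hle2 : (∫⁻ _ in Set.Ioi (1:ℝ), ENNReal.ofReal (c0 * (m y/M))) ≤ S.green x y := by
    unfold FormSetup.green
    calc (∫⁻ _ in Set.Ioi (1:ℝ), ENNReal.ofReal (c0 * (m y/M)))
        ≤ ∫⁻ t in Set.Ioi (1:ℝ), ENNReal.ofReal (S.T t dx y) := by
          refine MeasureTheory.lintegral_mono_ae ((MeasureTheory.ae_restrict_iff'
            measurableSet_Ioi).2 (Filter.Eventually.of_forall fun t ht => ?_))
          exact ENNReal.ofReal_le_ofReal (hlow t ht)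
      _ ≤ ∫⁻ t in Set.Ioi (0:ℝ), ENNReal.ofReal (S.T t dx y) :=
          MeasureTheory.lintegral_mono' (MeasureTheory.Measure.restrict_mono
            (Set.Ioi_subset_Ioi (by norm_num)) le_rfl) le_rfl
  rw [hconst] at hle2
  exact top_le_iff.1 hle2

end SetupLemmas

section Clip

theorem clip_lip (lo hi a b : ℝ) :
    |max lo (min a hi) - max lo (min b hi)| ≤ |a - b| := by
  have h1 : |max lo (min a hi) - max lo (min b hi)|
      = |max (min a hi) lo - max (min b hi) lo| := by
    rw [max_comm lo, max_comm lo]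
  rw [h1]
  refine (abs_max_sub_max_le_abs _ _ _).trans ?_
  have h2 := abs_min_sub_min_le_max a hi b hi
  simpa [abs_nonneg] using h2

theorem clip_mono (lo hi : ℝ) {a b : ℝ} (hab : a ≤ b) :
    max lo (min a hi) ≤ max lo (min b hi) :=
  max_le_max le_rfl (min_le_min hab le_rfl)

theorem phi_lip_aux (lo hi : ℝ) {a b : ℝ} (hab : b ≤ a) :
    |(a - max lo (min a hi)) - (b - max lo (min b hi))| ≤ |a - b| := by
  have hm := clip_mono lo hi hab
  have hl := clip_lip lo hi a b
  rw [abs_of_nonneg (sub_nonneg.2 hm), abs_of_nonneg (sub_nonneg.2 hab)] at hl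
  rw [abs_of_nonneg (sub_nonneg.2 hab)]
  refine abs_le.2 ⟨by linarith, by linarith⟩

theorem phi_lip (lo hi a b : ℝ) :
    |(a - max lo (min a hi)) - (b - max lo (min b hi))| ≤ |a - b| := by
  rcases le_total b a with hab | hab
  · exact phi_lip_aux lo hi hab
  · rw [abs_sub_comm, abs_sub_comm a b]
    exact phi_lip_aux lo hi hab

end Clip

section MainApprox

variable {G : WeightedGraph V}

theorem tendsto_pointwise_of_L2 (hm : ∀ x, 0 < m x) {g : ℕ → V → ℝ}
    (hnn : ∀ n x, 0 ≤ g n x) (hsum : ∀ n, Summable fun x => g n x ^ 2 * m x)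
    (hto : Tendsto (fun n => ∑' x, g n x ^ 2 * m x) atTop (nhds 0)) (x : V) :
    Tendsto (fun n => g n x) atTop (nhds 0) := by
  have h1 : ∀ n, g n x ^ 2 ≤ (∑' z, g n z ^ 2 * m z) / m x := by
    intro n
    rw [le_div_iff₀ (hm x)]
    exact Summable.le_tsum (hsum n) x fun b _ => mul_nonneg (sq_nonneg _) (hm b).le
  have h2 : Tendsto (fun n => (∑' z, g n z ^ 2 * m z) / m x) atTop (nhds 0) := by
    simpa using hto.div_const (m x)
  have h3 : Tendsto (fun n => g n x ^ 2) atTop (nhds 0) :=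
    squeeze_zero (fun n => sq_nonneg _) h1 h2
  have h4 := (Real.continuous_sqrt.tendsto 0).comp h3
  simp only [Real.sqrt_zero] at h4
  refine h4.congr fun n => ?_
  simp only [Function.comp_apply]
  exact Real.sqrt_sq (hnn n x)

set_option maxHeartbeats 1000000 in
theorem approx_bounded (hm : ∀ x, 0 < m x) (hfin : Summable m)
    {u : V → ℝ} {MB : ℝ} (hub : ∀ x, |u x| ≤ MB)
    (huFE : E G u < ⊤)
    {e : ℕ → V → ℝ} (hefin : ∀ n, (Function.support (e n)).Finite)
    (he0 : ∀ n x, 0 ≤ e n x) (he1 : ∀ n x, e n x ≤ 1)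
    (hEto : Tendsto (fun n => (E G (fun x => 1 - e n x)).toReal) atTop (nhds 0))
    (hL2to : Tendsto (fun n => ∑' x, (1 - e n x) ^ 2 * m x) atTop (nhds 0)) :
    Tendsto (fun n => (E G (fun x => u x - u x * e n x)).toReal
      + ∑' x, (u x - u x * e n x) ^ 2 * m x) atTop (nhds 0) := by
  have hMB2 : ∀ x, u x ^ 2 ≤ MB ^ 2 := fun x => by
    nlinarith [hub x, abs_nonneg (u x), sq_abs (u x)]
  have hgL2 : ∀ n, MemL2 m fun x => 1 - e n x := fun n =>
    MemL2.sub2 hm (memL2_one hfin) (memL2_of_finsupp hm (hefin n))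
  have hg0 : ∀ n x, 0 ≤ 1 - e n x := fun n x => by linarith [he1 n x]
  have hg1 : ∀ n x, 1 - e n x ≤ 1 := fun n x => by linarith [he0 n x]
  have hgx : ∀ x, Tendsto (fun n => 1 - e n x) atTop (nhds 0) :=
    tendsto_pointwise_of_L2 hm hg0 (fun n => hgL2 n) hL2to
  have hEgfin : ∀ n, E G (fun x => 1 - e n x) < ⊤ := by
    intro n
    refine lt_of_le_of_lt (E_sub_le (fun _ => (1:ℝ)) (e n)) ?_
    rw [E_one, mul_zero, zero_add]
    exact ENNReal.mul_lt_top (by norm_num) (E_finsupp (hefin n))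
  have hsumg : ∀ n, Summable fun p : V × V =>
      G.b p.1 p.2 * ((1 - e n p.1) - (1 - e n p.2)) ^ 2 := by
    intro n
    have h := summable_of_E_lt_top (hEgfin n)
    exact h
  have hEgreal : ∀ n, (E G (fun x => 1 - e n x)).toReal
      = ∑' p : V × V, G.b p.1 p.2 * ((1 - e n p.1) - (1 - e n p.2)) ^ 2 := by
    intro n
    have h4 := E_toReal (u := fun x => 1 - e n x) (hsumg n)
    exact h4
  have hsumu : Summable fun p : V × V => G.b p.1 p.2 * (u p.1 - u p.2) ^ 2 :=
    summable_of_E_lt_top huFE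
  -- L2 part
  have hL2part : Tendsto (fun n => ∑' x, (u x - u x * e n x) ^ 2 * m x) atTop (nhds 0) := by
    refine squeeze_zero (fun n => tsum_nonneg fun x => mul_nonneg (sq_nonneg _) (hm x).le)
      (fun n => ?_) (by simpa using hL2to.const_mul (MB ^ 2))
    have hpt : ∀ x, (u x - u x * e n x) ^ 2 * m x ≤ MB ^ 2 * ((1 - e n x) ^ 2 * m x) := by
      intro x
      have h1 : (u x - u x * e n x) ^ 2 * m x = u x ^ 2 * ((1 - e n x) ^ 2 * m x) := by
        ring
      rw [h1]
      exact mul_le_mul_of_nonneg_right (hMB2 x)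
        (mul_nonneg (sq_nonneg _) (hm x).le)
    calc ∑' x, (u x - u x * e n x) ^ 2 * m x
        ≤ ∑' x, MB ^ 2 * ((1 - e n x) ^ 2 * m x) :=
          Summable.tsum_le_tsum hpt (Summable.of_nonneg_of_le
            (fun x => mul_nonneg (sq_nonneg _) (hm x).le) hpt ((hgL2 n).mul_left _))
            ((hgL2 n).mul_left _)
      _ = MB ^ 2 * ∑' x, (1 - e n x) ^ 2 * m x := tsum_mul_left
  -- Energy part
  have hA : Tendsto (fun n => ∑' p : V × V,
      (1 - e n p.1) ^ 2 * (G.b p.1 p.2 * (u p.1 - u p.2) ^ 2)) atTop (nhds 0) := by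
    have hmain := tendsto_tsum_of_dominated_convergence (𝓕 := atTop)
      (f := fun n (p : V × V) => (1 - e n p.1) ^ 2 * (G.b p.1 p.2 * (u p.1 - u p.2) ^ 2))
      (g := fun _ => (0:ℝ)) (bound := fun p => G.b p.1 p.2 * (u p.1 - u p.2) ^ 2)
      hsumu (fun p => ?_) (Filter.Eventually.of_forall fun n p => ?_)
    · simpa using hmain
    · have h1 := ((hgx p.1).mul (hgx p.1)).mul_const (G.b p.1 p.2 * (u p.1 - u p.2) ^ 2)
      simp only [mul_zero, zero_mul] at h1
      refine h1.congr fun n => ?_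
      ring
    · have hc0 : 0 ≤ G.b p.1 p.2 * (u p.1 - u p.2) ^ 2 :=
        mul_nonneg (G.b_nonneg _ _) (sq_nonneg _)
      have hgsq : (1 - e n p.1) ^ 2 ≤ 1 := by
        nlinarith [hg0 n p.1, hg1 n p.1]
      calc ‖(1 - e n p.1) ^ 2 * (G.b p.1 p.2 * (u p.1 - u p.2) ^ 2)‖
          = (1 - e n p.1) ^ 2 * (G.b p.1 p.2 * (u p.1 - u p.2) ^ 2) := by
            rw [Real.norm_eq_abs, abs_of_nonneg (mul_nonneg (sq_nonneg _) hc0)]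
        _ ≤ 1 * (G.b p.1 p.2 * (u p.1 - u p.2) ^ 2) :=
            mul_le_mul_of_nonneg_right hgsq hc0
        _ = G.b p.1 p.2 * (u p.1 - u p.2) ^ 2 := one_mul _
  have hFle : ∀ n (p : V × V),
      G.b p.1 p.2 * ((u p.1 - u p.1 * e n p.1) - (u p.2 - u p.2 * e n p.2)) ^ 2
        ≤ 2 * ((1 - e n p.1) ^ 2 * (G.b p.1 p.2 * (u p.1 - u p.2) ^ 2))
          + 2 * MB ^ 2 * (G.b p.1 p.2 * ((1 - e n p.1) - (1 - e n p.2)) ^ 2) := by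
    intro n p
    have hb := G.b_nonneg p.1 p.2
    have hq : ((u p.1 - u p.1 * e n p.1) - (u p.2 - u p.2 * e n p.2)) ^ 2
        ≤ 2 * ((1 - e n p.1) ^ 2 * (u p.1 - u p.2) ^ 2)
          + 2 * (MB ^ 2 * ((1 - e n p.1) - (1 - e n p.2)) ^ 2) := by
      have hkey : (u p.1 - u p.1 * e n p.1) - (u p.2 - u p.2 * e n p.2)
          = (1 - e n p.1) * (u p.1 - u p.2) + u p.2 * ((1 - e n p.1) - (1 - e n p.2)) := by
        ring
      rw [hkey]
      have h2 := hMB2 p.2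
      nlinarith [sq_nonneg ((1 - e n p.1) * (u p.1 - u p.2)
        - u p.2 * ((1 - e n p.1) - (1 - e n p.2))),
        sq_nonneg ((1 - e n p.1) - (1 - e n p.2))]
    refine le_trans (mul_le_mul_of_nonneg_left hq hb) (le_of_eq (by ring))
  have hsumA : ∀ n, Summable (fun p : V × V =>
      2 * ((1 - e n p.1) ^ 2 * (G.b p.1 p.2 * (u p.1 - u p.2) ^ 2))) := by
    intro n
    refine Summable.of_nonneg_of_le (fun p => ?_) (fun p => ?_) (hsumu.mul_left 2)
    · exact mul_nonneg (by norm_num) (mul_nonneg (sq_nonneg _)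
        (mul_nonneg (G.b_nonneg _ _) (sq_nonneg _)))
    · have hc0 : 0 ≤ G.b p.1 p.2 * (u p.1 - u p.2) ^ 2 :=
        mul_nonneg (G.b_nonneg _ _) (sq_nonneg _)
      have hgsq : (1 - e n p.1) ^ 2 ≤ 1 := by
        nlinarith [hg0 n p.1, hg1 n p.1]
      have := mul_le_mul_of_nonneg_right hgsq hc0
      nlinarith [this]
  have hsumB : ∀ n, Summable (fun p : V × V =>
      2 * MB ^ 2 * (G.b p.1 p.2 * ((1 - e n p.1) - (1 - e n p.2)) ^ 2)) := fun n =>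
    (hsumg n).mul_left _
  have hsumF : ∀ n, Summable (fun p : V × V =>
      G.b p.1 p.2 * ((u p.1 - u p.1 * e n p.1) - (u p.2 - u p.2 * e n p.2)) ^ 2) := by
    intro n
    refine Summable.of_nonneg_of_le
      (fun p => mul_nonneg (G.b_nonneg _ _) (sq_nonneg _)) (hFle n) ?_
    exact (hsumA n).add (hsumB n)
  have hEfeq : ∀ n, (E G (fun x => u x - u x * e n x)).toReal
      = ∑' p : V × V, G.b p.1 p.2
          * ((u p.1 - u p.1 * e n p.1) - (u p.2 - u p.2 * e n p.2)) ^ 2 := by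
    intro n
    have h4 := E_toReal (u := fun x => u x - u x * e n x) (hsumF n)
    exact h4
  have hEpart : Tendsto (fun n => (E G (fun x => u x - u x * e n x)).toReal)
      atTop (nhds 0) := by
    have hlim : Tendsto (fun n => 2 * (∑' p : V × V,
        (1 - e n p.1) ^ 2 * (G.b p.1 p.2 * (u p.1 - u p.2) ^ 2))
        + 2 * MB ^ 2 * (E G (fun x => 1 - e n x)).toReal) atTop (nhds 0) := by
      have h1 := (hA.const_mul 2).add (hEto.const_mul (2 * MB ^ 2))
      simpa using h1
    refine squeeze_zero (fun n => ?_) (fun n => ?_) hlim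
    · rw [hEfeq n]
      exact tsum_nonneg fun p => mul_nonneg (G.b_nonneg _ _) (sq_nonneg _)
    · rw [hEfeq n]
      have h1 := Summable.tsum_le_tsum (hFle n) (hsumF n) ((hsumA n).add (hsumB n))
      rw [Summable.tsum_add (hsumA n) (hsumB n), tsum_mul_left, tsum_mul_left, ← hEgreal n] at h1
      exact h1
  have := hEpart.add hL2part
  simpa using this

set_option maxHeartbeats 2000000 in
theorem B'_to_C (S : FormSetup G m) (hm : ∀ x, 0 < m x)
    (hfin : Summable m) (hc : ∀ x, G.c x = 0) (hdom : S.dom = G.regDom m)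
    (hR : ∀ y, S.R 1 (fun _ => (1:ℝ)) y = 1) :
    G.regDom m = {u | G.FiniteEnergy u ∧ MemL2 m u} := by
  apply Set.Subset.antisymm
  · intro u hu
    exact ⟨hu.1, hu.2.1⟩
  intro u hu
  obtain ⟨huFE, huL2⟩ := hu
  have huE : E G u < ⊤ := (fe_iff hc u).1 huFE
  have hsumu : Summable fun p : V × V => G.b p.1 p.2 * (u p.1 - u p.2) ^ 2 :=
    summable_of_E_lt_top huE
  refine ⟨huFE, huL2, ?_⟩
  -- `1` belongs to the regular domain
  have hone : (fun _ : V => (1:ℝ)) ∈ G.regDom m := by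
    have h1 : S.R 1 (fun _ => (1:ℝ)) ∈ S.dom := S.R_mem 1 one_pos _ (memL2_one hfin)
    rw [hdom] at h1
    have heq : S.R 1 (fun _ => (1:ℝ)) = fun _ => (1:ℝ) := funext hR
    rwa [heq] at h1
  obtain ⟨-, -, f, hffin, hfto0⟩ := hone
  have hfto : Tendsto (fun n => (G.energy (fun x => 1 - f n x)).toReal
      + ∑' x, (1 - f n x) ^ 2 * m x) atTop (nhds 0) := hfto0
  have hfEfin : ∀ n, E G (fun x => 1 - f n x) < ⊤ := by
    intro n
    refine lt_of_le_of_lt (E_sub_le (fun _ => (1:ℝ)) (f n)) ?_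
    rw [E_one, mul_zero, zero_add]
    exact ENNReal.mul_lt_top (by norm_num) (E_finsupp (hffin n))
  have hfE : Tendsto (fun n => (G.energy (fun x => 1 - f n x)).toReal) atTop (nhds 0) := by
    refine squeeze_zero (fun n => ENNReal.toReal_nonneg) (fun n => ?_) hfto
    have h2 : (0:ℝ) ≤ ∑' x, (1 - f n x) ^ 2 * m x :=
      tsum_nonneg fun x => mul_nonneg (sq_nonneg _) (hm x).le
    linarith
  have hfL2to : Tendsto (fun n => ∑' x, (1 - f n x) ^ 2 * m x) atTop (nhds 0) := by
    refine squeeze_zero (fun n =>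
      tsum_nonneg fun x => mul_nonneg (sq_nonneg _) (hm x).le) (fun n => ?_) hfto
    linarith [ENNReal.toReal_nonneg (a := G.energy (fun x => 1 - f n x))]
  have hfEE : Tendsto (fun n => (E G (fun x => 1 - f n x)).toReal) atTop (nhds 0) := by
    have heq2 : ∀ n, (E G (fun x => 1 - f n x)).toReal
        = 2 * (G.energy (fun x => 1 - f n x)).toReal := by
      intro n
      rw [energy_eq hc, ENNReal.toReal_mul]
      have h3 : ((2:ℝ≥0∞)⁻¹).toReal = 2⁻¹ := by simp
      rw [h3]
      ring
    have h4 := hfE.const_mul 2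
    simp only [mul_zero] at h4
    exact h4.congr fun n => (heq2 n).symm
  -- the clipped sequence
  set e : ℕ → V → ℝ := fun n x => max 0 (min (f n x) 1) with he
  have hefin : ∀ n, (Function.support (e n)).Finite := by
    intro n
    refine (hffin n).subset fun x hx => ?_
    simp only [Function.mem_support, he] at hx ⊢
    intro h0
    apply hx
    rw [h0]
    simp
  have he0 : ∀ n x, 0 ≤ e n x := fun n x => le_max_left _ _
  have he1 : ∀ n x, e n x ≤ 1 := fun n x => max_le (by norm_num) (min_le_right _ _)
  have hclip1 : ∀ n x, |1 - e n x| ≤ |1 - f n x| := by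
    intro n x
    have h := clip_lip 0 1 1 (f n x)
    have h1 : max (0:ℝ) (min 1 1) = 1 := by norm_num
    rw [h1] at h
    simpa [he] using h
  have hEeto : Tendsto (fun n => (E G (fun x => 1 - e n x)).toReal) atTop (nhds 0) := by
    refine squeeze_zero (fun n => ENNReal.toReal_nonneg) (fun n => ?_) hfEE
    have hmono : E G (fun x => 1 - e n x) ≤ E G (fun x => 1 - f n x) := by
      refine E_mono fun p => ?_
      have h1 : |(1 - e n p.1) - (1 - e n p.2)| ≤ |(1 - f n p.1) - (1 - f n p.2)| := by
        have h2 : (1 - e n p.1) - (1 - e n p.2) = e n p.2 - e n p.1 := by ring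
        have h3 : (1 - f n p.1) - (1 - f n p.2) = f n p.2 - f n p.1 := by ring
        rw [h2, h3]
        exact clip_lip 0 1 _ _
      calc ((1 - e n p.1) - (1 - e n p.2)) ^ 2
          = |(1 - e n p.1) - (1 - e n p.2)| ^ 2 := (sq_abs _).symm
        _ ≤ |(1 - f n p.1) - (1 - f n p.2)| ^ 2 :=
            pow_le_pow_left₀ (abs_nonneg _) h1 2
        _ = ((1 - f n p.1) - (1 - f n p.2)) ^ 2 := sq_abs _
    exact ENNReal.toReal_mono (hfEfin n).ne hmono
  have heL2 : ∀ n, MemL2 m fun x => 1 - e n x := fun n =>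
    MemL2.sub2 hm (memL2_one hfin) (memL2_of_finsupp hm (hefin n))
  have hfL2 : ∀ n, MemL2 m fun x => 1 - f n x := fun n =>
    MemL2.sub2 hm (memL2_one hfin) (memL2_of_finsupp hm (hffin n))
  have hL2eto : Tendsto (fun n => ∑' x, (1 - e n x) ^ 2 * m x) atTop (nhds 0) := by
    refine squeeze_zero (fun n =>
      tsum_nonneg fun x => mul_nonneg (sq_nonneg _) (hm x).le) (fun n => ?_) hfL2to
    refine Summable.tsum_le_tsum (fun x => ?_) (heL2 n) (hfL2 n)
    refine mul_le_mul_of_nonneg_right ?_ (hm x).le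
    calc (1 - e n x) ^ 2 = |1 - e n x| ^ 2 := (sq_abs _).symm
      _ ≤ |1 - f n x| ^ 2 := pow_le_pow_left₀ (abs_nonneg _) (hclip1 n x) 2
      _ = (1 - f n x) ^ 2 := sq_abs _
  -- truncations of u
  set uk : ℕ → V → ℝ := fun k x => max (-(k:ℝ)) (min (u x) (k:ℝ)) with huk
  have hclip0 : ∀ k : ℕ, max (-(k:ℝ)) (min 0 (k:ℝ)) = 0 := by
    intro k
    rw [min_eq_left (by positivity : (0:ℝ) ≤ (k:ℝ))]
    exact max_eq_right (neg_nonpos.2 (by positivity))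
  have hukabs : ∀ k x, |uk k x| ≤ |u x| := by
    intro k x
    have h := clip_lip (-(k:ℝ)) (k:ℝ) (u x) 0
    rw [hclip0 k, sub_zero, sub_zero] at h
    simpa [huk] using h
  have hphiabs : ∀ k x, |u x - uk k x| ≤ |u x| := by
    intro k x
    have h := phi_lip (-(k:ℝ)) (k:ℝ) (u x) 0
    rw [hclip0 k, sub_zero, sub_zero, sub_zero] at h
    simpa [huk] using h
  have hukL2 : ∀ k, MemL2 m (uk k) := fun k => memL2_of_le hm huL2 (hukabs k)
  have hukE : ∀ k, E G (uk k) < ⊤ := by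
    intro k
    refine lt_of_le_of_lt (E_mono fun p => ?_) huE
    have h1 : |uk k p.1 - uk k p.2| ≤ |u p.1 - u p.2| := by
      have h := clip_lip (-(k:ℝ)) (k:ℝ) (u p.1) (u p.2)
      simpa [huk] using h
    calc (uk k p.1 - uk k p.2) ^ 2 = |uk k p.1 - uk k p.2| ^ 2 := (sq_abs _).symm
      _ ≤ |u p.1 - u p.2| ^ 2 := pow_le_pow_left₀ (abs_nonneg _) h1 2
      _ = (u p.1 - u p.2) ^ 2 := sq_abs _
  have hub : ∀ k x, |uk k x| ≤ (k:ℝ) := by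
    intro k x
    rw [abs_le]
    constructor
    · simp only [huk]
      exact le_max_left _ _
    · simp only [huk]
      exact max_le (by linarith [Nat.cast_nonneg (α := ℝ) k]) (min_le_right _ _)
  have hukeq : ∀ x : V, ∀ᶠ k : ℕ in atTop, uk k x = u x := by
    intro x
    obtain ⟨N, hN⟩ := exists_nat_ge |u x|
    refine eventually_atTop.2 ⟨N, fun k hk => ?_⟩
    have hk1 : |u x| ≤ (k:ℝ) := le_trans hN (by exact_mod_cast hk)
    simp only [huk]
    rw [min_eq_left (le_of_abs_le hk1), max_eq_right (neg_le_of_abs_le hk1)]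
  have htruncL2 : Tendsto (fun k => ∑' x, (u x - uk k x) ^ 2 * m x) atTop (nhds 0) := by
    have hmain := tendsto_tsum_of_dominated_convergence (𝓕 := atTop)
      (f := fun k x => (u x - uk k x) ^ 2 * m x) (g := fun _ => (0:ℝ))
      (bound := fun x => u x ^ 2 * m x) huL2 (fun x => ?_)
      (Filter.Eventually.of_forall fun k x => ?_)
    · simpa using hmain
    · refine Tendsto.congr' ?_ tendsto_const_nhds
      filter_upwards [hukeq x] with k hk
      rw [hk]
      simp
    · have h1 := hphiabs k x
      have h2 : (u x - uk k x) ^ 2 ≤ u x ^ 2 := by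
        calc (u x - uk k x) ^ 2 = |u x - uk k x| ^ 2 := (sq_abs _).symm
          _ ≤ |u x| ^ 2 := pow_le_pow_left₀ (abs_nonneg _) h1 2
          _ = u x ^ 2 := sq_abs _
      have h3 : 0 ≤ (u x - uk k x) ^ 2 * m x := mul_nonneg (sq_nonneg _) (hm x).le
      rw [Real.norm_eq_abs, abs_of_nonneg h3]
      exact mul_le_mul_of_nonneg_right h2 (hm x).le
  have hptle : ∀ (k : ℕ) (p : V × V),
      G.b p.1 p.2 * ((u p.1 - uk k p.1) - (u p.2 - uk k p.2)) ^ 2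
        ≤ G.b p.1 p.2 * (u p.1 - u p.2) ^ 2 := by
    intro k p
    refine mul_le_mul_of_nonneg_left ?_ (G.b_nonneg _ _)
    have h1 : |(u p.1 - uk k p.1) - (u p.2 - uk k p.2)| ≤ |u p.1 - u p.2| := by
      have h := phi_lip (-(k:ℝ)) (k:ℝ) (u p.1) (u p.2)
      simpa [huk] using h
    calc ((u p.1 - uk k p.1) - (u p.2 - uk k p.2)) ^ 2
        = |(u p.1 - uk k p.1) - (u p.2 - uk k p.2)| ^ 2 := (sq_abs _).symm
      _ ≤ |u p.1 - u p.2| ^ 2 := pow_le_pow_left₀ (abs_nonneg _) h1 2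
      _ = (u p.1 - u p.2) ^ 2 := sq_abs _
  have hsumk : ∀ k, Summable (fun p : V × V =>
      G.b p.1 p.2 * ((u p.1 - uk k p.1) - (u p.2 - uk k p.2)) ^ 2) := fun k =>
    Summable.of_nonneg_of_le
      (fun p => mul_nonneg (G.b_nonneg _ _) (sq_nonneg _)) (hptle k) hsumu
  have htruncE : Tendsto (fun k => (E G (fun x => u x - uk k x)).toReal) atTop (nhds 0) := by
    have hreal : Tendsto (fun k => ∑' p : V × V,
        G.b p.1 p.2 * ((u p.1 - uk k p.1) - (u p.2 - uk k p.2)) ^ 2) atTop (nhds 0) := by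
      have hmain := tendsto_tsum_of_dominated_convergence (𝓕 := atTop)
        (f := fun k (p : V × V) =>
          G.b p.1 p.2 * ((u p.1 - uk k p.1) - (u p.2 - uk k p.2)) ^ 2)
        (g := fun _ => (0:ℝ)) (bound := fun p => G.b p.1 p.2 * (u p.1 - u p.2) ^ 2)
        hsumu (fun p => ?_) (Filter.Eventually.of_forall fun k p => ?_)
      · simpa using hmain
      · refine Tendsto.congr' ?_ tendsto_const_nhds
        filter_upwards [hukeq p.1, hukeq p.2] with k hk1 hk2
        rw [hk1, hk2]
        simp
      · have h3 : 0 ≤ G.b p.1 p.2 * ((u p.1 - uk k p.1) - (u p.2 - uk k p.2)) ^ 2 :=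
          mul_nonneg (G.b_nonneg _ _) (sq_nonneg _)
        rw [Real.norm_eq_abs, abs_of_nonneg h3]
        exact hptle k p
    refine hreal.congr fun k => ?_
    have h4 := E_toReal (u := fun x => u x - uk k x) (hsumk k)
    exact h4.symm
  -- approximation for each ε
  have happrox : ∀ ε : ℝ, 0 < ε → ∃ gg : V → ℝ, (Function.support gg).Finite ∧
      (E G (fun x => u x - gg x)).toReal + ∑' x, (u x - gg x) ^ 2 * m x < ε := by
    intro ε hε
    have hDk : Tendsto (fun k => (E G (fun x => u x - uk k x)).toReal
        + ∑' x, (u x - uk k x) ^ 2 * m x) atTop (nhds 0) := by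
      have := htruncE.add htruncL2
      simpa using this
    obtain ⟨k, hk⟩ := (hDk.eventually_lt_const (by positivity : (0:ℝ) < ε/8)).exists
    have hap := approx_bounded (G := G) hm hfin (hub k) (hukE k) hefin he0 he1 hEeto hL2eto
    obtain ⟨n, hn⟩ := (hap.eventually_lt_const (by positivity : (0:ℝ) < ε/8)).exists
    refine ⟨fun x => uk k x * e n x, ?_, ?_⟩
    · refine (hefin n).subset fun x hx => ?_
      simp only [Function.mem_support] at hx ⊢
      intro h0
      apply hx
      rw [h0, mul_zero]
    · -- triangle inequality
      have haL2 : MemL2 m fun x => u x - uk k x := MemL2.sub2 hm huL2 (hukL2 k)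
      have hbbL2 : MemL2 m fun x => uk k x - uk k x * e n x := by
        refine MemL2.sub2 hm (hukL2 k) (memL2_of_finsupp hm ?_)
        refine (hefin n).subset fun x hx => ?_
        simp only [Function.mem_support] at hx ⊢
        intro h0
        apply hx
        rw [h0, mul_zero]
      have hEa : E G (fun x => u x - uk k x) < ⊤ := by
        refine lt_of_le_of_lt (E_sub_le u (uk k)) ?_
        exact ENNReal.add_lt_top.2 ⟨ENNReal.mul_lt_top (by norm_num) huE,
          ENNReal.mul_lt_top (by norm_num) (hukE k)⟩
      have hEbb : E G (fun x => uk k x - uk k x * e n x) < ⊤ := by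
        refine lt_of_le_of_lt (E_sub_le (uk k) (fun x => uk k x * e n x)) ?_
        refine ENNReal.add_lt_top.2 ⟨ENNReal.mul_lt_top (by norm_num) (hukE k),
          ENNReal.mul_lt_top (by norm_num) (E_finsupp ?_)⟩
        refine (hefin n).subset fun x hx => ?_
        simp only [Function.mem_support] at hx ⊢
        intro h0
        apply hx
        rw [h0, mul_zero]
      have hEtri : (E G (fun x => u x - uk k x * e n x)).toReal
          ≤ 2 * ((E G (fun x => u x - uk k x)).toReal
            + (E G (fun x => uk k x - uk k x * e n x)).toReal) := by
        have h1 : (fun x => u x - uk k x * e n x)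
            = fun x => (u x - uk k x) + (uk k x - uk k x * e n x) := by
          funext x
          ring
        rw [h1]
        have h2 := E_add_le (G := G) (fun x => u x - uk k x)
          (fun x => uk k x - uk k x * e n x)
        have h3 : 2 * E G (fun x => u x - uk k x)
            + 2 * E G (fun x => uk k x - uk k x * e n x) ≠ ⊤ := by
          refine (ENNReal.add_lt_top.2 ⟨ENNReal.mul_lt_top (by norm_num) hEa,
            ENNReal.mul_lt_top (by norm_num) hEbb⟩).ne
        have h4 := ENNReal.toReal_mono h3 h2
        rw [ENNReal.toReal_add (ENNReal.mul_lt_top (by norm_num) hEa).ne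
          (ENNReal.mul_lt_top (by norm_num) hEbb).ne, ENNReal.toReal_mul,
          ENNReal.toReal_mul] at h4
        simp only [ENNReal.toReal_ofNat] at h4
        linarith
      have hL2tri : ∑' x, (u x - uk k x * e n x) ^ 2 * m x
          ≤ 2 * ((∑' x, (u x - uk k x) ^ 2 * m x)
            + ∑' x, (uk k x - uk k x * e n x) ^ 2 * m x) := by
        have hpt2 : ∀ x, (u x - uk k x * e n x) ^ 2 * m x
            ≤ 2 * ((u x - uk k x) ^ 2 * m x) + 2 * ((uk k x - uk k x * e n x) ^ 2 * m x) := by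
          intro x
          have hmx := (hm x).le
          nlinarith [sq_nonneg ((u x - uk k x) - (uk k x - uk k x * e n x)),
            sq_nonneg ((u x - uk k x) + (uk k x - uk k x * e n x))]
        have hsum2 : Summable fun x => 2 * ((u x - uk k x) ^ 2 * m x)
            + 2 * ((uk k x - uk k x * e n x) ^ 2 * m x) :=
          (haL2.mul_left 2).add (hbbL2.mul_left 2)
        calc ∑' x, (u x - uk k x * e n x) ^ 2 * m x
            ≤ ∑' x, (2 * ((u x - uk k x) ^ 2 * m x)
                + 2 * ((uk k x - uk k x * e n x) ^ 2 * m x)) :=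
              Summable.tsum_le_tsum hpt2 (Summable.of_nonneg_of_le
                (fun x => mul_nonneg (sq_nonneg _) (hm x).le) hpt2 hsum2) hsum2
          _ = 2 * (∑' x, (u x - uk k x) ^ 2 * m x)
                + 2 * (∑' x, (uk k x - uk k x * e n x) ^ 2 * m x) := by
              rw [Summable.tsum_add (haL2.mul_left 2) (hbbL2.mul_left 2), tsum_mul_left,
                tsum_mul_left]
          _ ≤ 2 * ((∑' x, (u x - uk k x) ^ 2 * m x)
                + ∑' x, (uk k x - uk k x * e n x) ^ 2 * m x) := le_of_eq (by ring)
      calc (E G (fun x => u x - uk k x * e n x)).toReal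
            + ∑' x, (u x - uk k x * e n x) ^ 2 * m x
          ≤ 2 * ((E G (fun x => u x - uk k x)).toReal
              + (E G (fun x => uk k x - uk k x * e n x)).toReal)
            + 2 * ((∑' x, (u x - uk k x) ^ 2 * m x)
              + ∑' x, (uk k x - uk k x * e n x) ^ 2 * m x) := add_le_add hEtri hL2tri
        _ = 2 * (((E G (fun x => u x - uk k x)).toReal
              + ∑' x, (u x - uk k x) ^ 2 * m x)
            + ((E G (fun x => uk k x - uk k x * e n x)).toReal
              + ∑' x, (uk k x - uk k x * e n x) ^ 2 * m x)) := by ring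
        _ < 2 * (ε/8 + ε/8) := by
            refine mul_lt_mul_of_pos_left (add_lt_add hk hn) (by norm_num)
        _ < ε := by linarith
  -- final approximating sequence
  have hchoice : ∀ n : ℕ, ∃ gg : V → ℝ, (Function.support gg).Finite ∧
      (E G (fun x => u x - gg x)).toReal + ∑' x, (u x - gg x) ^ 2 * m x
        < 1 / ((n:ℝ) + 1) :=
    fun n => happrox (1 / ((n:ℝ) + 1)) (by positivity)
  choose g hg1 hg2 using hchoice
  refine ⟨g, hg1, ?_⟩
  refine squeeze_zero (fun n => ?_) (fun n => ?_) tendsto_one_div_add_atTop_nhds_zero_nat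
  · exact add_nonneg ENNReal.toReal_nonneg
      (tsum_nonneg fun x => mul_nonneg (sq_nonneg _) (hm x).le)
  · have hEle : (G.energy (fun x => u x - g n x)).toReal
        ≤ (E G (fun x => u x - g n x)).toReal := by
      rw [energy_eq hc]
      rcases eq_or_ne (E G (fun x => u x - g n x)) ⊤ with htop | hne
      · rw [htop]
        simp
      · rw [ENNReal.toReal_mul]
        have h3 : ((2:ℝ≥0∞)⁻¹).toReal = 2⁻¹ := by simp
        rw [h3]
        have h5 : (0:ℝ) ≤ (E G (fun x => u x - g n x)).toReal := ENNReal.toReal_nonneg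
        linarith
    linarith [hg2 n]

end MainApprox

end FMAux

end FMAux

/-- for `(b,0)` connected with finite measure `m(V) < ∞`, recurrence,
stochastic completeness and `Q^(D) = Q^(N)` are all equivalent. -/
theorem finite_measure_equivalences {V : Type*} [Countable V] (G : WeightedGraph V)
    (m : V → ℝ) (hm : ∀ x, 0 < m x) (hfin : Summable fun x => m x)
    (hconn : G.Connected) (hc : ∀ x, G.c x = 0)
    (S : FormSetup G m) (hdom : S.dom = G.regDom m)
    (hpi : ∀ t : ℝ, 0 < t → ∀ f : V → ℝ, MemL2 m f → (∀ x, 0 ≤ f x) → f ≠ 0 →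
      ∀ y, 0 < S.T t f y) :
    ((∀ x y, S.green x y = ⊤) ↔ S.StochComplete) ∧
    ((∀ x y, S.green x y = ⊤) ↔ G.regDom m = {u | G.FiniteEnergy u ∧ MemL2 m u}) := by
  have hB'SC : (∀ y, S.R 1 (fun _ => (1:ℝ)) y = 1) → S.StochComplete :=
    FMAux.B'_to_SC S hm hfin
  have hSCB' : S.StochComplete → ∀ y, S.R 1 (fun _ => (1:ℝ)) y = 1 :=
    FMAux.SC_to_B' S hfin
  have hAB' : (∀ x y, S.green x y = ⊤) → ∀ y, S.R 1 (fun _ => (1:ℝ)) y = 1 :=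
    FMAux.A_to_B' S hm hfin
  have hB'A : (∀ y, S.R 1 (fun _ => (1:ℝ)) y = 1) → ∀ x y, S.green x y = ⊤ :=
    FMAux.B'_to_A S hm hfin hpi
  have hB'C := FMAux.B'_to_C S hm hfin hc hdom
  have hCB' := FMAux.C_to_B' S hm hfin hc hdom
  constructor
  · exact ⟨fun hA => hB'SC (hAB' hA), fun hSC => hB'A (hSCB' hSC)⟩
  · exact ⟨fun hA => hB'C (hAB' hA), fun hC => hB'A (hCB' hC)⟩
end
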